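/- arXiv:0912.2219 — 5 statements merged into one kernel-verified Lean document; each statement's English description precedes it below -/
import Mathlib

section
/- The face ring Z[S] of a simplicial poset S is a free abelian group with basis the monomials v_{τ₁}^{a₁} v_{τ₂}^{a₂} ⋯ v_{τ_k}^{a_k} where τ₁ < τ₂ < ⋯ < τ_k is a chain of elements of S \ {0̂} and each aᵢ ≥ 1. -/
set_option linter.unusedSectionVars false


open MvPolynomial

/-- A finite poset with a bottom element is a *simplicial poset* if every lower
interval `[⊥, σ]` is a Boolean lattice, i.e. order-isomorphic to the poset of
subsets of a finite set. -/
def IsSimplicialPoset (α : Type) [Fintype α] [PartialOrder α] [OrderBot α] : Prop :=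
  ∀ σ : α, ∃ k : ℕ, Nonempty (Set.Icc (⊥ : α) σ ≃o Finset (Fin k))

/-- The vertex set `V(σ)`: rank-one elements (atoms) below `σ`. -/
def vertexSet {α : Type} [PartialOrder α] [OrderBot α] (σ : α) : Set α :=
  {i : α | IsAtom i ∧ i ≤ σ}

/-- The rank `|σ|`, defined as the number of vertices of `σ`. -/
noncomputable def srank {α : Type} [PartialOrder α] [OrderBot α] (σ : α) : ℕ :=
  (vertexSet σ).ncard

/-- `σ ∨ τ`: the set of least (minimal) common upper bounds. -/
def joins {α : Type} [PartialOrder α] (σ τ : α) : Set α :=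
  {η : α | Minimal (fun x => σ ≤ x ∧ τ ≤ x) η}

/-- `σ ∧ τ`: the set of greatest (maximal) common lower bounds. -/
def meets {α : Type} [PartialOrder α] (σ τ : α) : Set α :=
  {ρ : α | Maximal (fun x => x ≤ σ ∧ x ≤ τ) ρ}

/-- The straightening ideal defining the face ring of a simplicial poset:
generated by `v_⊥ - 1`, the products `v_σ v_τ` with `σ ∨ τ = ∅`, and the
elements `v_σ v_τ - v_{σ∧τ} ∑_{η ∈ σ∨τ} v_η`. -/
noncomputable def straightening (R : Type) [CommRing R]
    (α : Type) [Fintype α] [PartialOrder α] [OrderBot α] : Ideal (MvPolynomial α R) :=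
  Ideal.span (({X ⊥ - 1} : Set (MvPolynomial α R)) ∪
    {p | ∃ σ τ : α, joins σ τ = ∅ ∧ p = X σ * X τ} ∪
    {p | ∃ σ τ ρ : α, ρ ∈ meets σ τ ∧ (joins σ τ).Nonempty ∧
      p = X σ * X τ - X ρ * ∑ η ∈ (Set.toFinite (joins σ τ)).toFinset, X η})

/-- The face ring `R[S]` of a simplicial poset. -/
noncomputable abbrev faceRing (R : Type) [CommRing R]
    (α : Type) [Fintype α] [PartialOrder α] [OrderBot α] :=
  MvPolynomial α R ⧸ straightening R α

namespace FRP

variable {α : Type} [Fintype α] [PartialOrder α] [OrderBot α]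

noncomputable local instance : DecidableEq α := Classical.decEq α
noncomputable local instance (priority := low) (p : Prop) : Decidable p := Classical.propDecidable p

noncomputable def vFin (σ : α) : Finset α := (Set.toFinite (vertexSet σ)).toFinset

lemma mem_vFin {σ i : α} : i ∈ vFin σ ↔ IsAtom i ∧ i ≤ σ := by
  simp [vFin, vertexSet]

lemma srank_eq (σ : α) : srank σ = (vFin σ).card := by
  rw [srank, Set.ncard_eq_toFinset_card (vertexSet σ) (Set.toFinite _)]; rfl

lemma vFin_bot : vFin (⊥ : α) = ∅ := by
  ext i; simp only [mem_vFin, Finset.notMem_empty, iff_false]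
  rintro ⟨ha, hle⟩
  exact ha.1 (le_antisymm hle bot_le)

lemma vFin_mono {σ τ : α} (h : σ ≤ τ) : vFin σ ⊆ vFin τ := by
  intro i hi; rw [mem_vFin] at *; exact ⟨hi.1, hi.2.trans h⟩

section Interval

variable {γ : α} {k : ℕ}

lemma icc_mem {x : α} (hx : x ≤ γ) : x ∈ Set.Icc (⊥:α) γ := ⟨bot_le, hx⟩

variable (e : Set.Icc (⊥ : α) γ ≃o Finset (Fin k))

include e

lemma e_bot : e ⟨⊥, icc_mem bot_le⟩ = ∅ := by
  have h : (⟨⊥, icc_mem bot_le⟩ : Set.Icc (⊥:α) γ) ≤ e.symm ∅ := bot_le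
  have h2 := e.monotone h
  rw [e.apply_symm_apply] at h2
  exact Finset.subset_empty.mp h2

/-- the atom of the interval corresponding to `i : Fin k` -/
noncomputable def atomOf (i : Fin k) : α := (e.symm {i} : Set.Icc (⊥:α) γ)

lemma atomOf_le_iff {i : Fin k} {x : α} (hx : x ≤ γ) :
    atomOf e i ≤ x ↔ i ∈ e ⟨x, icc_mem hx⟩ := by
  rw [← Finset.singleton_subset_iff, ← Finset.le_iff_subset]
  constructor
  · intro h
    have : e.symm {i} ≤ (⟨x, icc_mem hx⟩ : Set.Icc (⊥:α) γ) := h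
    simpa using e.monotone this
  · intro h
    have := e.symm.monotone h
    rw [e.symm_apply_apply] at this
    exact this

lemma isAtom_atomOf (i : Fin k) : IsAtom (atomOf e i) := by
  constructor
  · intro hbot
    have : e.symm {i} = (⟨⊥, icc_mem bot_le⟩ : Set.Icc (⊥:α) γ) := Subtype.ext hbot
    have h2 : ({i} : Finset (Fin k)) = ∅ := by
      have := congrArg e this
      rwa [e.apply_symm_apply, e_bot] at this
    simp at h2
  · intro b hb
    have hble : b ≤ γ := le_of_lt (hb.trans_le ((e.symm {i}).2.2))
    have hsub : e ⟨b, icc_mem hble⟩ ⊆ ({i} : Finset (Fin k)) := by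
      have : (⟨b, icc_mem hble⟩ : Set.Icc (⊥:α) γ) ≤ e.symm {i} := le_of_lt hb
      simpa using e.monotone this
    rcases Finset.subset_singleton_iff.mp hsub with h | h
    · have := congrArg e.symm h
      rw [e.symm_apply_apply, ← e_bot e, e.symm_apply_apply] at this
      exact congrArg Subtype.val this
    · exfalso
      have := congrArg e.symm h
      rw [e.symm_apply_apply] at this
      have : b = atomOf e i := congrArg Subtype.val this
      exact absurd (this ▸ hb) (lt_irrefl _)

lemma vFin_of_le {x : α} (hx : x ≤ γ) :
    vFin x = (e ⟨x, icc_mem hx⟩).image (fun i => atomOf e i) := by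
  ext j
  simp only [Finset.mem_image, mem_vFin]
  constructor
  · rintro ⟨hatom, hle⟩
    -- j is an atom ≤ x ≤ γ; find i
    have hjγ : j ≤ γ := hle.trans hx
    have hne : e ⟨j, icc_mem hjγ⟩ ≠ ∅ := by
      intro h
      have := congrArg e.symm h
      rw [e.symm_apply_apply, ← e_bot e, e.symm_apply_apply] at this
      exact hatom.1 (congrArg Subtype.val this)
    obtain ⟨i, hi⟩ := Finset.nonempty_iff_ne_empty.mpr hne
    have hai : atomOf e i ≤ j := by
      rw [atomOf_le_iff e hjγ]; exact hi
    have : atomOf e i = j := by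
      rcases lt_or_eq_of_le hai with h | h
      · exact absurd (hatom.2 _ h) (isAtom_atomOf e i).1
      · exact h
    refine ⟨i, ?_, this⟩
    rw [← atomOf_le_iff e hx]; exact this ▸ hle
  · rintro ⟨i, hi, rfl⟩
    exact ⟨isAtom_atomOf e i, (atomOf_le_iff e hx).mpr hi⟩

lemma atomOf_injective : Function.Injective (atomOf e) := by
  intro i j h
  have : e.symm {i} = e.symm {j} := Subtype.ext h
  have := congrArg e this
  rw [e.apply_symm_apply, e.apply_symm_apply] at this
  exact Finset.singleton_injective this

lemma vFin_subset_iff_of_e {x y : α} (hx : x ≤ γ) (hy : y ≤ γ) :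
    vFin x ⊆ vFin y ↔ x ≤ y := by
  constructor
  · intro h
    have hsub : e ⟨x, icc_mem hx⟩ ⊆ e ⟨y, icc_mem hy⟩ := by
      intro i hi
      have : atomOf e i ≤ x := (atomOf_le_iff e hx).mpr hi
      have hm : atomOf e i ∈ vFin x := mem_vFin.mpr ⟨isAtom_atomOf e i, this⟩
      have := (mem_vFin.mp (h hm)).2
      rwa [atomOf_le_iff e hy] at this
    have : (⟨x, icc_mem hx⟩ : Set.Icc (⊥:α) γ) ≤ ⟨y, icc_mem hy⟩ := e.le_iff_le.mp hsub
    exact this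
  · exact vFin_mono

-- continuing inside section Interval (with e included)

lemma exists_glb_of_e {σ τ : α} (hσ : σ ≤ γ) (hτ : τ ≤ γ) :
    ∃ m : α, m ≤ σ ∧ m ≤ τ ∧ (∀ x, x ≤ σ → x ≤ τ → x ≤ m) ∧
      vFin m = vFin σ ∩ vFin τ := by
  set m : Set.Icc (⊥:α) γ := e.symm (e ⟨σ, icc_mem hσ⟩ ∩ e ⟨τ, icc_mem hτ⟩) with hm
  have hmem : ∀ x : α, ∀ hx : x ≤ γ, ((⟨x, icc_mem hx⟩ : Set.Icc (⊥:α) γ) ≤ m ↔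
      e ⟨x, icc_mem hx⟩ ⊆ e ⟨σ, icc_mem hσ⟩ ∩ e ⟨τ, icc_mem hτ⟩) := by
    intro x hx
    rw [← e.le_iff_le, hm, e.apply_symm_apply]
  have hmγ : (m : α) ≤ γ := m.2.2
  have hmσ : (m : α) ≤ σ := by
    have : m ≤ ⟨σ, icc_mem hσ⟩ := by
      rw [← e.le_iff_le, hm, e.apply_symm_apply]
      exact Finset.inter_subset_left
    exact this
  have hmτ : (m : α) ≤ τ := by
    have : m ≤ ⟨τ, icc_mem hτ⟩ := by
      rw [← e.le_iff_le, hm, e.apply_symm_apply]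
      exact Finset.inter_subset_right
    exact this
  refine ⟨m, hmσ, hmτ, ?_, ?_⟩
  · intro x hxσ hxτ
    have hx : x ≤ γ := hxσ.trans hσ
    have h1 : e ⟨x, icc_mem hx⟩ ⊆ e ⟨σ, icc_mem hσ⟩ :=
      e.monotone (show (⟨x, icc_mem hx⟩ : Set.Icc (⊥:α) γ) ≤ ⟨σ, icc_mem hσ⟩ from hxσ)
    have h2 : e ⟨x, icc_mem hx⟩ ⊆ e ⟨τ, icc_mem hτ⟩ :=
      e.monotone (show (⟨x, icc_mem hx⟩ : Set.Icc (⊥:α) γ) ≤ ⟨τ, icc_mem hτ⟩ from hxτ)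
    exact (hmem x hx).mpr (Finset.subset_inter h1 h2)
  · have hme : e ⟨(m:α), icc_mem hmγ⟩ = e ⟨σ, icc_mem hσ⟩ ∩ e ⟨τ, icc_mem hτ⟩ := by
      rw [show (⟨(m:α), icc_mem hmγ⟩ : Set.Icc (⊥:α) γ) = m from Subtype.ext rfl, hm,
        e.apply_symm_apply]
    rw [vFin_of_le e hmγ, vFin_of_le e hσ, vFin_of_le e hτ, hme,
      Finset.image_inter _ _ (atomOf_injective e)]

lemma exists_join_of_e {σ τ : α} (hσ : σ ≤ γ) (hτ : τ ≤ γ) :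
    ∃ j : α, j ∈ joins σ τ ∧ j ≤ γ ∧ vFin j = vFin σ ∪ vFin τ ∧
      (∀ η ∈ joins σ τ, η ≤ γ → η = j) := by
  set j : Set.Icc (⊥:α) γ := e.symm (e ⟨σ, icc_mem hσ⟩ ∪ e ⟨τ, icc_mem hτ⟩) with hj
  have hjγ : (j : α) ≤ γ := j.2.2
  have hje : e ⟨(j:α), icc_mem hjγ⟩ = e ⟨σ, icc_mem hσ⟩ ∪ e ⟨τ, icc_mem hτ⟩ := by
    rw [show (⟨(j:α), icc_mem hjγ⟩ : Set.Icc (⊥:α) γ) = j from Subtype.ext rfl, hj,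
      e.apply_symm_apply]
  have hσj : σ ≤ (j : α) := by
    have : (⟨σ, icc_mem hσ⟩ : Set.Icc (⊥:α) γ) ≤ ⟨(j:α), icc_mem hjγ⟩ := by
      rw [← e.le_iff_le, hje]
      exact Finset.subset_union_left
    exact this
  have hτj : τ ≤ (j : α) := by
    have : (⟨τ, icc_mem hτ⟩ : Set.Icc (⊥:α) γ) ≤ ⟨(j:α), icc_mem hjγ⟩ := by
      rw [← e.le_iff_le, hje]
      exact Finset.subset_union_right
    exact this
  have hmin : ∀ x, σ ≤ x → τ ≤ x → x ≤ (j:α) → x = (j:α) := by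
    intro x hxσ hxτ hxj
    have hx : x ≤ γ := hxj.trans hjγ
    have h1 : e ⟨σ, icc_mem hσ⟩ ⊆ e ⟨x, icc_mem hx⟩ :=
      e.monotone (show (⟨σ, icc_mem hσ⟩ : Set.Icc (⊥:α) γ) ≤ ⟨x, icc_mem hx⟩ from hxσ)
    have h2 : e ⟨τ, icc_mem hτ⟩ ⊆ e ⟨x, icc_mem hx⟩ :=
      e.monotone (show (⟨τ, icc_mem hτ⟩ : Set.Icc (⊥:α) γ) ≤ ⟨x, icc_mem hx⟩ from hxτ)
    have h3 : e ⟨(j:α), icc_mem hjγ⟩ ⊆ e ⟨x, icc_mem hx⟩ := by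
      rw [hje]; exact Finset.union_subset h1 h2
    have h4 : e ⟨x, icc_mem hx⟩ ⊆ e ⟨(j:α), icc_mem hjγ⟩ :=
      e.monotone (show (⟨x, icc_mem hx⟩ : Set.Icc (⊥:α) γ) ≤ ⟨(j:α), icc_mem hjγ⟩ from hxj)
    have : e ⟨x, icc_mem hx⟩ = e ⟨(j:α), icc_mem hjγ⟩ := le_antisymm h4 h3
    exact congrArg Subtype.val (e.injective this)
  have hjmem : (j:α) ∈ joins σ τ := by
    constructor
    · exact ⟨hσj, hτj⟩
    · rintro x ⟨hxσ, hxτ⟩ hxj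
      exact le_of_eq (hmin x hxσ hxτ hxj).symm
  refine ⟨j, hjmem, hjγ, ?_, ?_⟩
  · rw [vFin_of_le e hjγ, vFin_of_le e hσ, vFin_of_le e hτ, hje, Finset.image_union]
  · rintro η ⟨⟨hησ, hητ⟩, hηmin⟩ hηγ
    -- j is an upper bound; η minimal; show η = j
    -- need j ≤ η? No: minimality of η says anything ≤ η satisfying prop is ≥ η.
    -- Instead: consider the element corresponding to union inside [⊥,γ]... use:
    -- e η' ⊇ eσ ∪ eτ hence j ≤ η, then minimality gives η ≤ j, so equal.
    have h1 : e ⟨σ, icc_mem hσ⟩ ⊆ e ⟨η, icc_mem hηγ⟩ :=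
      e.monotone (show (⟨σ, icc_mem hσ⟩ : Set.Icc (⊥:α) γ) ≤ ⟨η, icc_mem hηγ⟩ from hησ)
    have h2 : e ⟨τ, icc_mem hτ⟩ ⊆ e ⟨η, icc_mem hηγ⟩ :=
      e.monotone (show (⟨τ, icc_mem hτ⟩ : Set.Icc (⊥:α) γ) ≤ ⟨η, icc_mem hηγ⟩ from hητ)
    have h3 : e ⟨(j:α), icc_mem hjγ⟩ ⊆ e ⟨η, icc_mem hηγ⟩ := by
      rw [hje]; exact Finset.union_subset h1 h2
    have hjη : (j:α) ≤ η := e.le_iff_le.mp h3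
    exact le_antisymm (hηmin ⟨hσj, hτj⟩ hjη) hjη

end Interval


lemma joins_nonempty_of_ub {σ τ x : α} (hσ : σ ≤ x) (hτ : τ ≤ x) :
    (joins σ τ).Nonempty := by
  obtain ⟨b, _, hmin⟩ := Finite.exists_le_minimal (p := fun y => σ ≤ y ∧ τ ≤ y) ⟨hσ, hτ⟩
  exact ⟨b, hmin⟩

lemma srank_le_card (σ : α) : srank σ ≤ Fintype.card α := by
  rw [srank_eq]; exact Finset.card_le_univ _

section Global
variable (hS : IsSimplicialPoset α)
include hS

lemma vFin_subset_iff {γ x y : α} (hx : x ≤ γ) (hy : y ≤ γ) :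
    vFin x ⊆ vFin y ↔ x ≤ y := by
  obtain ⟨k, ⟨e⟩⟩ := hS γ
  exact vFin_subset_iff_of_e e hx hy

lemma vFin_inj {γ x y : α} (hx : x ≤ γ) (hy : y ≤ γ) (h : vFin x = vFin y) : x = y :=
  le_antisymm ((vFin_subset_iff hS hx hy).1 h.le) ((vFin_subset_iff hS hy hx).1 h.ge)

lemma vFin_nonempty {σ : α} (h : σ ≠ ⊥) : (vFin σ).Nonempty := by
  rw [Finset.nonempty_iff_ne_empty]
  intro he
  exact h (vFin_inj hS le_rfl (bot_le : (⊥:α) ≤ σ) (by rw [he, vFin_bot]))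

lemma vFin_join {σ τ η : α} (hη : η ∈ joins σ τ) : vFin η = vFin σ ∪ vFin τ := by
  obtain ⟨⟨hσ, hτ⟩, hmin⟩ := hη
  obtain ⟨k, ⟨e⟩⟩ := hS η
  obtain ⟨j, hj, hjγ, hjv, huniq⟩ := exists_join_of_e e hσ hτ
  have hej : η = j := huniq η ⟨⟨hσ, hτ⟩, hmin⟩ le_rfl
  rw [hej, hjv]

lemma meets_eq {σ τ : α} (h : (joins σ τ).Nonempty) :
    ∃ m : α, meets σ τ = {m} ∧ vFin m = vFin σ ∩ vFin τ := by
  obtain ⟨η, hη⟩ := h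
  obtain ⟨⟨hσ, hτ⟩, _⟩ := hη
  obtain ⟨k, ⟨e⟩⟩ := hS η
  obtain ⟨m, hmσ, hmτ, hglb, hmv⟩ := exists_glb_of_e e hσ hτ
  refine ⟨m, ?_, hmv⟩
  ext ρ
  simp only [meets, Set.mem_setOf_eq, Set.mem_singleton_iff]
  constructor
  · rintro ⟨⟨hρσ, hρτ⟩, hmax⟩
    exact le_antisymm (hglb ρ hρσ hρτ) (hmax ⟨hmσ, hmτ⟩ (hglb ρ hρσ hρτ))
  · rintro rfl
    exact ⟨⟨hmσ, hmτ⟩, fun y hy _ => hglb y hy.1 hy.2⟩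

lemma joins_le_unique {γ σ τ : α} (hσ : σ ≤ γ) (hτ : τ ≤ γ) :
    ∃ j, (j ∈ joins σ τ ∧ j ≤ γ) ∧ ∀ η ∈ joins σ τ, η ≤ γ → η = j := by
  obtain ⟨k, ⟨e⟩⟩ := hS γ
  obtain ⟨j, hj, hjγ, _, huniq⟩ := exists_join_of_e e hσ hτ
  exact ⟨j, ⟨hj, hjγ⟩, huniq⟩

lemma srank_meet_join {σ τ η m : α} (hη : η ∈ joins σ τ) (hm : m ∈ meets σ τ) :
    srank m + srank η = srank σ + srank τ := by
  obtain ⟨m', hm', hmv⟩ := meets_eq hS ⟨η, hη⟩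
  rw [hm'] at hm
  subst hm
  have hjv := vFin_join hS hη
  rw [srank_eq, srank_eq, srank_eq, srank_eq, hjv, hmv]
  exact Finset.card_inter_add_card_union _ _

lemma srank_lt_of_join {σ τ η : α} (hστ : ¬ τ ≤ σ) (hη : η ∈ joins σ τ) :
    srank σ < srank η := by
  obtain ⟨⟨hσ, hτ⟩, _⟩ := hη
  have hne : σ ≠ η := by rintro rfl; exact hστ hτ
  have hsub : vFin σ ⊂ vFin η := by
    refine ⟨vFin_mono hσ, fun h => hne (vFin_inj hS hσ le_rfl (le_antisymm (vFin_mono hσ) h))⟩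
  rw [srank_eq, srank_eq]
  exact Finset.card_lt_card hsub

end Global


/-! ### Monomial machinery -/

noncomputable def ind (σ : α) : α →₀ ℕ := ∑ v ∈ vFin σ, Finsupp.single v 1

lemma ind_apply (σ v : α) : ind σ v = if v ∈ vFin σ then 1 else 0 := by
  rw [ind, Finsupp.finset_sum_apply]
  simp [Finsupp.single_apply]

lemma ind_bot : ind (⊥ : α) = 0 := by
  rw [ind, vFin_bot, Finset.sum_empty]

lemma prod_monomial_one {β : Type} (s : Finset β) (d : β → α →₀ ℕ) :
    (∏ i ∈ s, monomial (d i) (1:ℤ)) = monomial (∑ i ∈ s, d i) 1 := by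
  induction s using Finset.cons_induction with
  | empty => simp
  | cons a s ha ih => rw [Finset.prod_cons, Finset.sum_cons, ih, monomial_mul, one_mul]

noncomputable def Phi (γ : α) : MvPolynomial α ℤ →ₐ[ℤ] MvPolynomial α ℤ :=
  aeval (fun σ => if σ ≤ γ then monomial (ind σ) 1 else 0)

lemma Phi_X (γ σ : α) : Phi γ (X σ) = if σ ≤ γ then monomial (ind σ) 1 else 0 :=
  aeval_X _ _

noncomputable def E (f : α →₀ ℕ) : α →₀ ℕ := f.sum fun σ n => n • ind σ

lemma E_add (f g : α →₀ ℕ) : E (f + g) = E f + E g :=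
  Finsupp.sum_add_index' (fun σ => by simp) (fun σ m n => add_smul m n (ind σ))

lemma E_single (σ : α) (n : ℕ) : E (Finsupp.single σ n) = n • ind σ :=
  Finsupp.sum_single_index (by simp)

lemma E_apply (f : α →₀ ℕ) (v : α) :
    E f v = ∑ σ ∈ f.support, f σ * (if v ∈ vFin σ then 1 else 0) := by
  rw [E, Finsupp.sum, Finsupp.finset_sum_apply]
  exact Finset.sum_congr rfl fun σ _ => by rw [Finsupp.smul_apply, ind_apply, smul_eq_mul]

lemma Phi_monomial (γ : α) (f : α →₀ ℕ) :
    Phi γ (monomial f 1) = if ∀ σ ∈ f.support, σ ≤ γ then monomial (E f) 1 else 0 := by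
  rw [monomial_eq, C_1, one_mul, Finsupp.prod, map_prod]
  by_cases h : ∀ σ ∈ f.support, σ ≤ γ
  · rw [if_pos h]
    have : ∀ σ ∈ f.support, (Phi γ) (X σ ^ f σ) = monomial (f σ • ind σ) 1 := by
      intro σ hσ
      rw [map_pow, Phi_X, if_pos (h σ hσ), monomial_pow, one_pow]
    rw [Finset.prod_congr rfl this, prod_monomial_one]
    rfl
  · push_neg at h
    obtain ⟨σ, hσ, hnle⟩ := h
    rw [if_neg (by push_neg; exact ⟨σ, hσ, hnle⟩)]
    apply Finset.prod_eq_zero hσ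
    rw [map_pow, Phi_X, if_neg hnle, zero_pow (Finsupp.mem_support_iff.mp hσ)]

lemma Phi_straightening (hS : IsSimplicialPoset α) (γ : α) :
    straightening ℤ α ≤ RingHom.ker (Phi γ).toRingHom := by
  rw [straightening, Ideal.span_le]
  rintro p hp
  simp only [Set.mem_union, Set.mem_setOf_eq, Set.mem_singleton_iff] at hp
  rw [SetLike.mem_coe, RingHom.mem_ker]
  show Phi γ p = 0
  have sumzero : ∀ σ τ : α, (¬ σ ≤ γ ∨ ¬ τ ≤ γ) →
      (Phi γ) (∑ η ∈ (Set.toFinite (joins σ τ)).toFinset, X η) = 0 := by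
    intro σ τ hor
    rw [map_sum]
    apply Finset.sum_eq_zero
    intro η hη
    rw [Set.Finite.mem_toFinset] at hη
    obtain ⟨⟨hση, hτη⟩, _⟩ := hη
    rw [Phi_X, if_neg]
    intro hηγ
    rcases hor with h | h
    · exact h (hση.trans hηγ)
    · exact h (hτη.trans hηγ)
  rcases hp with (rfl | ⟨σ, τ, hjoin, rfl⟩) | ⟨σ, τ, ρ, hρ, hne, rfl⟩
  · rw [map_sub, map_one, Phi_X, if_pos bot_le, ind_bot]
    simp
  · rw [map_mul, Phi_X, Phi_X]
    by_cases hσ : σ ≤ γ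
    · by_cases hτ : τ ≤ γ
      · exact absurd hjoin (Set.nonempty_iff_ne_empty.mp (joins_nonempty_of_ub hσ hτ))
      · rw [if_neg hτ, mul_zero]
    · rw [if_neg hσ, zero_mul]
  · rw [map_sub, map_mul, map_mul, Phi_X, Phi_X, Phi_X]
    by_cases hσ : σ ≤ γ
    · by_cases hτ : τ ≤ γ
      · obtain ⟨j, ⟨hjmem, hjγ⟩, huniq⟩ := joins_le_unique hS hσ hτ
        obtain ⟨m, hmeq, hmv⟩ := meets_eq hS hne
        have hρm : ρ = m := by
          have hρ' : ρ ∈ meets σ τ := hρ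
          rw [hmeq] at hρ'; exact hρ'
        have hρσ : ρ ≤ σ := hρ.1.1
        have hρle : ρ ≤ γ := hρσ.trans hσ
        have hjv : vFin j = vFin σ ∪ vFin τ := vFin_join hS hjmem
        rw [if_pos hσ, if_pos hτ, if_pos hρle, map_sum]
        have hsum : (∑ η ∈ (Set.toFinite (joins σ τ)).toFinset, (Phi γ) (X η)) =
            monomial (ind j) 1 := by
          rw [Finset.sum_eq_single_of_mem j (by rw [Set.Finite.mem_toFinset]; exact hjmem)]
          · rw [Phi_X, if_pos hjγ]
          · intro η hη hne'
            rw [Set.Finite.mem_toFinset] at hη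
            rw [Phi_X, if_neg]
            intro hηγ
            exact hne' (huniq η hη hηγ)
        rw [hsum, monomial_mul, monomial_mul, one_mul]
        have hind : ind σ + ind τ = ind ρ + ind j := by
          ext v
          rw [Finsupp.add_apply, Finsupp.add_apply, ind_apply, ind_apply, ind_apply,
            ind_apply, hρm, hmv, hjv]
          by_cases h1 : v ∈ vFin σ <;> by_cases h2 : v ∈ vFin τ <;>
            simp [Finset.mem_inter, Finset.mem_union, h1, h2]
        rw [hind, sub_self]
      · rw [if_neg hτ, mul_zero, sumzero σ τ (Or.inr hτ), mul_zero, sub_zero]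
    · rw [if_neg hσ, zero_mul, sumzero σ τ (Or.inl hσ), mul_zero, sub_zero]


/-! ### Injectivity of E on chain monomials -/

lemma chain_top {f : α →₀ ℕ} (hc : IsChain (· ≤ ·) (f.support : Set α)) (hne : f ≠ 0) :
    ∃ τ ∈ f.support, ∀ σ ∈ f.support, σ ≤ τ := by
  obtain ⟨σ₀, hσ₀⟩ := Finsupp.support_nonempty_iff.mpr hne
  obtain ⟨b, _, hb⟩ := Finite.exists_le_maximal (p := fun x => x ∈ f.support) hσ₀
  refine ⟨b, hb.1, fun σ hσ => ?_⟩
  by_cases h : σ = b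
  · exact h.le
  · rcases hc (by simpa using hσ) (by simpa using hb.1) h with h' | h'
    · exact h'
    · exact hb.2 hσ h'

lemma E_support {f : α →₀ ℕ} {τ : α} (hτ : τ ∈ f.support) (htop : ∀ σ ∈ f.support, σ ≤ τ) :
    (E f).support = vFin τ := by
  ext v
  rw [Finsupp.mem_support_iff, E_apply]
  constructor
  · intro h
    obtain ⟨σ, hσ, hne⟩ := Finset.exists_ne_zero_of_sum_ne_zero h
    by_cases hv : v ∈ vFin σ
    · exact vFin_mono (htop σ hσ) hv
    · rw [if_neg hv, mul_zero] at hne; exact absurd rfl hne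
  · intro hv
    intro h0
    rw [Finset.sum_eq_zero_iff] at h0
    have := h0 τ hτ
    rw [if_pos hv, mul_one] at this
    exact absurd this (Finsupp.mem_support_iff.mp hτ)

lemma E_eq_zero (hS : IsSimplicialPoset α) {f : α →₀ ℕ} (hb : (⊥:α) ∉ f.support)
    (hc : IsChain (· ≤ ·) (f.support : Set α)) (h : E f = 0) : f = 0 := by
  by_contra hne
  obtain ⟨τ, hτ, htop⟩ := chain_top hc hne
  have hsupp := E_support hτ htop
  rw [h, Finsupp.support_zero] at hsupp
  obtain ⟨v, hv⟩ := vFin_nonempty hS (fun h' => hb (h' ▸ hτ))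
  rw [← hsupp] at hv
  exact absurd hv (Finset.notMem_empty v)

lemma E_injective (hS : IsSimplicialPoset α) (γ : α) :
    ∀ N (f g : α →₀ ℕ), (f.sum fun _ n => n) ≤ N →
      (⊥:α) ∉ f.support → IsChain (· ≤ ·) (f.support : Set α) → (∀ σ ∈ f.support, σ ≤ γ) →
      (⊥:α) ∉ g.support → IsChain (· ≤ ·) (g.support : Set α) → (∀ σ ∈ g.support, σ ≤ γ) →
      E f = E g → f = g := by
  intro N
  induction N with
  | zero =>
    intro f g hsum hfb hfc _ hgb hgc _ hE
    have hf0 : f = 0 := by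
      ext σ
      simp only [Finsupp.coe_zero, Pi.zero_apply]
      by_contra h
      have hσ : σ ∈ f.support := Finsupp.mem_support_iff.mpr h
      have h2 : f σ ≤ f.sum fun _ n => n := Finset.single_le_sum (fun _ _ => Nat.zero_le _) hσ
      omega
    subst hf0
    exact (E_eq_zero hS hgb hgc (by rw [← hE]; simp [E])).symm
  | succ N ih =>
    intro f g hsum hfb hfc hfγ hgb hgc hgγ hE
    by_cases hf0 : f = 0
    · subst hf0
      exact (E_eq_zero hS hgb hgc (by rw [← hE]; simp [E])).symm
    by_cases hg0 : g = 0
    · subst hg0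
      exact E_eq_zero hS hfb hfc (by rw [hE]; simp [E])
    obtain ⟨τf, hτf, hftop⟩ := chain_top hfc hf0
    obtain ⟨τg, hτg, hgtop⟩ := chain_top hgc hg0
    have hττ : τf = τg := by
      apply vFin_inj hS (hfγ τf hτf) (hgγ τg hτg)
      rw [← E_support hτf hftop, ← E_support hτg hgtop, hE]
    subst hττ
    set c := min (f τf) (g τf) with hc
    have hc1 : 1 ≤ c := by
      have h1 := Finsupp.mem_support_iff.mp hτf
      have h2 := Finsupp.mem_support_iff.mp hτg
      omega
    set f' := f - Finsupp.single τf c with hf'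
    set g' := g - Finsupp.single τf c with hg'
    have hfsplit : f = f' + Finsupp.single τf c := by
      ext x
      simp only [hf', Finsupp.add_apply, Finsupp.tsub_apply, Finsupp.single_apply]
      by_cases h : τf = x
      · subst h
        have hcf : c ≤ f τf := min_le_left _ _
        simp only [eq_self_iff_true, if_true]
        omega
      · simp [h]
    have hgsplit : g = g' + Finsupp.single τf c := by
      ext x
      simp only [hg', Finsupp.add_apply, Finsupp.tsub_apply, Finsupp.single_apply]
      by_cases h : τf = x
      · subst h
        have hcg : c ≤ g τf := min_le_right _ _
        simp only [eq_self_iff_true, if_true]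
        omega
      · simp [h]
    have hE' : E f' = E g' := by
      have h1 : E f = E f' + c • ind τf := by rw [hfsplit, E_add, E_single]
      have h2 : E g = E g' + c • ind τf := by rw [hgsplit, E_add, E_single]
      ext v
      have := congrArg (fun h => h v) hE
      simp only [h1, h2, Finsupp.add_apply] at this
      omega
    have hsum' : (f'.sum fun _ n => n) ≤ N := by
      have : (f.sum fun _ n => n) = (f'.sum fun _ n => n) + c := by
        rw [hfsplit, Finsupp.sum_add_index' (fun _ => rfl) (fun _ m n => rfl),
          Finsupp.sum_single_index rfl]
      omega
    have hfg' : f' = g' :=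
      ih f' g' hsum'
        (fun h => hfb (Finsupp.support_tsub h)) (hfc.mono (by exact_mod_cast Finsupp.support_tsub))
        (fun σ hσ => hfγ σ (Finsupp.support_tsub hσ))
        (fun h => hgb (Finsupp.support_tsub h)) (hgc.mono (by exact_mod_cast Finsupp.support_tsub))
        (fun σ hσ => hgγ σ (Finsupp.support_tsub hσ)) hE'
    rw [hfsplit, hgsplit, hfg']


/-! ### The chain-monomial family and its linear independence -/

def ChainIdx (α : Type) [Fintype α] [PartialOrder α] [OrderBot α] :=
  {f : α →₀ ℕ // (⊥ : α) ∉ f.support ∧ IsChain (· ≤ ·) (f.support : Set α)}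

noncomputable def vfam : ChainIdx α → faceRing ℤ α :=
  fun f => Ideal.Quotient.mk (straightening ℤ α) (monomial f.1 1)

lemma vfam_linearIndependent (hS : IsSimplicialPoset α) :
    LinearIndependent ℤ (vfam (α := α)) := by
  rw [linearIndependent_iff]
  intro l hl
  rw [Finsupp.linearCombination_apply, Finsupp.sum] at hl
  set q := Ideal.Quotient.mk (straightening ℤ α) with hq
  set p : MvPolynomial α ℤ := ∑ f ∈ l.support, l f • monomial f.1 1 with hp
  have hqp : q p = 0 := by
    rw [hp, map_sum]
    rw [← hl]
    exact Finset.sum_congr rfl fun f _ => (map_zsmul q _ _).symm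
  have hpI : p ∈ straightening ℤ α := Ideal.Quotient.eq_zero_iff_mem.mp hqp
  ext f₀
  by_cases hf₀ : f₀ ∈ l.support
  swap
  · exact Finsupp.notMem_support_iff.mp hf₀
  -- choose γ above all of supp f₀
  have hγ : ∃ γ : α, ∀ σ ∈ f₀.1.support, σ ≤ γ := by
    by_cases h0 : f₀.1 = 0
    · exact ⟨⊥, fun σ hσ => by rw [h0] at hσ; simp at hσ⟩
    · obtain ⟨τ, _, htop⟩ := chain_top f₀.2.2 h0
      exact ⟨τ, htop⟩
  obtain ⟨γ, hγ⟩ := hγ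
  have hPhi : Phi γ p = 0 := Phi_straightening hS γ hpI
  have hcoeff := congrArg (coeff (E f₀.1)) hPhi
  rw [hp, map_sum, coeff_sum, coeff_zero] at hcoeff
  have hsingle : ∑ x ∈ l.support, coeff (E f₀.1) ((Phi γ) (l x • monomial x.1 1)) = l f₀ := by
    rw [Finset.sum_eq_single f₀]
    · rw [map_zsmul, Phi_monomial, if_pos hγ, coeff_smul, coeff_monomial, if_pos rfl,
        smul_eq_mul, mul_one]
    · intro g hg hne
      rw [map_zsmul, Phi_monomial, coeff_smul]
      by_cases hgγ : ∀ σ ∈ g.1.support, σ ≤ γ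
      · rw [if_pos hgγ, coeff_monomial]
        rw [if_neg, smul_zero]
        intro hEE
        apply hne
        apply Subtype.ext
        exact E_injective hS γ (g.1.sum fun _ n => n) g.1 f₀.1 le_rfl
          g.2.1 g.2.2 hgγ f₀.2.1 f₀.2.2 hγ hEE
      · rw [if_neg hgγ, coeff_zero, smul_zero]
    · intro h; exact absurd hf₀ h
  simp only [Finsupp.coe_zero, Pi.zero_apply]
  exact hsingle.symm.trans hcoeff



/-! ### Spanning -/

noncomputable def wt (σ : α) : ℕ := Fintype.card α ^ 2 + 1 - srank σ ^ 2

lemma srank_sq_le (σ : α) : srank σ ^ 2 ≤ Fintype.card α ^ 2 :=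
  Nat.pow_le_pow_left (srank_le_card σ) 2

lemma wt_pos (σ : α) : 1 ≤ wt σ := by
  have := srank_sq_le σ
  rw [wt]; omega

noncomputable def mu (f : α →₀ ℕ) : ℕ := f.sum fun σ n => n * wt σ

lemma mu_add (f g : α →₀ ℕ) : mu (f + g) = mu f + mu g :=
  Finsupp.sum_add_index' (fun σ => zero_mul _) (fun σ m n => add_mul m n _)

lemma mu_single (σ : α) (n : ℕ) : mu (Finsupp.single σ n) = n * wt σ :=
  Finsupp.sum_single_index (zero_mul _)

lemma sq_ineq {a b p q : ℕ} (h : p + q = a + b) (ha : a < q) (hb : b < q) :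
    a ^ 2 + b ^ 2 < p ^ 2 + q ^ 2 := by
  zify at *
  nlinarith [mul_pos (sub_pos.mpr ha) (sub_pos.mpr hb)]

lemma wt_decrease (hS : IsSimplicialPoset α) {σ τ m η : α} (hστ : ¬ σ ≤ τ) (hτσ : ¬ τ ≤ σ)
    (hη : η ∈ joins σ τ) (hm : m ∈ meets σ τ) : wt m + wt η < wt σ + wt τ := by
  have hsum := srank_meet_join hS hη hm
  have h1 : srank σ < srank η := srank_lt_of_join hS hτσ hη
  have hη' : η ∈ joins τ σ := by
    obtain ⟨⟨a, b⟩, c⟩ := hη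
    exact ⟨⟨b, a⟩, fun y hy => c ⟨hy.2, hy.1⟩⟩
  have h2 : srank τ < srank η := srank_lt_of_join hS hστ hη'
  have key := sq_ineq hsum h1 h2
  have b1 := srank_sq_le σ
  have b2 := srank_sq_le τ
  have b3 := srank_sq_le m
  have b4 := srank_sq_le (α := α) η
  rw [wt, wt, wt, wt]
  omega

lemma not_chain_exists {f : α →₀ ℕ} (hc : ¬ IsChain (· ≤ ·) (f.support : Set α)) :
    ∃ σ ∈ f.support, ∃ τ ∈ f.support, σ ≠ τ ∧ ¬ σ ≤ τ ∧ ¬ τ ≤ σ := by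
  by_contra h
  push_neg at h
  apply hc
  intro x hx y hy hxy
  by_cases h' : x ≤ y
  · exact Or.inl h'
  · exact Or.inr (h x (by simpa using hx) y (by simpa using hy) hxy h')

lemma spanning (hS : IsSimplicialPoset α) :
    ∀ N (f : α →₀ ℕ), mu f = N →
      Ideal.Quotient.mk (straightening ℤ α) (monomial f 1) ∈
        Submodule.span ℤ (Set.range (vfam (α := α))) := by
  intro N
  induction N using Nat.strong_induction_on with
  | _ N ih =>
  intro f hμ
  set q := Ideal.Quotient.mk (straightening ℤ α) with hq
  by_cases hb : (⊥ : α) ∈ f.support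
  · -- strip a factor of X ⊥
    set f' := f - Finsupp.single (⊥:α) 1 with hf'
    have hsplit : f = Finsupp.single (⊥:α) 1 + f' := by
      ext x
      have h1 : 1 ≤ f ⊥ := Finsupp.mem_support_iff.mp hb |> Nat.one_le_iff_ne_zero.mpr
      simp only [hf', Finsupp.add_apply, Finsupp.tsub_apply, Finsupp.single_apply]
      by_cases h : (⊥:α) = x
      · subst h; simp only [eq_self_iff_true, if_true]; omega
      · simp [h]
    have hmono : monomial f (1:ℤ) = X ⊥ * monomial f' 1 := by
      rw [hsplit, monomial_single_add, pow_one]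
    have hXbot : q (X ⊥) = 1 := by
      have h0 : q (X ⊥ - 1) = 0 := by
        rw [hq, Ideal.Quotient.eq_zero_iff_mem]
        exact Ideal.subset_span (Or.inl (Or.inl rfl))
      rw [map_sub, map_one, sub_eq_zero] at h0
      exact h0
    have heq : q (monomial f 1) = q (monomial f' 1) := by
      rw [hmono, map_mul, hXbot, one_mul]
    rw [heq]
    refine ih (mu f') ?_ f' rfl
    have hμ2 : mu f = 1 * wt (⊥:α) + mu f' := by rw [hsplit, mu_add, mu_single]
    have := wt_pos (⊥ : α)
    omega
  · by_cases hc : IsChain (· ≤ ·) (f.support : Set α)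
    · exact Submodule.subset_span ⟨⟨f, hb, hc⟩, rfl⟩
    · obtain ⟨σ, hσ, τ, hτ, hne, hστ, hτσ⟩ := not_chain_exists hc
      set f' := f - Finsupp.single σ 1 - Finsupp.single τ 1 with hf'
      have hsplit : f = Finsupp.single σ 1 + (Finsupp.single τ 1 + f') := by
        ext x
        have h1 : 1 ≤ f σ := Finsupp.mem_support_iff.mp hσ |> Nat.one_le_iff_ne_zero.mpr
        have h2 : 1 ≤ f τ := Finsupp.mem_support_iff.mp hτ |> Nat.one_le_iff_ne_zero.mpr
        simp only [hf', Finsupp.add_apply, Finsupp.tsub_apply, Finsupp.single_apply]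
        by_cases hx1 : σ = x
        · subst hx1
          simp only [eq_self_iff_true, if_true,
            if_neg (show ¬τ = σ from fun h => hne h.symm)]
          omega
        · by_cases hx2 : τ = x
          · subst hx2
            simp only [eq_self_iff_true, if_true, if_neg hx1]
            omega
          · simp [hx1, hx2]
      have hmono : monomial f (1:ℤ) = X σ * (X τ * monomial f' 1) := by
        rw [hsplit, monomial_single_add, monomial_single_add, pow_one, pow_one]
      by_cases hj : joins σ τ = ∅
      · have h0 : q (X σ * X τ) = 0 := by
          rw [hq, Ideal.Quotient.eq_zero_iff_mem]
          apply Ideal.subset_span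
          exact Or.inl (Or.inr ⟨σ, τ, hj, rfl⟩)
        rw [hmono, ← mul_assoc, map_mul, h0, zero_mul]
        exact Submodule.zero_mem _
      · have hjne : (joins σ τ).Nonempty := Set.nonempty_iff_ne_empty.mpr hj
        obtain ⟨m, hmeq, hmv⟩ := meets_eq hS hjne
        have hm : m ∈ meets σ τ := by rw [hmeq]; rfl
        have hgen : q (X σ * X τ) =
            q (X m * ∑ η ∈ (Set.toFinite (joins σ τ)).toFinset, X η) := by
          rw [hq, Ideal.Quotient.eq]
          apply Ideal.subset_span
          exact Or.inr ⟨σ, τ, m, hm, hjne, rfl⟩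
        have hexp : q (monomial f 1) =
            ∑ η ∈ (Set.toFinite (joins σ τ)).toFinset,
              q (monomial (Finsupp.single m 1 + (Finsupp.single η 1 + f')) 1) := by
          rw [hmono, ← mul_assoc, map_mul, hgen, ← map_mul, mul_assoc,
            Finset.sum_mul, Finset.mul_sum, map_sum]
          apply Finset.sum_congr rfl
          intro η hη
          congr 1
          rw [monomial_single_add, monomial_single_add, pow_one, pow_one]
        rw [hexp]
        apply Submodule.sum_mem
        intro η hη
        rw [Set.Finite.mem_toFinset] at hη
        refine ih (mu (Finsupp.single m 1 + (Finsupp.single η 1 + f'))) ?_ _ rfl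
        have hlt := wt_decrease hS hστ hτσ hη hm
        have e1 : mu f = 1 * wt σ + (1 * wt τ + mu f') := by
          rw [hsplit, mu_add, mu_add, mu_single, mu_single]
        have e2 : mu (Finsupp.single m 1 + (Finsupp.single η 1 + f')) =
            1 * wt m + (1 * wt η + mu f') := by
          rw [mu_add, mu_add, mu_single, mu_single]
        omega

lemma span_top (hS : IsSimplicialPoset α) :
    ⊤ ≤ Submodule.span ℤ (Set.range (vfam (α := α))) := by
  intro x _
  obtain ⟨p, rfl⟩ := Ideal.Quotient.mk_surjective x
  rw [MvPolynomial.as_sum p, map_sum]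
  apply Submodule.sum_mem
  intro v hv
  have : (monomial v) (coeff v p) = (coeff v p) • (monomial v (1:ℤ)) := by
    rw [smul_monomial, smul_eq_mul, mul_one]
  rw [this, map_zsmul]
  exact Submodule.smul_mem _ _ (spanning hS (mu v) v rfl)

end FRP

/-- the face ring `ℤ[S]` is a free abelian group with basis the
monomials `v_{τ₁}^{a₁} ⋯ v_{τ_k}^{a_k}` over chains `τ₁ < ⋯ < τ_k` in `S \ {⊥}`
with all exponents positive (encoded by finitely supported exponent functions
whose support is a chain avoiding `⊥`). -/


theorem faceRing_basis_chain_monomials {α : Type} [Fintype α] [PartialOrder α] [OrderBot α]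
    (hS : IsSimplicialPoset α) :
    ∃ b : Module.Basis {f : α →₀ ℕ // (⊥ : α) ∉ f.support ∧ IsChain (· ≤ ·) (f.support : Set α)}
        ℤ (faceRing ℤ α),
      ∀ f, b f = Ideal.Quotient.mk (straightening ℤ α)
          (f.1.prod fun σ n => X σ ^ n) := by
  refine ⟨Module.Basis.mk (FRP.vfam_linearIndependent hS) (FRP.span_top hS), fun f => ?_⟩
  erw [Module.Basis.mk_apply]
  show FRP.vfam f = _
  unfold FRP.vfam
  congr 1
  rw [monomial_eq, C_1, one_mul]
end

section
/- The folding map S → K_S, σ ↦ V(σ), induces an injective ring homomorphism Z[K_S] → Z[S] whose image is the subring of Z[S] generated by the degree-two elements v_i corresponding to the vertices. -/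
open MvPolynomial

/-- The associated simplicial complex `K_S`: its faces are the vertex sets `V(σ)`,
ordered by inclusion. -/
def AssocComplex (α : Type) [PartialOrder α] [OrderBot α] : Type :=
  {s : Set α // ∃ σ : α, s = vertexSet σ}

instance {α : Type} [PartialOrder α] [OrderBot α] : PartialOrder (AssocComplex α) :=
  Subtype.partialOrder _

instance {α : Type} [PartialOrder α] [OrderBot α] : OrderBot (AssocComplex α) where
  bot := ⟨vertexSet (⊥ : α), ⟨⊥, rfl⟩⟩
  bot_le s := by
    intro i hi
    exact absurd (le_bot_iff.mp hi.2) hi.1.1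

noncomputable instance {α : Type} [Fintype α] [PartialOrder α] [OrderBot α] :
    Fintype (AssocComplex α) := by
  have : Finite (AssocComplex α) := by unfold AssocComplex; infer_instance
  exact Fintype.ofFinite _

section OrderLemmas
variable {α : Type} [PartialOrder α] [OrderBot α]

lemma vertexSet_bot : vertexSet (⊥ : α) = ∅ := by
  ext i
  simp only [vertexSet, Set.mem_setOf_eq, Set.mem_empty_iff_false, iff_false, not_and]
  intro hi h
  exact hi.1 (le_bot_iff.mp h)

lemma vertexSet_mono {σ τ : α} (h : τ ≤ σ) : vertexSet τ ⊆ vertexSet σ :=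
  fun _ hi => ⟨hi.1, hi.2.trans h⟩

lemma vertexSet_atom {i : α} (hi : IsAtom i) : vertexSet i = {i} := by
  ext j
  constructor
  · rintro ⟨hj, hji⟩
    rcases hji.lt_or_eq with h | h
    · exact absurd (hi.2 _ h) hj.1
    · exact h
  · rintro rfl; exact ⟨hi, le_rfl⟩

lemma mem_vertexSet_iff {i τ : α} (hi : IsAtom i) : i ∈ vertexSet τ ↔ i ≤ τ :=
  ⟨fun h => h.2, fun h => ⟨hi, h⟩⟩

section Interval
variable {σ : α} {k : ℕ}

lemma e_bot (e : Set.Icc (⊥ : α) σ ≃o Finset (Fin k)) :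
    e ⟨⊥, le_rfl, bot_le⟩ = ∅ := by
  have h : ∀ t : Finset (Fin k), e ⟨⊥, le_rfl, bot_le⟩ ≤ t := by
    intro t
    have h1 : (⟨⊥, le_rfl, bot_le⟩ : Set.Icc (⊥:α) σ) ≤ e.symm t := by
      exact Subtype.coe_le_coe.mp bot_le
    simpa using e.le_iff_le.mpr h1
  exact le_bot_iff.mp (h ⊥)

lemma atom_iff_singleton (e : Set.Icc (⊥ : α) σ ≃o Finset (Fin k)) {i : α} (hi : i ≤ σ) :
    IsAtom i ↔ ∃ a, e ⟨i, bot_le, hi⟩ = {a} := by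
  constructor
  · intro hati
    have hne : e ⟨i, bot_le, hi⟩ ≠ ∅ := by
      intro h
      apply hati.1
      have := e.injective (h.trans (e_bot e).symm)
      exact congrArg Subtype.val this
    obtain ⟨a, ha⟩ := Finset.nonempty_iff_ne_empty.mpr hne
    refine ⟨a, ?_⟩
    set y := e.symm {a} with hy
    have hyle : y ≤ ⟨i, bot_le, hi⟩ := by
      rw [hy, ← e.symm_apply_apply ⟨i, bot_le, hi⟩]
      exact e.symm.monotone (Finset.singleton_subset_iff.mpr ha)
    have hyne : (y : α) ≠ ⊥ := by
      intro h
      have h1 : e y = {a} := by rw [hy, e.apply_symm_apply]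
      have h2 : y = ⟨⊥, le_rfl, bot_le⟩ := Subtype.ext h
      rw [h2, e_bot e] at h1
      exact Finset.singleton_ne_empty a h1.symm
    have hyi : (y : α) = i := by
      rcases (Subtype.coe_le_coe.mpr hyle).lt_or_eq with h | h
      · exact absurd (hati.2 _ h) hyne
      · exact h
    have : y = ⟨i, bot_le, hi⟩ := Subtype.ext hyi
    rw [← this, hy, e.apply_symm_apply]
  · rintro ⟨a, ha⟩
    constructor
    · intro h
      subst h
      rw [e_bot e] at ha
      exact Finset.singleton_ne_empty a ha.symm
    · intro b hb
      have hbσ : b ≤ σ := hb.le.trans hi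
      have hlt : e ⟨b, bot_le, hbσ⟩ < e ⟨i, bot_le, hi⟩ := by
        rw [e.lt_iff_lt]
        exact Subtype.mk_lt_mk.mpr hb
      rw [ha] at hlt
      have hsub : e ⟨b, bot_le, hbσ⟩ = ∅ := by
        rcases Finset.subset_singleton_iff.mp hlt.le with h | h
        · exact h
        · exact absurd h hlt.ne
      have := e.injective (hsub.trans (e_bot e).symm)
      exact congrArg Subtype.val this

lemma atom_le_iff (e : Set.Icc (⊥ : α) σ ≃o Finset (Fin k)) {i τ : α} (hi : i ≤ σ) (hτ : τ ≤ σ)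
    {a : Fin k} (ha : e ⟨i, bot_le, hi⟩ = {a}) :
    i ≤ τ ↔ a ∈ e ⟨τ, bot_le, hτ⟩ := by
  rw [← Finset.singleton_subset_iff, ← ha]
  constructor
  · intro h
    exact e.monotone (Subtype.mk_le_mk.mpr h)
  · intro h
    exact Subtype.mk_le_mk.mp (e.le_iff_le.mp h)

end Interval
end OrderLemmas
set_option linter.unusedSectionVars false
section SimplicialLemmas
variable {α : Type} [Fintype α] [PartialOrder α] [OrderBot α]
variable (hS : IsSimplicialPoset α)
include hS

lemma le_of_vertexSet_subset {τ₁ τ₂ σ : α} (h1 : τ₁ ≤ σ) (h2 : τ₂ ≤ σ)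
    (h : vertexSet τ₁ ⊆ vertexSet τ₂) : τ₁ ≤ τ₂ := by
  obtain ⟨k, ⟨e⟩⟩ := hS σ
  have key : e ⟨τ₁, bot_le, h1⟩ ≤ e ⟨τ₂, bot_le, h2⟩ := by
    intro a ha
    set y := e.symm {a} with hy
    have hey : e ⟨(y : α), bot_le, y.2.2⟩ = {a} := by
      have : (⟨(y : α), bot_le, y.2.2⟩ : Set.Icc (⊥:α) σ) = y := Subtype.ext rfl
      rw [this, hy, e.apply_symm_apply]
    have hatom : IsAtom (y : α) := (atom_iff_singleton e y.2.2).mpr ⟨a, hey⟩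
    have h1' : (y : α) ≤ τ₁ := (atom_le_iff e y.2.2 h1 hey).mpr ha
    have h2' : (y : α) ≤ τ₂ := h (⟨hatom, h1'⟩ : _ ∈ vertexSet τ₁) |>.2
    exact (atom_le_iff e y.2.2 h2 hey).mp h2'
  exact Subtype.mk_le_mk.mp (e.le_iff_le.mp key)

lemma eq_of_vertexSet_eq {τ₁ τ₂ σ : α} (h1 : τ₁ ≤ σ) (h2 : τ₂ ≤ σ)
    (h : vertexSet τ₁ = vertexSet τ₂) : τ₁ = τ₂ :=
  le_antisymm (le_of_vertexSet_subset hS h1 h2 h.le)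
    (le_of_vertexSet_subset hS h2 h1 h.ge)

lemma exists_face {σ : α} {F : Set α} (hF : F ⊆ vertexSet σ) :
    ∃ τ, τ ≤ σ ∧ vertexSet τ = F := by
  classical
  obtain ⟨k, ⟨e⟩⟩ := hS σ
  set t : Finset (Fin k) :=
    (e ⟨σ, bot_le, le_rfl⟩).filter (fun a => ((e.symm {a} : Set.Icc (⊥:α) σ) : α) ∈ F) with ht
  refine ⟨(e.symm t : Set.Icc (⊥:α) σ), (e.symm t).2.2, ?_⟩
  have het : e ⟨((e.symm t : Set.Icc (⊥:α) σ) : α), bot_le, (e.symm t).2.2⟩ = t := by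
    have : (⟨((e.symm t : Set.Icc (⊥:α) σ) : α), bot_le, (e.symm t).2.2⟩ :
        Set.Icc (⊥:α) σ) = e.symm t := Subtype.ext rfl
    rw [this, e.apply_symm_apply]
  ext i
  constructor
  · rintro ⟨hati, hile⟩
    have hiσ : i ≤ σ := hile.trans (e.symm t).2.2
    obtain ⟨a, ha⟩ := (atom_iff_singleton e hiσ).mp hati
    have hat : a ∈ t := by
      rw [← het]
      exact (atom_le_iff e hiσ (e.symm t).2.2 ha).mp hile
    rw [ht, Finset.mem_filter] at hat
    have hsymm : (e.symm {a} : Set.Icc (⊥:α) σ) = ⟨i, bot_le, hiσ⟩ := by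
      rw [← ha, e.symm_apply_apply]
    rw [hsymm] at hat
    exact hat.2
  · intro hi
    have hmem := hF hi
    have hati : IsAtom i := hmem.1
    have hiσ : i ≤ σ := hmem.2
    obtain ⟨a, ha⟩ := (atom_iff_singleton e hiσ).mp hati
    have hat : a ∈ t := by
      rw [ht, Finset.mem_filter]
      constructor
      · exact (atom_le_iff e hiσ le_rfl ha).mp hiσ
      · have hsymm : (e.symm {a} : Set.Icc (⊥:α) σ) = ⟨i, bot_le, hiσ⟩ := by
          rw [← ha, e.symm_apply_apply]
        rw [hsymm]; exact hi
    rw [← het] at hat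
    exact ⟨hati, (atom_le_iff e hiσ (e.symm t).2.2 ha).mpr hat⟩

lemma eq_bot_of_vertexSet_empty {τ : α} (h : vertexSet τ = ∅) : τ = ⊥ :=
  eq_of_vertexSet_eq hS le_rfl bot_le (h.trans vertexSet_bot.symm)

lemma eq_of_vertexSet_singleton {τ i : α} (hi : IsAtom i) (h : vertexSet τ = {i}) : τ = i := by
  have hile : i ≤ τ := by
    have : i ∈ vertexSet τ := by rw [h]; rfl
    exact this.2
  exact (eq_of_vertexSet_eq hS hile le_rfl ((vertexSet_atom hi).trans h.symm)).symm

lemma mem_joins_iff {σ' τ' η : α} :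
    η ∈ joins σ' τ' ↔ σ' ≤ η ∧ τ' ≤ η ∧ vertexSet η = vertexSet σ' ∪ vertexSet τ' := by
  constructor
  · rintro ⟨⟨hs, ht⟩, hmin⟩
    refine ⟨hs, ht, ?_⟩
    have hsub : vertexSet σ' ∪ vertexSet τ' ⊆ vertexSet η :=
      Set.union_subset (vertexSet_mono hs) (vertexSet_mono ht)
    obtain ⟨y, hyη, hyV⟩ := exists_face hS hsub
    have hsy : σ' ≤ y := le_of_vertexSet_subset hS hs hyη
      (by rw [hyV]; exact Set.subset_union_left)
    have hty : τ' ≤ y := le_of_vertexSet_subset hS ht hyη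
      (by rw [hyV]; exact Set.subset_union_right)
    have : η ≤ y := hmin ⟨hsy, hty⟩ hyη
    rw [← le_antisymm hyη this, hyV]
  · rintro ⟨hs, ht, hV⟩
    refine ⟨⟨hs, ht⟩, ?_⟩
    intro x ⟨hxs, hxt⟩ hxη
    refine le_of_vertexSet_subset hS le_rfl hxη ?_
    rw [hV]
    exact Set.union_subset (vertexSet_mono hxs) (vertexSet_mono hxt)

lemma mem_meets_iff_of_le {σ' τ' x ρ : α} (hx1 : σ' ≤ x) (hx2 : τ' ≤ x) :
    ρ ∈ meets σ' τ' ↔ ρ ≤ σ' ∧ ρ ≤ τ' ∧ vertexSet ρ = vertexSet σ' ∩ vertexSet τ' := by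
  have hsub : vertexSet σ' ∩ vertexSet τ' ⊆ vertexSet x :=
    fun i hi => vertexSet_mono hx1 hi.1
  obtain ⟨z, hzx, hzV⟩ := exists_face hS hsub
  have hzs : z ≤ σ' := le_of_vertexSet_subset hS hzx hx1
    (by rw [hzV]; exact Set.inter_subset_left)
  have hzt : z ≤ τ' := le_of_vertexSet_subset hS hzx hx2
    (by rw [hzV]; exact Set.inter_subset_right)
  constructor
  · rintro ⟨⟨hρs, hρt⟩, hmax⟩
    refine ⟨hρs, hρt, ?_⟩
    have hρz : ρ ≤ z := le_of_vertexSet_subset hS hρs hzs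
      (by rw [hzV]; exact Set.subset_inter (vertexSet_mono hρs) (vertexSet_mono hρt))
    have : z ≤ ρ := hmax ⟨hzs, hzt⟩ hρz
    have heq : ρ = z := le_antisymm hρz this
    rw [heq]
    exact hzV
  · rintro ⟨hρs, hρt, hV⟩
    refine ⟨⟨hρs, hρt⟩, ?_⟩
    intro y ⟨hys, hyt⟩ hρy
    refine le_of_vertexSet_subset hS hys hρs ?_
    rw [hV]
    exact Set.subset_inter (vertexSet_mono hys) (vertexSet_mono hyt)

lemma exists_mem_joins_of_le {σ' τ' x : α} (hx1 : σ' ≤ x) (hx2 : τ' ≤ x) :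
    ∃ η, η ∈ joins σ' τ' ∧ η ≤ x := by
  have hsub : vertexSet σ' ∪ vertexSet τ' ⊆ vertexSet x :=
    Set.union_subset (vertexSet_mono hx1) (vertexSet_mono hx2)
  obtain ⟨η, hηx, hηV⟩ := exists_face hS hsub
  have hsη : σ' ≤ η := le_of_vertexSet_subset hS hx1 hηx
    (by rw [hηV]; exact Set.subset_union_left)
  have htη : τ' ≤ η := le_of_vertexSet_subset hS hx2 hηx
    (by rw [hηV]; exact Set.subset_union_right)
  exact ⟨η, (mem_joins_iff hS).mpr ⟨hsη, htη, hηV⟩, hηx⟩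

omit hS in
lemma bot_mem_meets_of_atom {τ i : α} (hi : IsAtom i) (h : ¬ i ≤ τ) : ⊥ ∈ meets τ i := by
  refine ⟨⟨bot_le, bot_le⟩, ?_⟩
  intro y ⟨hyτ, hyi⟩ _
  rcases hyi.lt_or_eq with hl | he
  · rw [hi.2 _ hl]
  · exact absurd (he ▸ hyτ) h

end SimplicialLemmas
section AssocComplexLemmas
variable {α : Type} [Fintype α] [PartialOrder α] [OrderBot α]

/-- `s` is a face of the associated complex. -/
def IsFace {α : Type} [PartialOrder α] [OrderBot α] (s : Set α) : Prop :=
  ∃ σ : α, s = vertexSet σ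

def AssocComplex.mk' (s : Set α) (h : IsFace s) : AssocComplex α := ⟨s, h⟩

@[simp] lemma AssocComplex.mk'_coe (s : Set α) (h : IsFace s) :
    (AssocComplex.mk' s h).1 = s := rfl

lemma AssocComplex.ext {F G : AssocComplex α} (h : F.1 = G.1) : F = G := Subtype.ext h

lemma AssocComplex.le_iff {F G : AssocComplex α} : F ≤ G ↔ F.1 ⊆ G.1 := Iff.rfl

lemma AssocComplex.bot_coe : (⊥ : AssocComplex α).1 = ∅ := vertexSet_bot

lemma AssocComplex.isFace (F : AssocComplex α) : IsFace F.1 := F.2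

lemma isFace_of_subset (hS : IsSimplicialPoset α) {s t : Set α} (h : s ⊆ t)
    (ht : IsFace t) : IsFace s := by
  obtain ⟨σ, rfl⟩ := ht
  obtain ⟨τ, _, hV⟩ := exists_face hS h
  exact ⟨τ, hV.symm⟩

lemma isFace_atoms {s : Set α} (hs : IsFace s) {i : α} (hi : i ∈ s) : IsAtom i := by
  obtain ⟨σ, rfl⟩ := hs
  exact hi.1

lemma mem_meets_assoc_iff (hS : IsSimplicialPoset α) {F G ρ : AssocComplex α} :
    ρ ∈ meets F G ↔ ρ.1 = F.1 ∩ G.1 := by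
  have hface : IsFace (F.1 ∩ G.1) :=
    isFace_of_subset hS Set.inter_subset_left F.isFace
  constructor
  · rintro ⟨⟨h1, h2⟩, hmax⟩
    have hsub : ρ.1 ⊆ F.1 ∩ G.1 := Set.subset_inter h1 h2
    have hle : ρ ≤ ⟨F.1 ∩ G.1, hface⟩ := hsub
    have hge := hmax ⟨Set.inter_subset_left, Set.inter_subset_right⟩ hle
    exact Set.Subset.antisymm hsub hge
  · intro h
    refine ⟨⟨by rw [AssocComplex.le_iff, h]; exact Set.inter_subset_left,
      by rw [AssocComplex.le_iff, h]; exact Set.inter_subset_right⟩, ?_⟩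
    intro y ⟨hy1, hy2⟩ _
    rw [AssocComplex.le_iff, h]
    exact Set.subset_inter hy1 hy2

lemma mem_joins_assoc_iff {F G η : AssocComplex α} (hface : IsFace (F.1 ∪ G.1)) :
    η ∈ joins F G ↔ η.1 = F.1 ∪ G.1 := by
  constructor
  · rintro ⟨⟨h1, h2⟩, hmin⟩
    have hsub : F.1 ∪ G.1 ⊆ η.1 := Set.union_subset h1 h2
    have hle : (⟨F.1 ∪ G.1, hface⟩ : AssocComplex α) ≤ η := hsub
    have := hmin (y := ⟨F.1 ∪ G.1, hface⟩)
      ⟨Set.subset_union_left, Set.subset_union_right⟩ hle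
    exact Set.Subset.antisymm this hsub
  · intro h
    refine ⟨⟨by rw [AssocComplex.le_iff, h]; exact Set.subset_union_left,
      by rw [AssocComplex.le_iff, h]; exact Set.subset_union_right⟩, ?_⟩
    intro y ⟨hy1, hy2⟩ _
    rw [AssocComplex.le_iff, h]
    exact Set.union_subset hy1 hy2

lemma joins_assoc_eq_empty (hS : IsSimplicialPoset α) {F G : AssocComplex α}
    (h : ¬ IsFace (F.1 ∪ G.1)) : joins F G = ∅ := by
  ext η
  simp only [Set.mem_empty_iff_false, iff_false]
  rintro ⟨⟨h1, h2⟩, -⟩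
  exact h (isFace_of_subset hS (Set.union_subset h1 h2) η.isFace)

lemma isFace_union_of_joins_nonempty (hS : IsSimplicialPoset α) {F G : AssocComplex α}
    (h : (joins F G).Nonempty) : IsFace (F.1 ∪ G.1) := by
  by_contra hc
  rw [joins_assoc_eq_empty hS hc] at h
  exact Set.not_nonempty_empty h

end AssocComplexLemmas
section Maps

noncomputable def sfin {β : Type} [Finite β] (s : Set β) : Finset β :=
  (Set.toFinite s).toFinset

lemma mem_sfin {β : Type} [Finite β] {s : Set β} {i : β} : i ∈ sfin s ↔ i ∈ s :=
  Set.Finite.mem_toFinset _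

lemma sfin_coe {β : Type} [Finite β] (s : Set β) : (sfin s : Set β) = s :=
  Set.Finite.coe_toFinset _

lemma sfin_singleton {β : Type} [Finite β] (x : β) : sfin {x} = {x} := by
  ext i; simp [mem_sfin]

variable {α : Type} [Fintype α] [PartialOrder α] [OrderBot α]

lemma straightening_gen1 : (X ⊥ - 1 : MvPolynomial α ℤ) ∈ straightening ℤ α :=
  Ideal.subset_span (Or.inl (Or.inl rfl))

lemma straightening_gen2 {σ τ : α} (h : joins σ τ = ∅) :
    (X σ * X τ : MvPolynomial α ℤ) ∈ straightening ℤ α :=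
  Ideal.subset_span (Or.inl (Or.inr ⟨σ, τ, h, rfl⟩))

lemma straightening_gen3 {σ τ ρ : α} (hρ : ρ ∈ meets σ τ) (hne : (joins σ τ).Nonempty) :
    (X σ * X τ - X ρ * ∑ η ∈ sfin (joins σ τ), X η : MvPolynomial α ℤ) ∈ straightening ℤ α :=
  Ideal.subset_span (Or.inr ⟨σ, τ, ρ, hρ, hne, rfl⟩)

lemma mk_X_bot : Ideal.Quotient.mk (straightening ℤ α) (X ⊥) = 1 := by
  have h := Ideal.Quotient.eq_zero_iff_mem.mpr (straightening_gen1 (α := α))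
  rw [map_sub, map_one, sub_eq_zero] at h
  exact h

lemma mk_mul_eq_zero {σ τ : α} (h : joins σ τ = ∅) :
    Ideal.Quotient.mk (straightening ℤ α) (X σ * X τ) = 0 :=
  Ideal.Quotient.eq_zero_iff_mem.mpr (straightening_gen2 h)

lemma mk_mul_eq {σ τ ρ : α} (hρ : ρ ∈ meets σ τ) (hne : (joins σ τ).Nonempty) :
    Ideal.Quotient.mk (straightening ℤ α) (X σ * X τ) =
      Ideal.Quotient.mk (straightening ℤ α) (X ρ * ∑ η ∈ sfin (joins σ τ), X η) := by
  rw [Ideal.Quotient.mk_eq_mk_iff_sub_mem]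
  exact straightening_gen3 hρ hne

end Maps
section ProdLemmas

noncomputable abbrev mkQ (α : Type) [Fintype α] [PartialOrder α] [OrderBot α] :
    MvPolynomial α ℤ →+* faceRing ℤ α :=
  Ideal.Quotient.mk (straightening ℤ α)

variable {α : Type} [Fintype α] [PartialOrder α] [OrderBot α] [DecidableEq α]
variable (hS : IsSimplicialPoset α)
include hS

lemma prod_eq_sum : ∀ s : Finset α, IsFace (↑s : Set α) →
    ∏ i ∈ s, mkQ α (X i) = mkQ α (∑ τ ∈ sfin {τ : α | vertexSet τ = ↑s}, X τ) := by
  classical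
  intro s
  induction s using Finset.induction_on with
  | empty =>
    intro _
    have h1 : {τ : α | vertexSet τ = ↑(∅ : Finset α)} = {⊥} := by
      ext τ
      simp only [Finset.coe_empty, Set.mem_setOf_eq, Set.mem_singleton_iff]
      constructor
      · exact fun h => eq_bot_of_vertexSet_empty hS h
      · rintro rfl; exact vertexSet_bot
    rw [h1, sfin_singleton, Finset.sum_singleton, mk_X_bot, Finset.prod_empty]
  | @insert j s hj ih =>
    intro hface
    have hcoe : (↑(insert j s) : Set α) = insert j ↑s := Finset.coe_insert j s
    have hfs : IsFace (↑s : Set α) :=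
      isFace_of_subset hS (by rw [hcoe]; exact Set.subset_insert j ↑s) hface
    have hjatom : IsAtom j := isFace_atoms hface (by rw [hcoe]; exact Set.mem_insert j ↑s)
    have key : ∀ τ ∈ sfin {τ : α | vertexSet τ = ↑s},
        mkQ α (X j * X τ) =
          ∑ η ∈ (sfin {η : α | vertexSet η = ↑(insert j s)}).filter (fun η => τ ≤ η),
            mkQ α (X η) := by
      intro τ hτ
      rw [mem_sfin] at hτ
      have hτV : vertexSet τ = ↑s := hτ
      have hjτ : ¬ j ≤ τ := by
        intro h
        exact hj (by rw [← Finset.mem_coe, ← hτV]; exact ⟨hjatom, h⟩)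
      have hjoins : ∀ η : α, η ∈ joins τ j ↔
          (vertexSet η = ↑(insert j s) ∧ τ ≤ η) := by
        intro η
        rw [mem_joins_iff hS]
        constructor
        · rintro ⟨h1, h2, h3⟩
          refine ⟨?_, h1⟩
          rw [h3, hτV, vertexSet_atom hjatom, hcoe]
          ext x; simp [Set.mem_insert_iff, or_comm]
        · rintro ⟨h1, h2⟩
          have hjη : j ≤ η := by
            have : j ∈ vertexSet η := by
              rw [h1, hcoe]; exact Set.mem_insert j ↑s
            exact this.2
          refine ⟨h2, hjη, ?_⟩
          rw [h1, hτV, vertexSet_atom hjatom, hcoe]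
          ext x; simp [Set.mem_insert_iff, or_comm]
      by_cases hne : (joins τ j).Nonempty
      · have hmeet : ⊥ ∈ meets τ j := bot_mem_meets_of_atom hjatom hjτ
        rw [mul_comm, mk_mul_eq hmeet hne, map_mul, map_sum, mk_X_bot, one_mul]
        apply Finset.sum_congr _ (fun _ _ => rfl)
        ext η
        simp only [mem_sfin, Finset.mem_filter, Set.mem_setOf_eq]
        rw [hjoins η]
      · have hempty : joins τ j = ∅ := Set.not_nonempty_iff_eq_empty.mp hne
        rw [mul_comm, mk_mul_eq_zero hempty]
        symm
        apply Finset.sum_eq_zero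
        intro η hη
        exfalso
        simp only [Finset.mem_filter, mem_sfin, Set.mem_setOf_eq] at hη
        have : η ∈ joins τ j := (hjoins η).mpr ⟨hη.1, hη.2⟩
        rw [hempty] at this
        exact this
    rw [Finset.prod_insert hj, ih hfs, ← map_mul, Finset.mul_sum, map_sum]
    have step1 : ∑ τ ∈ sfin {τ : α | vertexSet τ = ↑s}, mkQ α (X j * X τ) =
        ∑ τ ∈ sfin {τ : α | vertexSet τ = ↑s},
          ∑ η ∈ sfin {η : α | vertexSet η = ↑(insert j s)},
            (if τ ≤ η then mkQ α (X η) else 0) := by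
      refine Finset.sum_congr rfl ?_
      intro τ hτ
      rw [key τ hτ, Finset.sum_filter]
    rw [step1, Finset.sum_comm, map_sum]
    refine Finset.sum_congr rfl ?_
    intro η hη
    rw [mem_sfin] at hη
    have hηV : vertexSet η = ↑(insert j s) := hη
    have hsub : (↑s : Set α) ⊆ vertexSet η := by
      rw [hηV, hcoe]; exact Set.subset_insert j ↑s
    obtain ⟨τ₀, hτ₀η, hτ₀V⟩ := exists_face hS hsub
    rw [Finset.sum_eq_single τ₀]
    · rw [if_pos hτ₀η]
    · intro τ hτ hne
      rw [mem_sfin] at hτ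
      rw [if_neg]
      intro hle
      exact hne (eq_of_vertexSet_eq hS hle hτ₀η (hτ.trans hτ₀V.symm))
    · intro habs
      exfalso
      exact habs (mem_sfin.mpr hτ₀V)

lemma prod_eq_zero : ∀ s : Finset α, (∀ i ∈ s, IsAtom i) → ¬ IsFace (↑s : Set α) →
    ∏ i ∈ s, mkQ α (X i) = 0 := by
  classical
  intro s
  induction s using Finset.induction_on with
  | empty =>
    intro _ hface
    exact absurd ⟨⊥, (Finset.coe_empty ▸ vertexSet_bot.symm : (↑(∅:Finset α) : Set α) = vertexSet ⊥)⟩ hface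
  | @insert j s hj ih =>
    intro hatoms hnface
    have hjatom : IsAtom j := hatoms j (Finset.mem_insert_self j s)
    have hcoe : (↑(insert j s) : Set α) = insert j ↑s := Finset.coe_insert j s
    by_cases hfs : IsFace (↑s : Set α)
    · rw [Finset.prod_insert hj, prod_eq_sum hS s hfs, ← map_mul, Finset.mul_sum, map_sum]
      apply Finset.sum_eq_zero
      intro τ hτ
      rw [mem_sfin] at hτ
      have hτV : vertexSet τ = ↑s := hτ
      have hempty : joins τ j = ∅ := by
        rw [Set.eq_empty_iff_forall_notMem]
        intro η hη
        obtain ⟨h1, h2, h3⟩ := (mem_joins_iff hS).mp hη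
        apply hnface
        refine ⟨η, ?_⟩
        rw [h3, hτV, vertexSet_atom hjatom, hcoe]
        ext x; simp [Set.mem_insert_iff, or_comm]
      rw [mul_comm, mk_mul_eq_zero hempty]
    · rw [Finset.prod_insert hj, ih (fun i hi => hatoms i (Finset.mem_insert_of_mem hi)) hfs,
        mul_zero]

end ProdLemmas
section MapDefs
variable {α : Type} [Fintype α] [PartialOrder α] [OrderBot α]

noncomputable def Gmap : MvPolynomial (AssocComplex α) ℤ →+* MvPolynomial α ℤ :=
  eval₂Hom C (fun F => ∑ σ ∈ sfin {σ : α | vertexSet σ = F.1}, X σ)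

open Classical in
noncomputable def Rmap (σ : α) : MvPolynomial α ℤ →+* MvPolynomial α ℤ :=
  eval₂Hom C (fun τ => if τ ≤ σ then ∏ i ∈ sfin (vertexSet τ), X i else 0)

noncomputable def umap : MvPolynomial (AssocComplex α) ℤ →+* MvPolynomial α ℤ :=
  eval₂Hom C (fun F => ∏ i ∈ sfin F.1, X i)

open Classical in
noncomputable def smap : MvPolynomial α ℤ →+* MvPolynomial (AssocComplex α) ℤ :=
  eval₂Hom C (fun i => if h : IsAtom i then
    X (AssocComplex.mk' {i} ⟨i, (vertexSet_atom h).symm⟩) else 0)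

open Classical in
noncomputable def resmap (σ : α) : MvPolynomial α ℤ →+* MvPolynomial α ℤ :=
  eval₂Hom C (fun i => if i ∈ vertexSet σ then X i else 0)

lemma Gmap_X (F : AssocComplex α) :
    Gmap (X F) = ∑ σ ∈ sfin {σ : α | vertexSet σ = F.1}, X σ := eval₂Hom_X' _ _ _

open Classical in
lemma Rmap_X (σ τ : α) :
    Rmap σ (X τ) = if τ ≤ σ then ∏ i ∈ sfin (vertexSet τ), X i else 0 := eval₂Hom_X' _ _ _

lemma umap_X (F : AssocComplex α) : umap (X F) = ∏ i ∈ sfin F.1, X i := eval₂Hom_X' _ _ _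

lemma smap_X_atom {i : α} (hi : IsAtom i) :
    smap (X i) = X (AssocComplex.mk' {i} ⟨i, (vertexSet_atom hi).symm⟩) := by
  rw [smap, eval₂Hom_X', dif_pos hi]

lemma smap_X_not_atom {i : α} (h : ¬ IsAtom i) :
    smap (X i) = (0 : MvPolynomial (AssocComplex α) ℤ) := by
  rw [smap, eval₂Hom_X', dif_neg h]

open Classical in
lemma resmap_X (σ i : α) :
    resmap σ (X i) = if i ∈ vertexSet σ then X i else 0 := eval₂Hom_X' _ _ _

end MapDefs

section KLemmas
variable {α : Type} [Fintype α] [PartialOrder α] [OrderBot α] [DecidableEq α]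
variable (hS : IsSimplicialPoset α)
include hS

lemma mkK_mul {F G : AssocComplex α} (hface : IsFace (F.1 ∪ G.1))
    (hfi : IsFace (F.1 ∩ G.1)) :
    mkQ (AssocComplex α) (X F * X G) =
      mkQ (AssocComplex α)
        (X (AssocComplex.mk' (F.1 ∩ G.1) hfi) * X (AssocComplex.mk' (F.1 ∪ G.1) hface)) := by
  have hρ : AssocComplex.mk' (F.1 ∩ G.1) hfi ∈ meets F G :=
    (mem_meets_assoc_iff hS).mpr rfl
  have hmem : AssocComplex.mk' (F.1 ∪ G.1) hface ∈ joins F G :=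
    (mem_joins_assoc_iff hface).mpr rfl
  have hsfin : sfin (joins F G) = {AssocComplex.mk' (F.1 ∪ G.1) hface} := by
    ext η
    simp only [mem_sfin, Finset.mem_singleton]
    rw [mem_joins_assoc_iff hface]
    exact ⟨fun h => AssocComplex.ext h, fun h => h ▸ rfl⟩
  have hne : (joins F G).Nonempty := ⟨_, hmem⟩
  rw [mk_mul_eq hρ hne, hsfin, Finset.sum_singleton]

lemma mkK_mul_zero {F G : AssocComplex α} (h : ¬ IsFace (F.1 ∪ G.1)) :
    mkQ (AssocComplex α) (X F * X G) = 0 :=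
  mk_mul_eq_zero (joins_assoc_eq_empty hS h)

lemma smap_prod : ∀ s : Finset α, ∀ hface : IsFace (↑s : Set α),
    mkQ (AssocComplex α) (∏ i ∈ s, smap (X i)) =
      mkQ (AssocComplex α) (X (AssocComplex.mk' (↑s) hface)) := by
  intro s
  induction s using Finset.induction_on with
  | empty =>
    intro hface
    have hbot : AssocComplex.mk' (↑(∅ : Finset α)) hface = (⊥ : AssocComplex α) :=
      AssocComplex.ext (Finset.coe_empty.trans AssocComplex.bot_coe.symm)
    rw [Finset.prod_empty, map_one, hbot, mk_X_bot]
  | @insert j s hj ih =>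
    intro hface
    have hcoe : (↑(insert j s) : Set α) = insert j ↑s := Finset.coe_insert j s
    have hfs : IsFace (↑s : Set α) :=
      isFace_of_subset hS (by rw [hcoe]; exact Set.subset_insert j ↑s) hface
    have hjatom : IsAtom j := isFace_atoms hface (by rw [hcoe]; exact Set.mem_insert j ↑s)
    set Fj : AssocComplex α := AssocComplex.mk' {j} ⟨j, (vertexSet_atom hjatom).symm⟩ with hFj
    set Fs : AssocComplex α := AssocComplex.mk' (↑s) hfs with hFs
    have hunion : Fj.1 ∪ Fs.1 = ↑(insert j s) := by
      rw [hcoe]; exact (Set.insert_eq j ↑s).symm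
    have hfaceu : IsFace (Fj.1 ∪ Fs.1) := by rw [hunion]; exact hface
    have hfacei : IsFace (Fj.1 ∩ Fs.1) :=
      isFace_of_subset hS Set.inter_subset_left Fj.isFace
    rw [Finset.prod_insert hj, map_mul, smap_X_atom hjatom, ih hfs, ← hFj, ← map_mul,
      mkK_mul hS hfaceu hfacei, map_mul]
    have hbot : AssocComplex.mk' (Fj.1 ∩ Fs.1) hfacei = (⊥ : AssocComplex α) := by
      apply AssocComplex.ext
      rw [AssocComplex.mk'_coe, AssocComplex.bot_coe]
      ext x
      simp only [hFj, hFs, AssocComplex.mk'_coe, Set.mem_inter_iff, Set.mem_singleton_iff,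
        Finset.mem_coe, Set.mem_empty_iff_false, iff_false, not_and]
      intro hx
      rw [hx]
      exact hj
    have huni : AssocComplex.mk' (Fj.1 ∪ Fs.1) hfaceu =
        AssocComplex.mk' (↑(insert j s)) hface := AssocComplex.ext hunion
    rw [hbot, huni, mk_X_bot, one_mul]

lemma smap_prod_zero : ∀ s : Finset α, (∀ i ∈ s, IsAtom i) → ¬ IsFace (↑s : Set α) →
    mkQ (AssocComplex α) (∏ i ∈ s, smap (X i)) = 0 := by
  intro s
  induction s using Finset.induction_on with
  | empty =>
    intro _ hface
    exact absurd ⟨⊥, (Finset.coe_empty ▸ vertexSet_bot.symm :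
      (↑(∅:Finset α) : Set α) = vertexSet ⊥)⟩ hface
  | @insert j s hj ih =>
    intro hatoms hnface
    have hjatom : IsAtom j := hatoms j (Finset.mem_insert_self j s)
    have hcoe : (↑(insert j s) : Set α) = insert j ↑s := Finset.coe_insert j s
    by_cases hfs : IsFace (↑s : Set α)
    · set Fj : AssocComplex α := AssocComplex.mk' {j} ⟨j, (vertexSet_atom hjatom).symm⟩ with hFj
      set Fs : AssocComplex α := AssocComplex.mk' (↑s) hfs with hFs
      have hunion : Fj.1 ∪ Fs.1 = ↑(insert j s) := by
        rw [hcoe]; exact (Set.insert_eq j ↑s).symm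
      have hnfaceu : ¬ IsFace (Fj.1 ∪ Fs.1) := by rw [hunion]; exact hnface
      rw [Finset.prod_insert hj, map_mul, smap_X_atom hjatom, smap_prod hS s hfs, ← hFj,
        ← map_mul, mkK_mul_zero hS hnfaceu]
    · rw [Finset.prod_insert hj, map_mul,
        ih (fun i hi => hatoms i (Finset.mem_insert_of_mem hi)) hfs, mul_zero]

end KLemmas
section RmapLemmas

lemma sfin_empty {β : Type} [Finite β] : sfin (∅ : Set β) = ∅ := by
  ext i; simp [mem_sfin]

lemma sfin_union {β : Type} [Finite β] [DecidableEq β] (s t : Set β) :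
    sfin (s ∪ t) = sfin s ∪ sfin t := by
  ext i; simp [mem_sfin]

lemma sfin_inter {β : Type} [Finite β] [DecidableEq β] (s t : Set β) :
    sfin (s ∩ t) = sfin s ∩ sfin t := by
  ext i; simp [mem_sfin]

variable {α : Type} [Fintype α] [PartialOrder α] [OrderBot α] [DecidableEq α]
variable (hS : IsSimplicialPoset α)
include hS

lemma Rmap_straightening (σ : α) {p : MvPolynomial α ℤ} (hp : p ∈ straightening ℤ α) :
    Rmap σ p = 0 := by
  classical
  have hle : straightening ℤ α ≤ RingHom.ker (Rmap σ) := by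
    rw [straightening, Ideal.span_le]
    rintro p ((h | ⟨σ', τ', hj, rfl⟩) | ⟨σ', τ', ρ, hm, hne, rfl⟩)
    · rw [Set.mem_singleton_iff] at h
      subst h
      rw [SetLike.mem_coe, RingHom.mem_ker, map_sub, map_one, Rmap_X, if_pos bot_le, vertexSet_bot,
        sfin_empty, Finset.prod_empty, sub_self]
    · rw [SetLike.mem_coe, RingHom.mem_ker, map_mul, Rmap_X, Rmap_X]
      by_cases hs' : σ' ≤ σ
      · by_cases ht' : τ' ≤ σ
        · obtain ⟨η, hη, -⟩ := exists_mem_joins_of_le hS hs' ht'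
          rw [hj] at hη
          exact absurd hη (Set.notMem_empty η)
        · rw [if_neg ht', mul_zero]
      · rw [if_neg hs', zero_mul]
    · rw [SetLike.mem_coe, RingHom.mem_ker, map_sub, map_mul, map_mul, map_sum, Rmap_X, Rmap_X, Rmap_X]
      by_cases hs' : σ' ≤ σ
      · by_cases ht' : τ' ≤ σ
        · obtain ⟨η₀, hη₀, hη₀σ⟩ := exists_mem_joins_of_le hS hs' ht'
          obtain ⟨-, -, hη₀V⟩ := (mem_joins_iff hS).mp hη₀
          have hρV : vertexSet ρ = vertexSet σ' ∩ vertexSet τ' :=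
            ((mem_meets_iff_of_le hS hs' ht').mp hm).2.2
          have hρσ : ρ ≤ σ := hm.1.1.trans hs'
          have hsum : (∑ η ∈ (Set.toFinite (joins σ' τ')).toFinset, Rmap σ (X η)) =
              ∏ i ∈ sfin (vertexSet η₀), X i := by
            have h1 : (∑ η ∈ (Set.toFinite (joins σ' τ')).toFinset, Rmap σ (X η)) =
                Rmap σ (X η₀) :=
              Finset.sum_eq_single_of_mem (f := fun η => Rmap σ (X η)) η₀
                ((Set.Finite.mem_toFinset _).mpr hη₀)
                (fun η hη hne' => by
                  rw [Set.Finite.mem_toFinset] at hη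
                  show Rmap σ (X η) = 0
                  rw [Rmap_X, if_neg]
                  intro hle
                  obtain ⟨-, -, hηV⟩ := (mem_joins_iff hS).mp hη
                  exact hne' (eq_of_vertexSet_eq hS hle hη₀σ (hηV.trans hη₀V.symm)))
            rw [h1, Rmap_X, if_pos hη₀σ]
          rw [hsum, if_pos hs', if_pos ht', if_pos hρσ, hρV, hη₀V, sfin_inter, sfin_union,
            sub_eq_zero, mul_comm (∏ i ∈ sfin (vertexSet σ') ∩ sfin (vertexSet τ'), X i)]
          exact (Finset.prod_union_inter (f := fun i => (X i : MvPolynomial α ℤ))).symm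
        · rw [if_neg ht', mul_zero, zero_sub, neg_eq_zero]
          have hz : (∑ η ∈ (Set.toFinite (joins σ' τ')).toFinset, Rmap σ (X η)) = 0 := by
            apply Finset.sum_eq_zero
            intro η hη
            rw [Set.Finite.mem_toFinset] at hη
            rw [Rmap_X, if_neg]
            intro hle
            exact ht' (hη.1.2.trans hle)
          rw [hz, mul_zero]
      · rw [if_neg hs', zero_mul, zero_sub, neg_eq_zero]
        have hz : (∑ η ∈ (Set.toFinite (joins σ' τ')).toFinset, Rmap σ (X η)) = 0 := by
          apply Finset.sum_eq_zero
          intro η hη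
          rw [Set.Finite.mem_toFinset] at hη
          rw [Rmap_X, if_neg]
          intro hle
          exact hs' (hη.1.1.trans hle)
        rw [hz, mul_zero]
  exact hle hp

lemma Rmap_comp_Gmap (σ : α) :
    (Rmap σ).comp (Gmap (α := α)) = (resmap σ).comp umap := by
  classical
  apply MvPolynomial.ringHom_ext
  · intro r
    simp [Gmap, Rmap, resmap, umap, RingHom.comp_apply, eval₂Hom_C]
  · intro F
    rw [RingHom.comp_apply, RingHom.comp_apply, Gmap_X, umap_X, map_sum, map_prod]
    have hRHS : (∏ i ∈ sfin F.1, resmap σ (X i)) =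
        ∏ i ∈ sfin F.1, (if i ∈ vertexSet σ then X i else 0) :=
      Finset.prod_congr rfl (fun i _ => resmap_X σ i)
    by_cases hsub : F.1 ⊆ vertexSet σ
    · obtain ⟨τ₀, hτ₀σ, hτ₀V⟩ := exists_face hS hsub
      have hsum : (∑ τ ∈ sfin {σ' : α | vertexSet σ' = F.1}, Rmap σ (X τ)) =
          Rmap σ (X τ₀) :=
        Finset.sum_eq_single_of_mem (f := fun τ => Rmap σ (X τ)) τ₀
          (mem_sfin.mpr hτ₀V)
          (fun τ hτ hne => by
            rw [mem_sfin] at hτ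
            show Rmap σ (X τ) = 0
            rw [Rmap_X, if_neg]
            intro hle
            exact hne (eq_of_vertexSet_eq hS hle hτ₀σ (hτ.trans hτ₀V.symm)))
      rw [hRHS, hsum, Rmap_X, if_pos hτ₀σ, hτ₀V]
      refine (Finset.prod_congr rfl ?_)
      intro i hi
      rw [mem_sfin] at hi
      rw [if_pos (hsub hi)]
    · obtain ⟨i, hiF, hiσ⟩ := Set.not_subset.mp hsub
      have h0 : (if i ∈ vertexSet σ then (X i : MvPolynomial α ℤ) else 0) = 0 := if_neg hiσ
      rw [hRHS, Finset.prod_eq_zero (mem_sfin.mpr hiF) h0]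
      apply Finset.sum_eq_zero
      intro τ hτ
      rw [mem_sfin] at hτ
      rw [Rmap_X, if_neg]
      intro hle
      exact hiσ (vertexSet_mono hle (hτ ▸ hiF))
end RmapLemmas
section InjLemmas
variable {α : Type} [Fintype α] [PartialOrder α] [OrderBot α] [DecidableEq α]

open Classical in
lemma resmap_monomial (σ : α) (m : α →₀ ℕ) (c : ℤ) :
    resmap σ (monomial m c) =
      if (∀ i ∈ m.support, i ∈ vertexSet σ) then monomial m c else 0 := by
  classical
  rw [resmap, eval₂Hom_monomial, Finsupp.prod]
  by_cases h : ∀ i ∈ m.support, i ∈ vertexSet σ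
  · rw [if_pos h, monomial_eq, Finsupp.prod]
    congr 1
    apply Finset.prod_congr rfl
    intro i hi
    rw [if_pos (h i hi)]
  · rw [if_neg h]
    push_neg at h
    obtain ⟨i, hi, hiσ⟩ := h
    rw [Finset.prod_eq_zero hi, mul_zero]
    rw [if_neg hiσ]
    exact zero_pow (Finsupp.mem_support_iff.mp hi)

open Classical in
lemma coeff_resmap (σ : α) (q : MvPolynomial α ℤ) (m : α →₀ ℕ) :
    coeff m (resmap σ q) =
      if (∀ i ∈ m.support, i ∈ vertexSet σ) then coeff m q else 0 := by
  classical
  conv_lhs => rw [← support_sum_monomial_coeff q, map_sum]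
  rw [coeff_sum]
  have hterm : ∀ m' ∈ q.support, m' ≠ m →
      coeff m (resmap σ (monomial m' (coeff m' q))) = 0 := by
    intro m' _ hne
    rw [resmap_monomial]
    split_ifs
    · rw [coeff_monomial, if_neg hne]
    · rw [coeff_zero]
  by_cases hm : m ∈ q.support
  · rw [Finset.sum_eq_single_of_mem m hm hterm, resmap_monomial]
    split_ifs
    · rw [coeff_monomial, if_pos rfl]
    · rw [coeff_zero]
  · rw [Finset.sum_eq_zero (fun m' hm' => hterm m' hm' (fun h => hm (h ▸ hm')))]
    rw [MvPolynomial.notMem_support_iff.mp hm]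
    simp

lemma smap_monomial (m : α →₀ ℕ) (c : ℤ) :
    smap (monomial m c) = C c * ∏ i ∈ m.support, (smap (X i)) ^ (m i) := by
  have h1 : smap (monomial m c) =
      C c * Finsupp.prod m fun i e => smap (X i) ^ e := by
    rw [smap, eval₂Hom_monomial]
    simp only [eval₂Hom_X']
  rw [h1, Finsupp.prod]

variable (hS : IsSimplicialPoset α)
include hS

lemma main_inj (p : MvPolynomial (AssocComplex α) ℤ)
    (hres : ∀ σ : α, resmap σ (umap p) = 0) :
    mkQ (AssocComplex α) p = 0 := by
  classical
  have hs_u : (mkQ (AssocComplex α)).comp ((smap (α := α)).comp umap) =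
      mkQ (AssocComplex α) := by
    apply MvPolynomial.ringHom_ext
    · intro r
      rw [RingHom.comp_apply, RingHom.comp_apply, umap, eval₂Hom_C, smap, eval₂Hom_C]
    · intro F
      rw [RingHom.comp_apply, RingHom.comp_apply, umap_X, map_prod]
      have hface : IsFace (↑(sfin F.1) : Set α) := by rw [sfin_coe]; exact F.isFace
      rw [smap_prod hS (sfin F.1) hface]
      have heq : AssocComplex.mk' (↑(sfin F.1)) hface = F :=
        AssocComplex.ext (by rw [AssocComplex.mk'_coe, sfin_coe])
      rw [heq]
  have hp : mkQ (AssocComplex α) p = mkQ (AssocComplex α) (smap (umap p)) :=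
    (RingHom.congr_fun hs_u p).symm
  rw [hp]
  set q := umap p with hq
  rw [← support_sum_monomial_coeff q, map_sum, map_sum]
  apply Finset.sum_eq_zero
  intro m hm
  by_cases hatoms : ∀ i ∈ m.support, IsAtom i
  · by_cases hface : IsFace (↑m.support : Set α)
    · exfalso
      obtain ⟨σ₀, hσ₀⟩ := hface
      have h0 := hres σ₀
      have hco := coeff_resmap σ₀ q m
      rw [h0, coeff_zero] at hco
      have hcond : ∀ i ∈ m.support, i ∈ vertexSet σ₀ := by
        intro i hi
        rw [← hσ₀]
        exact hi
      rw [if_pos hcond] at hco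
      exact MvPolynomial.mem_support_iff.mp hm hco.symm
    · have hsplit : (∏ i ∈ m.support, (smap (X i)) ^ (m i)) =
          (∏ i ∈ m.support, (smap (X i)) ^ (m i - 1)) * ∏ i ∈ m.support, smap (X i) := by
        rw [← Finset.prod_mul_distrib]
        apply Finset.prod_congr rfl
        intro i hi
        rw [← pow_succ]
        congr 1
        have := Finsupp.mem_support_iff.mp hi
        omega
      rw [smap_monomial, hsplit, map_mul, map_mul,
        smap_prod_zero hS m.support hatoms hface, mul_zero, mul_zero]
  · push_neg at hatoms
    obtain ⟨i, hi, hnatom⟩ := hatoms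
    have hz : smap (monomial m (coeff m q)) = 0 := by
      rw [smap_monomial, Finset.prod_eq_zero hi, mul_zero]
      rw [smap_X_not_atom hnatom]
      exact zero_pow (Finsupp.mem_support_iff.mp hi)
    rw [hz, map_zero]

end InjLemmas
section GmapLemmas
variable {α : Type} [Fintype α] [PartialOrder α] [OrderBot α] [DecidableEq α]

lemma Gmap_C (a : ℤ) : Gmap (α := α) (C a) = C a := eval₂Hom_C _ _ a

variable (hS : IsSimplicialPoset α)
include hS

lemma mk_Gmap_X (F : AssocComplex α) :
    mkQ α (Gmap (X F)) = ∏ i ∈ sfin F.1, mkQ α (X i) := by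
  rw [Gmap_X]
  have hface : IsFace (↑(sfin F.1) : Set α) := by rw [sfin_coe]; exact F.isFace
  have h := prod_eq_sum hS (sfin F.1) hface
  have hset : {τ : α | vertexSet τ = (↑(sfin F.1) : Set α)} = {τ : α | vertexSet τ = F.1} := by
    rw [sfin_coe]
  rw [hset] at h
  exact h.symm

lemma Gmap_straightening {p : MvPolynomial (AssocComplex α) ℤ}
    (hp : p ∈ straightening ℤ (AssocComplex α)) : mkQ α (Gmap p) = 0 := by
  classical
  have hle : straightening ℤ (AssocComplex α) ≤ RingHom.ker ((mkQ α).comp Gmap) := by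
    rw [straightening, Ideal.span_le]
    rintro p ((h | ⟨F, G, hj, rfl⟩) | ⟨F, G, ρ, hm, hne, rfl⟩)
    · rw [Set.mem_singleton_iff] at h
      subst h
      rw [SetLike.mem_coe, RingHom.mem_ker, RingHom.comp_apply, map_sub, map_one, Gmap_X]
      have hset : {σ : α | vertexSet σ = (⊥ : AssocComplex α).1} = {⊥} := by
        ext τ
        rw [AssocComplex.bot_coe]
        simp only [Set.mem_setOf_eq, Set.mem_singleton_iff]
        exact ⟨fun h => eq_bot_of_vertexSet_empty hS h, fun h => h ▸ vertexSet_bot⟩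
      rw [hset, sfin_singleton, Finset.sum_singleton, map_sub, map_one, mk_X_bot, sub_self]
    · rw [SetLike.mem_coe, RingHom.mem_ker, RingHom.comp_apply, map_mul, map_mul,
        mk_Gmap_X hS, mk_Gmap_X hS]
      have hnface : ¬ IsFace (F.1 ∪ G.1) := by
        intro hf
        have hmem : AssocComplex.mk' (F.1 ∪ G.1) hf ∈ joins F G :=
          (mem_joins_assoc_iff hf).mpr rfl
        rw [hj] at hmem
        exact hmem
      rw [← Finset.prod_union_inter]
      have hz : (∏ i ∈ sfin F.1 ∪ sfin G.1, mkQ α (X i)) = 0 := by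
        apply prod_eq_zero hS
        · intro i hi
          rcases Finset.mem_union.mp hi with h | h
          · exact isFace_atoms F.isFace (mem_sfin.mp h)
          · exact isFace_atoms G.isFace (mem_sfin.mp h)
        · have hcoe : (↑(sfin F.1 ∪ sfin G.1) : Set α) = F.1 ∪ G.1 := by
            rw [Finset.coe_union, sfin_coe, sfin_coe]
          rw [hcoe]
          exact hnface
      rw [hz, zero_mul]
    · rw [SetLike.mem_coe, RingHom.mem_ker, RingHom.comp_apply, map_sub, map_mul, map_mul,
        map_sum]
      have hfaceu : IsFace (F.1 ∪ G.1) := isFace_union_of_joins_nonempty hS hne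
      have hρ1 : ρ.1 = F.1 ∩ G.1 := (mem_meets_assoc_iff hS).mp hm
      have hsfin : (Set.toFinite (joins F G)).toFinset =
          {AssocComplex.mk' (F.1 ∪ G.1) hfaceu} := by
        ext η
        rw [Set.Finite.mem_toFinset, Finset.mem_singleton, mem_joins_assoc_iff hfaceu]
        exact ⟨fun h => AssocComplex.ext h, fun h => h ▸ rfl⟩
      rw [hsfin, Finset.sum_singleton, map_sub, map_mul, map_mul, mk_Gmap_X hS, mk_Gmap_X hS,
        mk_Gmap_X hS, mk_Gmap_X hS]
      have h1 : sfin ρ.1 = sfin F.1 ∩ sfin G.1 := by rw [hρ1, sfin_inter]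
      have h2 : sfin (AssocComplex.mk' (F.1 ∪ G.1) hfaceu).1 = sfin F.1 ∪ sfin G.1 := by
        rw [AssocComplex.mk'_coe, sfin_union]
      rw [h1, h2, sub_eq_zero, ← Finset.prod_union_inter, mul_comm]
  exact hle hp

end GmapLemmas
/-- the folding map `σ ↦ V(σ)` induces an injective ring homomorphism
`ℤ[K_S] → ℤ[S]`, sending `w_F ↦ ∑_{V(σ)=F} v_σ`, whose image is the subring of
`ℤ[S]` generated by the degree-two elements `v_i` (for vertices `i`). -/
theorem folding_map_faceRing_injective {α : Type} [Fintype α] [PartialOrder α] [OrderBot α]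
    [DecidableEq α] (hS : IsSimplicialPoset α) :
    ∃ g : faceRing ℤ (AssocComplex α) →+* faceRing ℤ α,
      (∀ F : AssocComplex α,
        g (Ideal.Quotient.mk (straightening ℤ (AssocComplex α)) (X F)) =
          Ideal.Quotient.mk (straightening ℤ α)
            (∑ σ ∈ (Set.toFinite {σ : α | vertexSet σ = F.1}).toFinset, X σ)) ∧
      Function.Injective g ∧
      g.range = Subring.closure
        {x : faceRing ℤ α | ∃ i : α, IsAtom i ∧
          x = Ideal.Quotient.mk (straightening ℤ α) (X i)} := by
  classical
  have hwd : ∀ a ∈ straightening ℤ (AssocComplex α), ((mkQ α).comp Gmap) a = 0 := by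
    intro a ha
    rw [RingHom.comp_apply]
    exact Gmap_straightening hS ha
  refine ⟨Ideal.Quotient.lift _ ((mkQ α).comp Gmap) hwd, ?_, ?_, ?_⟩
  · intro F
    rw [Ideal.Quotient.lift_mk, RingHom.comp_apply, Gmap_X]
    rfl
  · set_option synthInstance.maxHeartbeats 1000000 in rw [injective_iff_map_eq_zero]
    intro a ha
    obtain ⟨p, rfl⟩ := Ideal.Quotient.mk_surjective a
    rw [Ideal.Quotient.lift_mk, RingHom.comp_apply] at ha
    have hmem : Gmap p ∈ straightening ℤ α := Ideal.Quotient.eq_zero_iff_mem.mp ha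
    have hres : ∀ σ : α, resmap σ (umap p) = 0 := by
      intro σ
      have h1 : Rmap σ (Gmap p) = 0 := Rmap_straightening hS σ hmem
      have h2 := RingHom.congr_fun (Rmap_comp_Gmap hS σ) p
      rw [RingHom.comp_apply, RingHom.comp_apply] at h2
      rw [← h2]
      exact h1
    exact main_inj hS p hres
  · apply le_antisymm
    · intro x hx
      obtain ⟨y, rfl⟩ := RingHom.mem_range.mp hx
      obtain ⟨p, rfl⟩ := Ideal.Quotient.mk_surjective y
      rw [Ideal.Quotient.lift_mk, RingHom.comp_apply]
      clear hx
      induction p using MvPolynomial.induction_on with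
      | C a =>
        rw [Gmap_C]
        have h1 : (C a : MvPolynomial α ℤ) = (a : MvPolynomial α ℤ) :=
          eq_intCast (C : ℤ →+* MvPolynomial α ℤ) a
        rw [h1, map_intCast]
        exact intCast_mem _ a
      | add p q hp hq =>
        rw [map_add, map_add]
        exact add_mem hp hq
      | mul_X p F hp =>
        rw [map_mul, map_mul]
        refine mul_mem hp ?_
        rw [mk_Gmap_X hS]
        refine Subring.prod_mem _ ?_
        intro i hi
        exact Subring.subset_closure ⟨i, isFace_atoms F.isFace (mem_sfin.mp hi), rfl⟩
    · rw [Subring.closure_le]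
      rintro x ⟨i, hi, rfl⟩
      rw [SetLike.mem_coe, RingHom.mem_range]
      refine ⟨Ideal.Quotient.mk _
        (X (AssocComplex.mk' {i} ⟨i, (vertexSet_atom hi).symm⟩)), ?_⟩
      rw [Ideal.Quotient.lift_mk, RingHom.comp_apply, Gmap_X]
      have hset : {σ : α |
          vertexSet σ = (AssocComplex.mk' {i} ⟨i, (vertexSet_atom hi).symm⟩).1} = {i} := by
        ext τ
        simp only [AssocComplex.mk'_coe, Set.mem_setOf_eq, Set.mem_singleton_iff]
        exact ⟨fun h => eq_of_vertexSet_singleton hS hi h, fun h => by subst h; exact vertexSet_atom hi⟩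
      rw [hset, sfin_singleton, Finset.sum_singleton]
end

section
/- Let S be a simplicial poset of rank n with m vertices and let t₁,…,t_n be degree-two elements of Z[S], t_i = Σ_j λ_{ij} v_j. If for every σ ∈ S the restricted elements s_σ(t₁),…,s_σ(t_n) generate the positive-degree ideal of the polynomial ring Z[σ] = Z[v_i : i ∈ V(σ)], then Z[S] is a finitely generated module over Z[t₁,…,t_n]. -/
set_option linter.unusedSectionVars false
set_option linter.unusedVariables false
set_option maxHeartbeats 1000000
set_option synthInstance.maxHeartbeats 1000000


open MvPolynomial

namespace FRAux

variable {α : Type} [Fintype α] [PartialOrder α] [OrderBot α] [DecidableEq α]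
  [DecidablePred (IsAtom (α := α))] [DecidableRel ((· ≤ ·) : α → α → Prop)]

/-- vertex finset -/
def VSf (x : α) : Finset α := Finset.univ.filter (fun j => IsAtom j ∧ j ≤ x)

lemma mem_VSf {j x : α} : j ∈ VSf x ↔ IsAtom j ∧ j ≤ x := by
  simp [VSf]

lemma VSf_mono {x y : α} (h : x ≤ y) : VSf x ⊆ VSf y := fun j hj => by
  rw [mem_VSf] at *; exact ⟨hj.1, hj.2.trans h⟩

lemma VSf_bot : VSf (⊥ : α) = ∅ := by
  ext j
  simp only [mem_VSf, Finset.notMem_empty, iff_false, not_and]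
  intro hj h
  exact hj.1 (le_bot_iff.mp h)

lemma VSf_atom {j : α} (hj : IsAtom j) : VSf j = {j} := by
  ext j'
  simp only [mem_VSf, Finset.mem_singleton]
  constructor
  · rintro ⟨hj', hle⟩
    rcases hj.le_iff.mp hle with h | h
    · exact absurd h hj'.1
    · exact h
  · rintro rfl; exact ⟨hj, le_rfl⟩

section Interval

variable {σ : α} {k : ℕ}

lemma img_bot (e : Set.Icc (⊥:α) σ ≃o Finset (Fin k)) :
    e ⟨⊥, bot_le, bot_le⟩ = ∅ := by
  have h : e ⟨⊥, bot_le, bot_le⟩ ≤ e (e.symm ∅) := by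
    rw [e.le_iff_le]
    exact Subtype.mk_le_mk.mpr bot_le
  rw [e.apply_symm_apply] at h
  exact Finset.subset_empty.mp h

lemma img_eq_empty_iff (e : Set.Icc (⊥:α) σ ≃o Finset (Fin k)) {x : α} (hx : x ≤ σ) :
    e ⟨x, bot_le, hx⟩ = ∅ ↔ x = ⊥ := by
  constructor
  · intro h
    have := e.injective (h.trans (img_bot e).symm)
    exact congrArg Subtype.val this
  · rintro rfl; exact img_bot e

lemma atom_img (e : Set.Icc (⊥:α) σ ≃o Finset (Fin k)) {j : α} (hj : IsAtom j) (hjσ : j ≤ σ) :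
    ∃ i, e ⟨j, bot_le, hjσ⟩ = {i} := by
  have hne : e ⟨j, bot_le, hjσ⟩ ≠ ∅ := by
    rw [Ne, img_eq_empty_iff e hjσ]; exact hj.1
  obtain ⟨i, hi⟩ := Finset.nonempty_iff_ne_empty.mpr hne
  refine ⟨i, ?_⟩
  have h1 : e.symm {i} ≤ ⟨j, bot_le, hjσ⟩ := by
    rw [← e.le_iff_le, e.apply_symm_apply]
    exact Finset.singleton_subset_iff.mpr hi
  have h2 : (e.symm {i} : Set.Icc (⊥:α) σ).1 ≤ j := h1
  rcases hj.le_iff.mp h2 with h | h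
  · exfalso
    have : e.symm {i} = ⟨⊥, bot_le, bot_le⟩ := Subtype.ext h
    have := congrArg e this
    rw [e.apply_symm_apply, img_bot e] at this
    exact Finset.singleton_ne_empty i this
  · have : e.symm {i} = ⟨j, bot_le, hjσ⟩ := Subtype.ext h
    have := congrArg e this
    rw [e.apply_symm_apply] at this
    exact this.symm

lemma mem_img (e : Set.Icc (⊥:α) σ ≃o Finset (Fin k)) {x : α} (hx : x ≤ σ) {i : Fin k}
    (hi : i ∈ e ⟨x, bot_le, hx⟩) :
    ∃ j, ∃ (hj : IsAtom j) (hjx : j ≤ x), e ⟨j, bot_le, hjx.trans hx⟩ = {i} := by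
  set y := e.symm {i} with hy
  have h1 : y ≤ ⟨x, bot_le, hx⟩ := by
    rw [hy, ← e.le_iff_le, e.apply_symm_apply]
    exact Finset.singleton_subset_iff.mpr hi
  have hey : e y = {i} := e.apply_symm_apply _
  have hyx : (y : α) ≤ x := h1
  have hyσ : (y : α) ≤ σ := y.2.2
  have hatom : IsAtom (y : α) := by
    constructor
    · intro hbot
      have : y = ⟨⊥, bot_le, bot_le⟩ := Subtype.ext hbot
      rw [this, img_bot e] at hey
      exact Finset.singleton_ne_empty i hey.symm
    · intro b hb
      have hbσ : b ≤ σ := hb.le.trans hyσ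
      have : e ⟨b, bot_le, hbσ⟩ < e y := by
        rw [e.lt_iff_lt]
        exact Subtype.mk_lt_mk.mpr hb
      rw [hey] at this
      have := Finset.eq_empty_of_ssubset_singleton this
      exact (img_eq_empty_iff e hbσ).mp this
  refine ⟨(y : α), hatom, hyx, ?_⟩
  have : (⟨(y : α), bot_le, hyx.trans hx⟩ : Set.Icc (⊥:α) σ) = y := Subtype.ext rfl
  rw [this, hey]

end Interval

variable (hS : IsSimplicialPoset α)
include hS

lemma le_of_VSf_subset {x y σ : α} (hx : x ≤ σ) (hy : y ≤ σ) (h : VSf x ⊆ VSf y) : x ≤ y := by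
  obtain ⟨k, ⟨e⟩⟩ := hS σ
  have : e ⟨x, bot_le, hx⟩ ≤ e ⟨y, bot_le, hy⟩ := by
    intro i hi
    obtain ⟨j, hj, hjx, hji⟩ := mem_img e hx hi
    have hjy : j ≤ y := (mem_VSf.mp (h (mem_VSf.mpr ⟨hj, hjx⟩))).2
    have : e ⟨j, bot_le, hjx.trans hx⟩ ≤ e ⟨y, bot_le, hy⟩ := by
      rw [e.le_iff_le]; exact Subtype.mk_le_mk.mpr hjy
    rw [hji] at this
    exact this (Finset.mem_singleton_self i)
  rw [e.le_iff_le] at this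
  exact this

lemma eq_of_VSf_eq {x y σ : α} (hx : x ≤ σ) (hy : y ≤ σ) (h : VSf x = VSf y) : x = y :=
  le_antisymm (le_of_VSf_subset hS hx hy h.le) (le_of_VSf_subset hS hy hx h.ge)

lemma exists_le_VSf_eq {x : α} {W : Finset α} (hW : W ⊆ VSf x) : ∃ y, y ≤ x ∧ VSf y = W := by
  obtain ⟨k, ⟨e⟩⟩ := hS x
  have hWx : ∀ j ∈ W, j ≤ x := fun j hj => (mem_VSf.mp (hW hj)).2
  have hWa : ∀ j ∈ W, IsAtom j := fun j hj => (mem_VSf.mp (hW hj)).1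
  set s : Finset (Fin k) :=
    W.attach.biUnion (fun j => e ⟨j.1, bot_le, hWx j.1 j.2⟩) with hs
  refine ⟨(e.symm s : Set.Icc (⊥:α) x).1, (e.symm s).2.2, ?_⟩
  have hes : e (e.symm s) = s := e.apply_symm_apply s
  ext j'
  rw [mem_VSf]
  constructor
  · rintro ⟨hj', hle⟩
    have hj'x : j' ≤ x := hle.trans (e.symm s).2.2
    obtain ⟨i', hi'⟩ := atom_img e hj' hj'x
    have h1 : e ⟨j', bot_le, hj'x⟩ ≤ e (e.symm s) := by
      rw [e.le_iff_le]; exact Subtype.mk_le_mk.mpr hle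
    rw [hi', hes] at h1
    have hi's : i' ∈ s := h1 (Finset.mem_singleton_self i')
    rw [hs] at hi's
    obtain ⟨⟨j, hjW⟩, _, hi'j⟩ := Finset.mem_biUnion.mp hi's
    obtain ⟨ij, hij⟩ := atom_img e (hWa j hjW) (hWx j hjW)
    rw [hij] at hi'j
    have : ij = i' := (Finset.mem_singleton.mp hi'j).symm
    rw [this] at hij
    have : (⟨j, bot_le, hWx j hjW⟩ : Set.Icc (⊥:α) x) = ⟨j', bot_le, hj'x⟩ :=
      e.injective (hij.trans hi'.symm)
    have hjj' : j = j' := congrArg Subtype.val this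
    rwa [← hjj']
  · intro hj'W
    refine ⟨hWa j' hj'W, ?_⟩
    have h1 : e ⟨j', bot_le, hWx j' hj'W⟩ ≤ s := by
      rw [hs]
      exact Finset.subset_biUnion_of_mem (fun j => e ⟨j.1, bot_le, hWx j.1 j.2⟩) (Finset.mem_attach W ⟨j', hj'W⟩)
    rw [← hes] at h1
    rw [e.le_iff_le] at h1
    exact h1

lemma exists_atom_le {x : α} (hx : x ≠ ⊥) : ∃ j, IsAtom j ∧ j ≤ x := by
  obtain ⟨k, ⟨e⟩⟩ := hS x
  have hne : e ⟨x, bot_le, le_rfl⟩ ≠ ∅ := by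
    rw [Ne, img_eq_empty_iff e le_rfl]; exact hx
  obtain ⟨i, hi⟩ := Finset.nonempty_iff_ne_empty.mpr hne
  obtain ⟨j, hj, hjx, _⟩ := mem_img e le_rfl hi
  exact ⟨j, hj, hjx⟩

omit hS in
lemma mem_joins {a b η : α} (h : η ∈ joins a b) :
    Minimal (fun x => a ≤ x ∧ b ≤ x) η := h

omit hS in
lemma mem_meets {a b ρ : α} (h : ρ ∈ meets a b) :
    Maximal (fun x => x ≤ a ∧ x ≤ b) ρ := h

omit hS in
lemma bot_mem_meets {η j : α} (hj : IsAtom j) (hjη : ¬ j ≤ η) :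
    (⊥ : α) ∈ meets η j := by
  show Maximal (fun x => x ≤ η ∧ x ≤ j) ⊥
  constructor
  · exact ⟨bot_le, bot_le⟩
  · intro y hy _
    rcases hj.le_iff.mp hy.2 with h | h
    · exact h.le
    · exact absurd (h ▸ hy.1) hjη

lemma exists_join {a b σ : α} (ha : a ≤ σ) (hb : b ≤ σ) :
    ∃ u, u ∈ joins a b ∧ u ≤ σ ∧ VSf u = VSf a ∪ VSf b ∧
      ∀ η ∈ joins a b, η ≤ σ → η = u := by
  have hsub : VSf a ∪ VSf b ⊆ VSf σ :=
    Finset.union_subset (VSf_mono ha) (VSf_mono hb)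
  obtain ⟨u, huσ, huV⟩ := exists_le_VSf_eq hS hsub
  have hau : a ≤ u := le_of_VSf_subset hS ha huσ (huV ▸ Finset.subset_union_left)
  have hbu : b ≤ u := le_of_VSf_subset hS hb huσ (huV ▸ Finset.subset_union_right)
  have humem : u ∈ joins a b := by
    show Minimal (fun x => a ≤ x ∧ b ≤ x) u
    constructor
    · exact ⟨hau, hbu⟩
    · intro y hy hyu
      have hyσ : y ≤ σ := hyu.trans huσ
      refine le_of_VSf_subset hS huσ hyσ ?_
      rw [huV]
      exact Finset.union_subset (VSf_mono hy.1) (VSf_mono hy.2)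
  refine ⟨u, humem, huσ, huV, ?_⟩
  intro η hη hησ
  have huη : u ≤ η := by
    refine le_of_VSf_subset hS huσ hησ ?_
    rw [huV]
    exact Finset.union_subset (VSf_mono (mem_joins hη).prop.1) (VSf_mono (mem_joins hη).prop.2)
  exact le_antisymm ((mem_joins hη).2 (mem_joins humem).prop huη) huη

lemma VSf_of_mem_joins {a b η : α} (h : η ∈ joins a b) : VSf η = VSf a ∪ VSf b := by
  obtain ⟨u, hu, huη, huV, huniq⟩ := exists_join hS (mem_joins h).prop.1 (mem_joins h).prop.2
  rw [huniq η h le_rfl, huV]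

lemma meets_spec {a b σ ρ : α} (ha : a ≤ σ) (hb : b ≤ σ) (hρ : ρ ∈ meets a b) :
    ρ ≤ σ ∧ VSf ρ = VSf a ∩ VSf b := by
  have hρσ : ρ ≤ σ := (mem_meets hρ).prop.1.trans ha
  have hsub : VSf a ∩ VSf b ⊆ VSf σ :=
    (Finset.inter_subset_left).trans (VSf_mono ha)
  obtain ⟨w, hwσ, hwV⟩ := exists_le_VSf_eq hS hsub
  have hwa : w ≤ a := le_of_VSf_subset hS hwσ ha (hwV ▸ Finset.inter_subset_left)
  have hwb : w ≤ b := le_of_VSf_subset hS hwσ hb (hwV ▸ Finset.inter_subset_right)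
  have hρw : ρ ≤ w := by
    refine le_of_VSf_subset hS hρσ hwσ ?_
    rw [hwV]
    exact Finset.subset_inter (VSf_mono (mem_meets hρ).prop.1) (VSf_mono (mem_meets hρ).prop.2)
  have : ρ = w := le_antisymm hρw ((mem_meets hρ).2 ⟨hwa, hwb⟩ hρw)
  exact ⟨hρσ, this ▸ hwV⟩

lemma joins_eq_empty_of_VSf_eq {η τ : α} (hne : η ≠ τ) (hV : VSf η = VSf τ) :
    joins η τ = ∅ := by
  rw [Set.eq_empty_iff_forall_notMem]
  intro ξ hξ
  exact hne (eq_of_VSf_eq hS ((mem_joins hξ).prop.1) ((mem_joins hξ).prop.2) hV)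

noncomputable def fmk : MvPolynomial α ℤ →+* faceRing ℤ α := Ideal.Quotient.mk (straightening ℤ α)

omit hS in
lemma fmk_X_bot : fmk (X (⊥:α) : MvPolynomial α ℤ) = 1 := by
  have h : (X ⊥ - 1 : MvPolynomial α ℤ) ∈ straightening ℤ α := by
    apply Ideal.subset_span; left; left; rfl
  have h2 := Ideal.Quotient.eq_zero_iff_mem.mpr h
  rw [show ((Ideal.Quotient.mk (straightening ℤ α)) (X ⊥ - 1) : faceRing ℤ α)
      = fmk (X ⊥ - 1) from rfl, map_sub, map_one, sub_eq_zero] at h2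
  exact h2

omit hS in
lemma fmk_mul_of_joins_empty {a b : α} (h : joins a b = ∅) :
    fmk (X a * X b : MvPolynomial α ℤ) = 0 := by
  apply Ideal.Quotient.eq_zero_iff_mem.mpr
  apply Ideal.subset_span
  left; right
  exact ⟨a, b, h, rfl⟩

omit hS in
lemma fmk_mul_of_meets {a b ρ : α} (hρ : ρ ∈ meets a b) (hne : (joins a b).Nonempty) :
    fmk (X a * X b : MvPolynomial α ℤ) =
      fmk (X ρ) * ∑ η ∈ (Set.toFinite (joins a b)).toFinset, fmk (X η) := by
  have h : (X a * X b - X ρ * ∑ η ∈ (Set.toFinite (joins a b)).toFinset, X η : MvPolynomial α ℤ)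
      ∈ straightening ℤ α := by
    apply Ideal.subset_span; right; exact ⟨a, b, ρ, hρ, hne, rfl⟩
  have h2 := Ideal.Quotient.eq_zero_iff_mem.mpr h
  rw [show ((Ideal.Quotient.mk (straightening ℤ α)) (X a * X b - X ρ * ∑ η ∈ (Set.toFinite (joins a b)).toFinset, X η) : faceRing ℤ α)
      = fmk (X a * X b - X ρ * ∑ η ∈ (Set.toFinite (joins a b)).toFinset, X η) from rfl,
    map_sub, sub_eq_zero] at h2
  rw [map_mul, map_mul, map_sum] at h2
  rw [map_mul]
  exact h2

omit hS in
lemma fmk_X_mul_X_atom {η j : α} (hj : IsAtom j) (hjη : ¬ j ≤ η) :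
    fmk (X η * X j : MvPolynomial α ℤ)
      = ∑ ξ ∈ (Set.toFinite (joins η j)).toFinset, fmk (X ξ) := by
  rcases Set.eq_empty_or_nonempty (joins η j) with h | h
  · rw [fmk_mul_of_joins_empty h]
    have he : (Set.toFinite (joins η j)).toFinset = ∅ := by simp [h]
    rw [he, Finset.sum_empty]
  · rw [fmk_mul_of_meets (bot_mem_meets hj hjη) h, fmk_X_bot, one_mul]

lemma filter_insert_eq_biUnion {W : Finset α} {j : α}
    (hj : IsAtom j) (hjW : j ∉ W) :
    Finset.univ.filter (fun ξ : α => VSf ξ = insert j W) =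
      (Finset.univ.filter (fun η : α => VSf η = W)).biUnion
        (fun η => (Set.toFinite (joins η j)).toFinset) := by
  ext ξ
  simp only [Finset.mem_filter, Finset.mem_univ, true_and, Finset.mem_biUnion,
    Set.Finite.mem_toFinset]
  constructor
  · intro hV
    have hsub : W ⊆ VSf ξ := by rw [hV]; exact Finset.subset_insert j W
    obtain ⟨η, hηξ, hηV⟩ := exists_le_VSf_eq hS hsub
    have hjξ : j ≤ ξ := (mem_VSf.mp (by rw [hV]; exact Finset.mem_insert_self j W)).2
    refine ⟨η, hηV, ⟨⟨hηξ, hjξ⟩, ?_⟩⟩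
    intro y hy hyξ
    refine le_of_VSf_subset hS le_rfl hyξ ?_
    rw [hV]
    exact Finset.insert_subset (mem_VSf.mpr ⟨hj, hy.2⟩) (hηV ▸ VSf_mono hy.1)
  · rintro ⟨η, hηV, hξ⟩
    have hηξ : η ≤ ξ := (mem_joins hξ).prop.1
    have hjξ : j ≤ ξ := (mem_joins hξ).prop.2
    have hsub2 : insert j W ⊆ VSf ξ :=
      Finset.insert_subset (mem_VSf.mpr ⟨hj, hjξ⟩) (hηV ▸ VSf_mono hηξ)
    obtain ⟨u, huξ, huV⟩ := exists_le_VSf_eq hS hsub2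
    have hηu : η ≤ u := by
      refine le_of_VSf_subset hS (hηξ) (huξ) ?_
      rw [hηV, huV]; exact Finset.subset_insert j W
    have hju : j ≤ u := (mem_VSf.mp (by rw [huV]; exact Finset.mem_insert_self j W)).2
    have hξu : ξ ≤ u := (mem_joins hξ).2 ⟨hηu, hju⟩ huξ
    exact le_antisymm (huV ▸ VSf_mono hξu) hsub2

lemma fmk_prod_atoms (W : Finset α) (hW : ∀ j ∈ W, IsAtom j) :
    fmk (∏ j ∈ W, X j : MvPolynomial α ℤ) =
      ∑ η ∈ Finset.univ.filter (fun η : α => VSf η = W), fmk (X η) := by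
  induction W using Finset.induction_on with
  | empty =>
      have hset : Finset.univ.filter (fun η : α => VSf η = ∅) = {⊥} := by
        ext η
        simp only [Finset.mem_filter, Finset.mem_univ, true_and, Finset.mem_singleton]
        constructor
        · intro h
          by_contra hne
          obtain ⟨j, hj, hjη⟩ := exists_atom_le hS hne
          have hmem : j ∈ VSf η := mem_VSf.mpr ⟨hj, hjη⟩
          rw [h] at hmem; exact absurd hmem (Finset.notMem_empty j)
        · rintro rfl; exact VSf_bot
      rw [hset, Finset.prod_empty, map_one, Finset.sum_singleton, fmk_X_bot]
  | @insert j W hjW ih =>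
      have hj : IsAtom j := hW j (Finset.mem_insert_self j W)
      have hWa : ∀ j' ∈ W, IsAtom j' := fun j' h => hW j' (Finset.mem_insert_of_mem h)
      rw [Finset.prod_insert hjW, map_mul, ih hWa, Finset.mul_sum]
      have hstep : ∀ η ∈ Finset.univ.filter (fun η : α => VSf η = W),
          fmk (X j : MvPolynomial α ℤ) * fmk (X η)
            = ∑ ξ ∈ (Set.toFinite (joins η j)).toFinset, fmk (X ξ) := by
        intro η hη
        have hηV : VSf η = W := (Finset.mem_filter.mp hη).2
        have hjη : ¬ j ≤ η := fun hle => hjW (hηV ▸ mem_VSf.mpr ⟨hj, hle⟩)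
        rw [← map_mul, mul_comm, fmk_X_mul_X_atom hj hjη]
      rw [Finset.sum_congr rfl hstep, filter_insert_eq_biUnion hS hj hjW,
        Finset.sum_biUnion]
      intro η hη η' hη' hne
      simp only [Finset.coe_filter, Set.mem_setOf_eq, Finset.mem_univ, true_and] at hη hη'
      apply Finset.disjoint_left.mpr
      intro ξ hξ hξ'
      rw [Set.Finite.mem_toFinset] at hξ hξ'
      exact hne (eq_of_VSf_eq hS ((mem_joins hξ).prop.1) ((mem_joins hξ').prop.1)
        (hη.trans hη'.symm))

lemma fmk_prod_eq_zero_of_nonface {W : Finset α} (hW : ∀ j ∈ W, IsAtom j)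
    (h : ∀ σ : α, ¬ ∀ j ∈ W, j ≤ σ) :
    fmk (∏ j ∈ W, X j : MvPolynomial α ℤ) = 0 := by
  rw [fmk_prod_atoms hS W hW]
  have hempty : Finset.univ.filter (fun η : α => VSf η = W) = ∅ := by
    ext η
    simp only [Finset.mem_filter, Finset.mem_univ, true_and, Finset.notMem_empty, iff_false]
    intro hV
    exact h η (fun j hj => (mem_VSf.mp (hV ▸ hj)).2)
  rw [hempty, Finset.sum_empty]

lemma fmk_X_sq (τ : α) :
    fmk (X τ : MvPolynomial α ℤ) ^ 2
      = fmk (∏ j ∈ VSf τ, X j : MvPolynomial α ℤ) * fmk (X τ) := by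
  rw [fmk_prod_atoms hS (VSf τ) (fun j hj => (mem_VSf.mp hj).1), Finset.sum_mul]
  rw [Finset.sum_eq_single_of_mem τ (by simp only [Finset.mem_filter, Finset.mem_univ, true_and])]
  · rw [sq]
  · intro η hη hne
    have hηV : VSf η = VSf τ := (Finset.mem_filter.mp hη).2
    rw [← map_mul, fmk_mul_of_joins_empty (joins_eq_empty_of_VSf_eq hS hne hηV)]

abbrev Vt (σ : α) := {j : α // IsAtom j ∧ j ≤ σ}

noncomputable def resMap (σ : α) : MvPolynomial α ℤ →ₐ[ℤ] MvPolynomial (Vt σ) ℤ :=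
  aeval (fun τ => if τ ≤ σ then ∏ j : Vt σ, (if (j : α) ≤ τ then X j else 1) else 0)

omit hS in
lemma resMap_X (σ τ : α) :
    resMap σ (X τ : MvPolynomial α ℤ)
      = if τ ≤ σ then ∏ j : Vt σ, (if (j : α) ≤ τ then (X j : MvPolynomial (Vt σ) ℤ) else 1)
        else 0 :=
  aeval_X _ τ

omit hS in
lemma resMap_X_atom_le {σ j : α} (hj : IsAtom j) (hle : j ≤ σ) :
    resMap σ (X j : MvPolynomial α ℤ) = X (⟨j, hj, hle⟩ : Vt σ) := by
  rw [resMap_X, if_pos hle]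
  rw [Finset.prod_eq_single_of_mem (⟨j, hj, hle⟩ : Vt σ) (Finset.mem_univ _)]
  · rw [if_pos le_rfl]
  · intro j' _ hne
    apply if_neg
    intro hle'
    rcases hj.le_iff.mp hle' with h | h
    · exact j'.2.1.1 h
    · exact hne (Subtype.ext h)

omit hS in
lemma resMap_X_not_le {σ τ : α} (h : ¬ τ ≤ σ) :
    resMap σ (X τ : MvPolynomial α ℤ) = 0 := by
  rw [resMap_X, if_neg h]

omit hS in
lemma prod_ite_le_mul {σ a b u ρ : α} (hu : VSf u = VSf a ∪ VSf b)
    (hρ : VSf ρ = VSf a ∩ VSf b) :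
    (∏ j : Vt σ, if (j:α) ≤ a then (X j : MvPolynomial (Vt σ) ℤ) else 1) *
      (∏ j : Vt σ, if (j:α) ≤ b then (X j : MvPolynomial (Vt σ) ℤ) else 1) =
    (∏ j : Vt σ, if (j:α) ≤ u then (X j : MvPolynomial (Vt σ) ℤ) else 1) *
      (∏ j : Vt σ, if (j:α) ≤ ρ then (X j : MvPolynomial (Vt σ) ℤ) else 1) := by
  rw [← Finset.prod_mul_distrib, ← Finset.prod_mul_distrib]
  apply Finset.prod_congr rfl
  intro j _
  have hju : ((j:α) ≤ u) ↔ ((j:α) ≤ a ∨ (j:α) ≤ b) := by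
    constructor
    · intro h
      have : (j:α) ∈ VSf a ∪ VSf b := hu ▸ mem_VSf.mpr ⟨j.2.1, h⟩
      rcases Finset.mem_union.mp this with h' | h'
      · exact Or.inl (mem_VSf.mp h').2
      · exact Or.inr (mem_VSf.mp h').2
    · intro h
      have : (j:α) ∈ VSf u := by
        rw [hu, Finset.mem_union]
        rcases h with h' | h'
        · exact Or.inl (mem_VSf.mpr ⟨j.2.1, h'⟩)
        · exact Or.inr (mem_VSf.mpr ⟨j.2.1, h'⟩)
      exact (mem_VSf.mp this).2
  have hjρ : ((j:α) ≤ ρ) ↔ ((j:α) ≤ a ∧ (j:α) ≤ b) := by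
    constructor
    · intro h
      have : (j:α) ∈ VSf a ∩ VSf b := hρ ▸ mem_VSf.mpr ⟨j.2.1, h⟩
      exact ⟨(mem_VSf.mp (Finset.mem_inter.mp this).1).2,
        (mem_VSf.mp (Finset.mem_inter.mp this).2).2⟩
    · intro h
      have : (j:α) ∈ VSf ρ := by
        rw [hρ, Finset.mem_inter]
        exact ⟨mem_VSf.mpr ⟨j.2.1, h.1⟩, mem_VSf.mpr ⟨j.2.1, h.2⟩⟩
      exact (mem_VSf.mp this).2
  by_cases h1 : (j:α) ≤ a <;> by_cases h2 : (j:α) ≤ b <;>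
    simp [h1, h2, hju, hjρ, mul_comm]

lemma straightening_le_ker (σ : α) :
    straightening ℤ α ≤ RingHom.ker (resMap (α := α) σ) := by
  rw [straightening, Ideal.span_le]
  rintro p hp
  simp only [Set.mem_union, Set.mem_setOf_eq, Set.mem_singleton_iff] at hp
  rw [SetLike.mem_coe, RingHom.mem_ker]
  rcases hp with (rfl | ⟨a, b, hab, rfl⟩) | ⟨a, b, ρ, hρ, hne, rfl⟩
  · rw [map_sub, map_one, resMap_X, if_pos bot_le]
    rw [Finset.prod_eq_one (fun j _ => if_neg (fun h => j.2.1.1 (le_bot_iff.mp h)))]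
    exact sub_self 1
  · rw [map_mul]
    by_cases haσ : a ≤ σ
    · by_cases hbσ : b ≤ σ
      · obtain ⟨u, hu, -, -, -⟩ := exists_join hS haσ hbσ
        rw [hab] at hu
        exact absurd hu (Set.notMem_empty u)
      · rw [resMap_X_not_le hbσ, mul_zero]
    · rw [resMap_X_not_le haσ, zero_mul]
  · by_cases haσ : a ≤ σ
    · by_cases hbσ : b ≤ σ
      · obtain ⟨u, hu, huσ, huV, huniq⟩ := exists_join hS haσ hbσ
        obtain ⟨hρσ, hρV⟩ := meets_spec hS haσ hbσ hρ
        rw [map_sub, map_mul, map_mul, map_sum, sub_eq_zero]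
        have hsum : ∑ η ∈ (Set.toFinite (joins a b)).toFinset, resMap σ (X η : MvPolynomial α ℤ)
            = resMap σ (X u) := by
          apply Finset.sum_eq_single_of_mem u ((Set.toFinite (joins a b)).mem_toFinset.mpr hu)
          intro η hη hneη
          apply resMap_X_not_le
          intro hησ
          exact hneη (huniq η ((Set.toFinite (joins a b)).mem_toFinset.mp hη) hησ)
        rw [hsum, resMap_X, resMap_X, resMap_X, resMap_X,
          if_pos haσ, if_pos hbσ, if_pos huσ, if_pos hρσ]
        rw [prod_ite_le_mul huV hρV, mul_comm]
      · rw [map_sub, map_mul, map_mul, map_sum, resMap_X_not_le hbσ, mul_zero, zero_sub,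
          neg_eq_zero]
        have hsum : ∑ η ∈ (Set.toFinite (joins a b)).toFinset, resMap σ (X η : MvPolynomial α ℤ)
            = 0 := by
          apply Finset.sum_eq_zero
          intro η hη
          apply resMap_X_not_le
          intro hησ
          exact hbσ ((mem_joins ((Set.toFinite (joins a b)).mem_toFinset.mp hη)).prop.2.trans hησ)
        rw [hsum, mul_zero]
    · rw [map_sub, map_mul, map_mul, map_sum, resMap_X_not_le haσ, zero_mul, zero_sub,
        neg_eq_zero]
      have hsum : ∑ η ∈ (Set.toFinite (joins a b)).toFinset, resMap σ (X η : MvPolynomial α ℤ)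
          = 0 := by
        apply Finset.sum_eq_zero
        intro η hη
        apply resMap_X_not_le
        intro hησ
        exact haσ ((mem_joins ((Set.toFinite (joins a b)).mem_toFinset.mp hη)).prop.1.trans hησ)
      rw [hsum, mul_zero]

noncomputable def resQ (σ : α) : faceRing ℤ α →ₐ[ℤ] MvPolynomial (Vt σ) ℤ :=
  Ideal.Quotient.liftₐ (straightening ℤ α) (resMap σ)
    (fun a ha => straightening_le_ker hS σ ha)

lemma resQ_mk (σ : α) (p : MvPolynomial α ℤ) : resQ hS σ (fmk p) = resMap σ p := by
  rw [resQ, fmk]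
  rfl

omit hS in
lemma rename_resMap_X_atom {σ j : α} (hj : IsAtom j) :
    rename (Subtype.val : Vt σ → α) (resMap σ (X j : MvPolynomial α ℤ))
      = if j ≤ σ then X j else 0 := by
  by_cases h : j ≤ σ
  · rw [resMap_X_atom_le hj h, rename_X, if_pos h]
  · rw [resMap_X_not_le h, map_zero, if_neg h]

omit hS in
lemma rename_resMap_C {σ : α} (c : ℤ) :
    rename (Subtype.val : Vt σ → α) (resMap σ (C c : MvPolynomial α ℤ)) = C c := by
  have h := RingHom.ext_int
    (((rename (Subtype.val : Vt σ → α)).toRingHom.comp (resMap σ).toRingHom).comp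
      (C : ℤ →+* MvPolynomial α ℤ)) (C : ℤ →+* MvPolynomial α ℤ)
  have := RingHom.congr_fun h c
  simpa using this

omit hS in
lemma rename_resMap_monomial {σ : α} {m : α →₀ ℕ} (hm : ∀ j ∈ m.support, IsAtom j) (c : ℤ) :
    rename (Subtype.val : Vt σ → α) (resMap σ (monomial m c))
      = if ∀ j ∈ m.support, j ≤ σ then monomial m c else 0 := by
  rw [monomial_eq]
  rw [map_mul, map_mul, rename_resMap_C]
  have hprod : rename (Subtype.val : Vt σ → α)
      (resMap σ (m.prod fun n e => (X n : MvPolynomial α ℤ) ^ e))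
      = if ∀ j ∈ m.support, j ≤ σ then (m.prod fun n e => (X n : MvPolynomial α ℤ) ^ e)
        else 0 := by
    have hpr : (m.prod fun n e => (X n : MvPolynomial α ℤ) ^ e)
        = ∏ j ∈ m.support, X j ^ m j := rfl
    rw [hpr, map_prod, map_prod]
    by_cases hcond : ∀ j ∈ m.support, j ≤ σ
    · rw [if_pos hcond]
      apply Finset.prod_congr rfl
      intro j hj
      rw [map_pow, map_pow, rename_resMap_X_atom (hm j hj), if_pos (hcond j hj)]
    · rw [if_neg hcond]
      push_neg at hcond
      obtain ⟨j0, hj0, hj0σ⟩ := hcond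
      apply Finset.prod_eq_zero hj0
      rw [map_pow, map_pow, rename_resMap_X_atom (hm j0 hj0), if_neg hj0σ]
      exact zero_pow (Finsupp.mem_support_iff.mp hj0)
  rw [hprod]
  split_ifs
  · rfl
  · exact mul_zero _

lemma fmk_monomial_nonface {m : α →₀ ℕ} (hm : ∀ j ∈ m.support, IsAtom j)
    (h : ∀ σ : α, ¬ ∀ j ∈ m.support, j ≤ σ) (c : ℤ) :
    fmk (monomial m c : MvPolynomial α ℤ) = 0 := by
  have hfac : (monomial m c : MvPolynomial α ℤ)
      = C c * ((∏ j ∈ m.support, X j) * ∏ j ∈ m.support, X j ^ (m j - 1)) := by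
    rw [monomial_eq,
      (rfl : (m.prod fun n e => (X n : MvPolynomial α ℤ) ^ e) = ∏ j ∈ m.support, X j ^ m j),
      ← Finset.prod_mul_distrib]
    congr 1
    apply Finset.prod_congr rfl
    intro j hj
    rw [← pow_succ',
      Nat.sub_add_cancel (Nat.one_le_iff_ne_zero.mpr (Finsupp.mem_support_iff.mp hj))]
  rw [hfac, map_mul, map_mul, fmk_prod_eq_zero_of_nonface hS hm h, zero_mul, mul_zero]

lemma fmk_eq_zero_of_res {q : MvPolynomial α ℤ}
    (hq : ∀ m ∈ q.support, ∀ j ∈ m.support, IsAtom j)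
    (h0 : ∀ σ : α, resMap σ q = 0) : fmk q = 0 := by
  conv_lhs => rw [q.as_sum]
  rw [map_sum]
  apply Finset.sum_eq_zero
  intro m hm
  by_cases hface : ∃ σ : α, ∀ j ∈ m.support, j ≤ σ
  · obtain ⟨σ₀, hσ₀⟩ := hface
    have h1 : ∑ m' ∈ q.support,
        (if ∀ j ∈ m'.support, j ≤ σ₀ then monomial m' (coeff m' q) else 0)
        = (0 : MvPolynomial α ℤ) := by
      have h2 : rename (Subtype.val : Vt σ₀ → α)
          (resMap σ₀ (∑ m' ∈ q.support, monomial m' (coeff m' q))) = 0 := by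
        rw [← q.as_sum, h0 σ₀, map_zero]
      calc ∑ m' ∈ q.support,
            (if ∀ j ∈ m'.support, j ≤ σ₀ then monomial m' (coeff m' q) else 0)
          = ∑ m' ∈ q.support,
            rename (Subtype.val : Vt σ₀ → α) (resMap σ₀ (monomial m' (coeff m' q))) :=
            Finset.sum_congr rfl
              (fun m' hm' => (rename_resMap_monomial (hq m' hm') (coeff m' q)).symm)
        _ = rename (Subtype.val : Vt σ₀ → α)
            (resMap σ₀ (∑ m' ∈ q.support, monomial m' (coeff m' q))) := by
            rw [map_sum, map_sum]
        _ = 0 := h2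
    have h3 := congrArg (coeff m) h1
    rw [coeff_sum, coeff_zero] at h3
    rw [Finset.sum_eq_single_of_mem m hm (fun m' h' hne => by
      split_ifs with hc
      · rw [coeff_monomial]
        exact if_neg hne
      · exact coeff_zero m)] at h3
    rw [if_pos hσ₀, coeff_monomial, if_pos rfl] at h3
    rw [h3, monomial_zero, map_zero]
  · push_neg at hface
    refine fmk_monomial_nonface hS (hq m hm) (fun σ hall => ?_) (coeff m q)
    obtain ⟨j, hj, hnle⟩ := hface σ
    exact hnle (hall j hj)

omit hS in
lemma linear_span_extract {ι' : Type} [Fintype ι'] [DecidableEq ι'] {n : ℕ}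
    (lam' : Fin n → ι' → ℤ) (j0 : ι')
    (h : (X j0 : MvPolynomial ι' ℤ) ∈ Ideal.span (Set.range fun i : Fin n =>
      (∑ j' : ι', C (lam' i j') * X j' : MvPolynomial ι' ℤ))) :
    ∃ d : Fin n → ℤ, (X j0 : MvPolynomial ι' ℤ)
      = ∑ i : Fin n, C (d i) * ∑ j' : ι', C (lam' i j') * X j' := by
  rw [Ideal.mem_span_range_iff_exists_fun] at h
  obtain ⟨c, hc⟩ := h
  refine ⟨fun i => constantCoeff (c i), ?_⟩
  have hcoef : ∀ j' : ι', (∑ i : Fin n, constantCoeff (c i) * lam' i j')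
      = if j0 = j' then 1 else 0 := by
    intro j'
    have h2 := congrArg (coeff (Finsupp.single j' 1)) hc
    rw [coeff_X', coeff_sum] at h2
    have h3 : ∀ i : Fin n,
        coeff (Finsupp.single j' 1) (c i * ∑ j'' : ι', C (lam' i j'') * X j'')
          = constantCoeff (c i) * lam' i j' := by
      intro i
      rw [Finset.mul_sum, coeff_sum]
      have h4 : ∀ j'' : ι', coeff (Finsupp.single j' 1) (c i * (C (lam' i j'') * X j''))
          = if j'' = j' then lam' i j'' * constantCoeff (c i) else 0 := by
        intro j''
        rw [mul_left_comm, coeff_C_mul, coeff_mul_X',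
          Finsupp.support_single_ne_zero j' one_ne_zero]
        by_cases hjj : j'' = j'
        · subst hjj
          rw [if_pos (Finset.mem_singleton_self j''), if_pos rfl, tsub_self]
          rw [← constantCoeff_eq]
        · rw [if_neg (by simp [hjj]), if_neg hjj, mul_zero]
      rw [Finset.sum_congr rfl (fun j'' _ => h4 j''), Finset.sum_ite_eq' Finset.univ j'
        (fun j'' => lam' i j'' * constantCoeff (c i)), if_pos (Finset.mem_univ j'),
        mul_comm]
    rw [Finset.sum_congr rfl (fun i _ => h3 i)] at h2
    have hsingle : (Finsupp.single j0 1 = Finsupp.single j' (1:ℕ)) ↔ j0 = j' :=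
      Finsupp.single_left_inj one_ne_zero
    simp only [hsingle] at h2
    exact h2
  have hswap : ∑ i : Fin n, C (constantCoeff (c i)) * ∑ j' : ι', C (lam' i j') * X j'
      = ∑ j' : ι', C (∑ i : Fin n, constantCoeff (c i) * lam' i j') * X j' := by
    simp_rw [Finset.mul_sum]
    rw [Finset.sum_comm]
    apply Finset.sum_congr rfl
    intro j' _
    simp_rw [← mul_assoc, ← C_mul]
    rw [← Finset.sum_mul, ← map_sum]
  rw [hswap]
  have hfin : ∀ j' : ι', C (∑ i : Fin n, constantCoeff (c i) * lam' i j') * X j'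
      = if j0 = j' then (X j' : MvPolynomial ι' ℤ) else 0 := by
    intro j'
    rw [hcoef j']
    split_ifs with hh
    · rw [map_one, one_mul]
    · rw [map_zero, zero_mul]
  rw [Finset.sum_congr rfl (fun j' _ => hfin j'),
    Finset.sum_ite_eq Finset.univ j0 (fun j' => (X j' : MvPolynomial ι' ℤ)),
    if_pos (Finset.mem_univ j0)]

omit hS in
lemma resMap_linear (σ : α) (g : α → ℤ) :
    resMap σ (∑ j ∈ Finset.univ.filter (fun j : α => IsAtom j), C (g j) * X j)
      = ∑ j : Vt σ, C (g j.1) * X j := by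
  apply MvPolynomial.rename_injective (Subtype.val : Vt σ → α) Subtype.val_injective
  have hL : rename (Subtype.val : Vt σ → α)
      (resMap σ (∑ j ∈ Finset.univ.filter (fun j : α => IsAtom j), C (g j) * X j))
      = ∑ j ∈ Finset.univ.filter (fun j : α => IsAtom j),
          (if j ≤ σ then C (g j) * X j else 0) := by
    rw [map_sum, map_sum]
    apply Finset.sum_congr rfl
    intro j hj
    have hja : IsAtom j := by simpa using hj
    rw [map_mul, map_mul, rename_resMap_C, rename_resMap_X_atom hja, mul_ite, mul_zero]
  have hR : rename (Subtype.val : Vt σ → α) (∑ j : Vt σ, C (g j.1) * X j)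
      = ∑ j ∈ Finset.univ.filter (fun j : α => IsAtom j ∧ j ≤ σ), C (g j) * X j := by
    rw [map_sum]
    rw [Finset.sum_congr rfl (fun (j : Vt σ) (_ : j ∈ Finset.univ) => by
      rw [map_mul, rename_C, rename_X] :
      ∀ j ∈ Finset.univ, rename (Subtype.val : Vt σ → α) (C (g j.1) * X j)
        = C (g j.1) * X j.1)]
    exact (Finset.sum_subtype _ (fun x => by simp) (fun x => C (g x) * X x)).symm
  rw [hL, hR, ← Finset.sum_filter, Finset.filter_filter]

end FRAux

/-- if the degree-two elements `t_i = ∑_j λ_{ij} v_j` of `ℤ[S]`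
restrict, for every `σ ∈ S`, to generators of the positive-degree ideal of the
polynomial ring `ℤ[σ] = ℤ[v_i : i ∈ V(σ)]`, then `ℤ[S]` is a finitely generated
module over `ℤ[t₁,…,t_n]`. -/
theorem faceRing_module_finite_of_restrictions_generate {α : Type}
    [Fintype α] [PartialOrder α] [OrderBot α] [DecidableEq α]
    [DecidablePred (IsAtom (α := α))] [DecidableRel ((· ≤ ·) : α → α → Prop)]
    (hS : IsSimplicialPoset α) (n : ℕ)
    (hn : Finset.univ.sup (srank : α → ℕ) = n)
    (lam : Fin n → α → ℤ)
    (t : Fin n → faceRing ℤ α)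
    (ht : ∀ i : Fin n, t i = Ideal.Quotient.mk (straightening ℤ α)
      (∑ j ∈ Finset.univ.filter (fun j : α => IsAtom j), C (lam i j) * X j))
    (hgen : ∀ σ : α,
      Ideal.span (Set.range fun i : Fin n =>
          (∑ j : {j : α // IsAtom j ∧ j ≤ σ}, C (lam i j.1) * X j :
            MvPolynomial {j : α // IsAtom j ∧ j ≤ σ} ℤ)) =
        Ideal.span (Set.range (X : {j : α // IsAtom j ∧ j ≤ σ} →
          MvPolynomial {j : α // IsAtom j ∧ j ≤ σ} ℤ))) :
    Module.Finite (Algebra.adjoin ℤ (Set.range t)) (faceRing ℤ α) := by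
  classical
  set A : Subalgebra ℤ (faceRing ℤ α) := Algebra.adjoin ℤ (Set.range t) with hA
  set B : Subalgebra ℤ (faceRing ℤ α) :=
    (MvPolynomial.supported ℤ {j : α | IsAtom j}).map
      (Ideal.Quotient.mkₐ ℤ (straightening ℤ α)) with hB
  have hmk_eq : ∀ p : MvPolynomial α ℤ,
      Ideal.Quotient.mkₐ ℤ (straightening ℤ α) p = FRAux.fmk p := fun p => rfl
  have hpoly_mem : ∀ g : α → ℤ,
      (∑ j ∈ Finset.univ.filter (fun j : α => IsAtom j), C (g j) * X j)
        ∈ MvPolynomial.supported ℤ {j : α | IsAtom j} := by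
    intro g
    apply Subalgebra.sum_mem
    intro j hj
    have hja : IsAtom j := by simpa using hj
    rw [← smul_eq_C_mul]
    exact Subalgebra.smul_mem _ (Algebra.subset_adjoin (Set.mem_image_of_mem (X : α → MvPolynomial α ℤ) hja)) _
  have hXB : ∀ j : α, IsAtom j → FRAux.fmk (X j : MvPolynomial α ℤ) ∈ B := by
    intro j hj
    exact ⟨X j, Algebra.subset_adjoin (Set.mem_image_of_mem (X : α → MvPolynomial α ℤ) hj), rfl⟩
  have htmemB : ∀ i, t i ∈ B := by
    intro i
    rw [ht i]
    exact ⟨_, hpoly_mem (lam i), rfl⟩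
  have hAB : A ≤ B := Algebra.adjoin_le (by rintro x ⟨i, rfl⟩; exact htmemB i)
  have hBzero : ∀ x ∈ B, (∀ σ : α, FRAux.resQ hS σ x = 0) → x = 0 := by
    intro x hx h0
    rw [hB, Subalgebra.mem_map] at hx
    obtain ⟨q, hq, rfl⟩ := hx
    rw [hmk_eq]
    apply FRAux.fmk_eq_zero_of_res hS
    · intro m hm j hjm
      exact (MvPolynomial.mem_supported.mp hq) ((MvPolynomial.mem_vars j).mpr ⟨m, hm, hjm⟩)
    · intro σ
      have h1 := h0 σ
      rw [hmk_eq, FRAux.resQ_mk hS σ q] at h1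
      exact h1
  have hrest : ∀ (i : Fin n) (σ : α), FRAux.resQ hS σ (t i)
      = ∑ j : {j : α // IsAtom j ∧ j ≤ σ}, C (lam i j.1) * X j := by
    intro i σ
    rw [ht i, show (Ideal.Quotient.mk (straightening ℤ α)
      (∑ j ∈ Finset.univ.filter (fun j : α => IsAtom j), C (lam i j) * X j) : faceRing ℤ α)
      = FRAux.fmk (∑ j ∈ Finset.univ.filter (fun j : α => IsAtom j), C (lam i j) * X j)
      from rfl, FRAux.resQ_mk, FRAux.resMap_linear]
  have hvar : ∀ (σ : α) (j : {j : α // IsAtom j ∧ j ≤ σ}),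
      ∃ a ∈ A, FRAux.resQ hS σ a = X j := by
    intro σ j
    have hmem : (X j : MvPolynomial {j : α // IsAtom j ∧ j ≤ σ} ℤ)
        ∈ Ideal.span (Set.range fun i : Fin n =>
          (∑ j' : {j : α // IsAtom j ∧ j ≤ σ}, C (lam i j'.1) * X j' :
            MvPolynomial {j : α // IsAtom j ∧ j ≤ σ} ℤ)) := by
      rw [hgen σ]
      exact Ideal.subset_span ⟨j, rfl⟩
    obtain ⟨d, hd⟩ := @FRAux.linear_span_extract {j : α // IsAtom j ∧ j ≤ σ} _ _ n (fun i j' => lam i j'.1) j hmem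
    refine ⟨∑ i : Fin n, d i • t i, ?_, ?_⟩
    · exact Subalgebra.sum_mem _ (fun i _ =>
        Subalgebra.smul_mem _ (Algebra.subset_adjoin (Set.mem_range_self i)) _)
    · rw [map_sum]
      rw [Finset.sum_congr rfl (fun i (_ : i ∈ Finset.univ) => by
        rw [map_smul, hrest i σ, smul_eq_C_mul] :
        ∀ i ∈ Finset.univ, FRAux.resQ hS σ (d i • t i)
          = C (d i) * ∑ j' : {j : α // IsAtom j ∧ j ≤ σ}, C (lam i j'.1) * X j')]
      exact hd.symm
  have hatom_int : ∀ j : α, IsAtom j →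
      IsIntegral ↥A (FRAux.fmk (X j : MvPolynomial α ℤ)) := by
    intro j hj
    have hex : ∀ σ : α, ∃ a, a ∈ A ∧
        FRAux.resQ hS σ a = FRAux.resQ hS σ (FRAux.fmk (X j)) := by
      intro σ
      by_cases hle : j ≤ σ
      · obtain ⟨a, haA, haeq⟩ := hvar σ ⟨j, hj, hle⟩
        refine ⟨a, haA, ?_⟩
        rw [haeq, FRAux.resQ_mk, FRAux.resMap_X_atom_le hj hle]
      · refine ⟨0, zero_mem _, ?_⟩
        rw [map_zero, FRAux.resQ_mk, FRAux.resMap_X_not_le hle]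
    choose a haA haeq using hex
    have hPB : (∏ σ : α, (FRAux.fmk (X j : MvPolynomial α ℤ) - a σ)) = 0 := by
      apply hBzero
      · exact Subalgebra.prod_mem B (fun σ _ =>
          Subalgebra.sub_mem B (hXB j hj) (hAB (haA σ)))
      · intro σ'
        rw [map_prod]
        apply Finset.prod_eq_zero (Finset.mem_univ σ')
        rw [map_sub, haeq σ', sub_self]
    show ∃ p : Polynomial ↥A, p.Monic ∧ Polynomial.eval₂ (algebraMap ↥A (faceRing ℤ α))
      (FRAux.fmk (X j : MvPolynomial α ℤ)) p = 0
    refine ⟨∏ σ : α, (Polynomial.X - Polynomial.C (⟨a σ, haA σ⟩ : ↥A)),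
      Polynomial.monic_prod_of_monic _ _ (fun σ _ => Polynomial.monic_X_sub_C _), ?_⟩
    have heval : Polynomial.aeval (FRAux.fmk (X j : MvPolynomial α ℤ))
        (∏ σ : α, (Polynomial.X - Polynomial.C (⟨a σ, haA σ⟩ : ↥A))) = 0 := by
      rw [map_prod, ← hPB]
      apply Finset.prod_congr rfl
      intro σ _
      rw [map_sub, Polynomial.aeval_X, Polynomial.aeval_C]
      rfl
    rw [Polynomial.aeval_def] at heval
    exact heval
  have hgen_int : ∀ τ : α, FRAux.fmk (X τ : MvPolynomial α ℤ)
      ∈ integralClosure ↥A (faceRing ℤ α) := by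
    intro τ
    have hc : FRAux.fmk (∏ j ∈ FRAux.VSf τ, X j : MvPolynomial α ℤ)
        ∈ integralClosure ↥A (faceRing ℤ α) := by
      rw [map_prod]
      exact Subalgebra.prod_mem _ (fun j hj => hatom_int j (FRAux.mem_VSf.mp hj).1)
    have hint2 : IsIntegral ↥(integralClosure ↥A (faceRing ℤ α))
        (FRAux.fmk (X τ : MvPolynomial α ℤ)) := by
      show ∃ p : Polynomial ↥(integralClosure ↥A (faceRing ℤ α)), p.Monic ∧
        Polynomial.eval₂ (algebraMap ↥(integralClosure ↥A (faceRing ℤ α)) (faceRing ℤ α))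
          (FRAux.fmk (X τ : MvPolynomial α ℤ)) p = 0
      refine ⟨(Polynomial.X - Polynomial.C
          (⟨_, hc⟩ : ↥(integralClosure ↥A (faceRing ℤ α)))) * Polynomial.X,
        ((Polynomial.monic_X_sub_C (R := ↥(integralClosure ↥A (faceRing ℤ α))) _).mul Polynomial.monic_X), ?_⟩
      rw [Polynomial.eval₂_mul, Polynomial.eval₂_sub (S := faceRing ℤ α) (R := ↥(integralClosure ↥A (faceRing ℤ α))), Polynomial.eval₂_X, Polynomial.eval₂_C]
      show (FRAux.fmk (X τ : MvPolynomial α ℤ)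
          - FRAux.fmk (∏ j ∈ FRAux.VSf τ, X j : MvPolynomial α ℤ))
          * FRAux.fmk (X τ : MvPolynomial α ℤ) = 0
      rw [sub_mul, ← sq, FRAux.fmk_X_sq hS τ, sub_self]
    exact (mem_integralClosure_iff ↥A (faceRing ℤ α)).mpr (isIntegral_trans _ hint2)
  have hSrange : Algebra.adjoin ℤ
      (Set.range fun τ : α => FRAux.fmk (X τ : MvPolynomial α ℤ)) = ⊤ := by
    have h1 : (Set.range fun τ : α => FRAux.fmk (X τ : MvPolynomial α ℤ))
        = (Ideal.Quotient.mkₐ ℤ (straightening ℤ α)) ''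
          (Set.range (X : α → MvPolynomial α ℤ)) := by
      rw [← Set.range_comp]; rfl
    rw [h1, ← AlgHom.map_adjoin, MvPolynomial.adjoin_range_X, Algebra.map_top]
    exact (AlgHom.range_eq_top _).mpr (Ideal.Quotient.mkₐ_surjective ℤ _)
  have htop : ∀ x : faceRing ℤ α, x ∈ Algebra.adjoin ↥A
      (Set.range fun τ : α => FRAux.fmk (X τ : MvPolynomial α ℤ)) := by
    intro x
    have h2 : (⊤ : Subalgebra ℤ (faceRing ℤ α)) ≤ Subalgebra.restrictScalars ℤ
        (Algebra.adjoin ↥A (Set.range fun τ : α => FRAux.fmk (X τ : MvPolynomial α ℤ))) := by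
      rw [← hSrange]
      apply Algebra.adjoin_le
      intro y hy
      show y ∈ Subalgebra.restrictScalars ℤ
        (Algebra.adjoin ↥A (Set.range fun τ : α => FRAux.fmk (X τ : MvPolynomial α ℤ)))
      rw [Subalgebra.mem_restrictScalars]
      exact Algebra.subset_adjoin hy
    have h3 := h2 (by trivial : x ∈ (⊤ : Subalgebra ℤ (faceRing ℤ α)))
    rwa [Subalgebra.mem_restrictScalars] at h3
  have hint : Algebra.IsIntegral ↥A (faceRing ℤ α) := by
    rw [← integralClosure_eq_top_iff]
    rw [eq_top_iff]
    intro x _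
    exact Algebra.adjoin_le (by rintro y ⟨τ, rfl⟩; exact hgen_int τ) (htop x)
  have hft : Algebra.FiniteType ↥A (faceRing ℤ α) := by
    refine ⟨⟨Finset.univ.image (fun τ : α => FRAux.fmk (X τ : MvPolynomial α ℤ)), ?_⟩⟩
    rw [Finset.coe_image, Finset.coe_univ, Set.image_univ, eq_top_iff]
    intro x _
    exact htop x
  haveI := hint
  haveI := hft
  exact Algebra.IsIntegral.finite (R := ↥A) (A := faceRing ℤ α)
end

section
/- Let S be a simplicial poset of rank n with m vertices, and let t₁,…,t_n be degree-two elements in Z[S] forming a linear system of parameters (i.e. Z[S] is finitely generated over Z[t₁,…,t_n]). Then for every σ ∈ S, the images s_σ(t₁),…,s_σ(t_n) generate the ideal of positive-degree elements of the polynomial ring Z[σ] = Z[v_i : i ∈ V(σ)]. -/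
open MvPolynomial

set_option linter.unusedSectionVars false
open MvPolynomial
section Comb
open Finset

variable {α : Type} [Fintype α] [PartialOrder α] [OrderBot α] [DecidableEq α]
  [DecidablePred (IsAtom (α := α))] [DecidableRel ((· ≤ ·) : α → α → Prop)]

/-- The image of the variable `v_τ` under the restriction map `s_σ`. -/
noncomputable def phi (σ : α) (τ : α) : MvPolynomial {j : α // IsAtom j ∧ j ≤ σ} ℤ :=
  if τ ≤ σ then
    ∏ j ∈ Finset.univ.filter (fun j : {j : α // IsAtom j ∧ j ≤ σ} => j.1 ≤ τ), X j
  else 0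

theorem phi_bot (σ : α) : phi σ ⊥ = 1 := by
  rw [phi, if_pos bot_le]
  rw [Finset.prod_eq_one]
  intro j hj
  simp only [Finset.mem_filter, le_bot_iff] at hj
  exact absurd hj.2 j.2.1.1

theorem phi_not_le {σ τ : α} (h : ¬ τ ≤ σ) : phi σ τ = 0 := if_neg h

theorem phi_atom (σ : α) (j : {j : α // IsAtom j ∧ j ≤ σ}) : phi σ j.1 = X j := by
  rw [phi, if_pos j.2.2]
  have : Finset.univ.filter (fun i : {j : α // IsAtom j ∧ j ≤ σ} => i.1 ≤ j.1) = {j} := by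
    ext i
    simp only [Finset.mem_filter, Finset.mem_univ, true_and, Finset.mem_singleton]
    constructor
    · intro h
      rcases (j.2.1.le_iff.mp h) with h0 | h0
      · exact absurd h0 i.2.1.1
      · exact Subtype.ext h0
    · rintro rfl; exact le_rfl
  rw [this, Finset.prod_singleton]
end Comb
set_option linter.unusedSectionVars false
section Interval
open MvPolynomial Finset

variable {α : Type} [Fintype α] [PartialOrder α] [OrderBot α] [DecidableEq α]
  [DecidablePred (IsAtom (α := α))] [DecidableRel ((· ≤ ·) : α → α → Prop)]
  {σ : α} {k : ℕ} (e : Set.Icc (⊥ : α) σ ≃o Finset (Fin k))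

theorem e_bot_s12 : e ⟨⊥, by simp⟩ = ∅ := by
  have h : (⟨⊥, by simp⟩ : Set.Icc (⊥ : α) σ) ≤ e.symm ∅ := bot_le
  have := e.le_iff_le.mpr h
  rw [e.apply_symm_apply] at this
  exact Finset.subset_empty.mp this

theorem atom_singleton {j : α} (hj : IsAtom j) (hjs : j ≤ σ) :
    ∃ a : Fin k, e ⟨j, by simp [hjs]⟩ = {a} := by
  have hne : e ⟨j, by simp [hjs]⟩ ≠ ∅ := by
    intro h
    rw [← e_bot_s12 e] at h
    exact hj.1 (congrArg Subtype.val (e.injective h))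
  obtain ⟨a, ha⟩ := Finset.nonempty_iff_ne_empty.mpr hne
  refine ⟨a, ?_⟩
  apply Finset.Subset.antisymm ?_ (Finset.singleton_subset_iff.mpr ha)
  intro b hb
  set y := e.symm {b} with hy
  have hysub : y ≤ ⟨j, by simp [hjs]⟩ := by
    rw [← e.symm_apply_apply ⟨j, by simp [hjs]⟩, hy]
    exact e.symm.monotone (Finset.singleton_subset_iff.mpr hb)
  have : y.1 ≤ j := hysub
  rcases hj.le_iff.mp this with h0 | h0
  · exfalso
    have : y = (⟨⊥, by simp⟩ : Set.Icc (⊥ : α) σ) := Subtype.ext h0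
    have : ({b} : Finset (Fin k)) = ∅ := by
      rw [hy] at this
      have := congrArg e this
      rwa [e.apply_symm_apply, e_bot_s12 e] at this
    simp at this
  · have : y = ⟨j, by simp [hjs]⟩ := Subtype.ext h0
    have hbj : ({b} : Finset (Fin k)) = e ⟨j, by simp [hjs]⟩ := by
      rw [hy] at this
      have := congrArg e this
      rwa [e.apply_symm_apply] at this
    rw [← hbj] at ha
    simp only [Finset.mem_singleton] at ha ⊢; exact ha.symm

theorem atom_le_iff_s12 {j : α} (hj : IsAtom j) (hjs : j ≤ σ) (x : Set.Icc (⊥ : α) σ) :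
    j ≤ x.1 ↔ e ⟨j, by simp [hjs]⟩ ⊆ e x := by
  rw [← Finset.le_iff_subset, e.le_iff_le]
  exact Iff.rfl

end Interval
section Joins
open MvPolynomial Finset

variable {α : Type} [Fintype α] [PartialOrder α] [OrderBot α] [DecidableEq α]
  [DecidablePred (IsAtom (α := α))] [DecidableRel ((· ≤ ·) : α → α → Prop)]
  {σ : α} {k : ℕ} (e : Set.Icc (⊥ : α) σ ≃o Finset (Fin k))
  {τ τ' : α} (hτ : τ ≤ σ) (hτ' : τ' ≤ σ)

/-- The Boolean join of `τ, τ'` inside the interval `[⊥, σ]`. -/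
noncomputable def bjoin : α :=
  (e.symm (e ⟨τ, by simp [hτ]⟩ ∪ e ⟨τ', by simp [hτ']⟩)).1

theorem bjoin_le : bjoin e hτ hτ' ≤ σ := (e.symm _).2.2

theorem e_bjoin : e ⟨bjoin e hτ hτ', by simp [bjoin_le e hτ hτ']⟩ =
    e ⟨τ, by simp [hτ]⟩ ∪ e ⟨τ', by simp [hτ']⟩ := by
  have h : (⟨bjoin e hτ hτ', by simp [bjoin_le e hτ hτ']⟩ : Set.Icc (⊥:α) σ) =
      e.symm (e ⟨τ, by simp [hτ]⟩ ∪ e ⟨τ', by simp [hτ']⟩) := Subtype.ext rfl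
  rw [h, e.apply_symm_apply]

theorem le_bjoin_left : τ ≤ bjoin e hτ hτ' := by
  have h : (⟨τ, by simp [hτ]⟩ : Set.Icc (⊥:α) σ) ≤
      e.symm (e ⟨τ, by simp [hτ]⟩ ∪ e ⟨τ', by simp [hτ']⟩) :=
    e.le_symm_apply.mpr Finset.subset_union_left
  exact h

theorem le_bjoin_right : τ' ≤ bjoin e hτ hτ' := by
  have h : (⟨τ', by simp [hτ']⟩ : Set.Icc (⊥:α) σ) ≤
      e.symm (e ⟨τ, by simp [hτ]⟩ ∪ e ⟨τ', by simp [hτ']⟩) :=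
    e.le_symm_apply.mpr Finset.subset_union_right
  exact h

theorem bjoin_le_of_ub {x : α} (hx : τ ≤ x) (hx' : τ' ≤ x) (hxσ : x ≤ σ) :
    bjoin e hτ hτ' ≤ x := by
  have h1 : e ⟨τ, by simp [hτ]⟩ ∪ e ⟨τ', by simp [hτ']⟩ ⊆ e ⟨x, by simp [hxσ]⟩ :=
    Finset.union_subset (e.le_iff_le.mpr (show (⟨τ, by simp [hτ]⟩ : Set.Icc (⊥:α) σ) ≤ ⟨x, by simp [hxσ]⟩ from hx))
      (e.le_iff_le.mpr (show (⟨τ', by simp [hτ']⟩ : Set.Icc (⊥:α) σ) ≤ ⟨x, by simp [hxσ]⟩ from hx'))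
  have h2 : (e.symm (e ⟨τ, by simp [hτ]⟩ ∪ e ⟨τ', by simp [hτ']⟩)) ≤ ⟨x, by simp [hxσ]⟩ :=
    e.symm_apply_le.mpr h1
  exact h2

theorem bjoin_mem_joins : bjoin e hτ hτ' ∈ joins τ τ' :=
  ⟨⟨le_bjoin_left e hτ hτ', le_bjoin_right e hτ hτ'⟩,
   fun x hx hxw => bjoin_le_of_ub e hτ hτ' hx.1 hx.2 (hxw.trans (bjoin_le e hτ hτ'))⟩

theorem eq_bjoin_of_mem_joins {η : α} (hη : η ∈ joins τ τ') (hησ : η ≤ σ) :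
    η = bjoin e hτ hτ' := by
  have h1 : bjoin e hτ hτ' ≤ η := bjoin_le_of_ub e hτ hτ' hη.1.1 hη.1.2 hησ
  exact le_antisymm (hη.2 ⟨le_bjoin_left e hτ hτ', le_bjoin_right e hτ hτ'⟩ h1) h1
end Joins
section Filters
open MvPolynomial Finset

variable {α : Type} [Fintype α] [PartialOrder α] [OrderBot α] [DecidableEq α]
  [DecidablePred (IsAtom (α := α))] [DecidableRel ((· ≤ ·) : α → α → Prop)]
  {σ : α} {k : ℕ} (e : Set.Icc (⊥ : α) σ ≃o Finset (Fin k))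
  {τ τ' : α} (hτ : τ ≤ σ) (hτ' : τ' ≤ σ)

theorem filter_bjoin :
    Finset.univ.filter (fun j : {j : α // IsAtom j ∧ j ≤ σ} => j.1 ≤ bjoin e hτ hτ') =
      Finset.univ.filter (fun j => j.1 ≤ τ) ∪ Finset.univ.filter (fun j => j.1 ≤ τ') := by
  ext j
  simp only [Finset.mem_filter, Finset.mem_union, Finset.mem_univ, true_and]
  obtain ⟨a, ha⟩ := atom_singleton e j.2.1 j.2.2
  rw [atom_le_iff_s12 e j.2.1 j.2.2 ⟨bjoin e hτ hτ', by simp [bjoin_le e hτ hτ']⟩,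
    atom_le_iff_s12 e j.2.1 j.2.2 ⟨τ, by simp [hτ]⟩, atom_le_iff_s12 e j.2.1 j.2.2 ⟨τ', by simp [hτ']⟩,
    e_bjoin e hτ hτ', ha]
  simp [Finset.singleton_subset_iff]

theorem e_meet {ρ : α} (hρ : ρ ∈ meets τ τ') :
    e ⟨ρ, by simp [hρ.1.1.trans hτ]⟩ = e ⟨τ, by simp [hτ]⟩ ∩ e ⟨τ', by simp [hτ']⟩ := by
  set y := e.symm (e ⟨τ, by simp [hτ]⟩ ∩ e ⟨τ', by simp [hτ']⟩) with hy
  have hyτ : y.1 ≤ τ := e.symm_apply_le.mpr Finset.inter_subset_left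
  have hyτ' : y.1 ≤ τ' := e.symm_apply_le.mpr Finset.inter_subset_right
  have hρy : ρ ≤ y.1 := by
    have : (⟨ρ, by simp [hρ.1.1.trans hτ]⟩ : Set.Icc (⊥:α) σ) ≤ y :=
      e.le_symm_apply.mpr (Finset.subset_inter
        (e.le_iff_le.mpr (show (⟨ρ, _⟩ : Set.Icc (⊥:α) σ) ≤ ⟨τ, by simp [hτ]⟩ from hρ.1.1))
        (e.le_iff_le.mpr (show (⟨ρ, _⟩ : Set.Icc (⊥:α) σ) ≤ ⟨τ', by simp [hτ']⟩ from hρ.1.2)))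
    exact this
  have hyρ : y.1 ≤ ρ := hρ.2 ⟨hyτ, hyτ'⟩ hρy
  have hyy : (⟨ρ, by simp [hρ.1.1.trans hτ]⟩ : Set.Icc (⊥:α) σ) = y :=
    Subtype.ext (le_antisymm hρy hyρ)
  rw [hyy, hy, e.apply_symm_apply]

include e hτ hτ' in
theorem filter_meet {ρ : α} (hρ : ρ ∈ meets τ τ') :
    Finset.univ.filter (fun j : {j : α // IsAtom j ∧ j ≤ σ} => j.1 ≤ ρ) =
      Finset.univ.filter (fun j => j.1 ≤ τ) ∩ Finset.univ.filter (fun j => j.1 ≤ τ') := by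
  ext j
  simp only [Finset.mem_filter, Finset.mem_inter, Finset.mem_univ, true_and]
  obtain ⟨a, ha⟩ := atom_singleton e j.2.1 j.2.2
  rw [atom_le_iff_s12 e j.2.1 j.2.2 ⟨ρ, by simp [hρ.1.1.trans hτ]⟩,
    atom_le_iff_s12 e j.2.1 j.2.2 ⟨τ, by simp [hτ]⟩, atom_le_iff_s12 e j.2.1 j.2.2 ⟨τ', by simp [hτ']⟩,
    e_meet e hτ hτ' hρ, ha]
  simp [Finset.singleton_subset_iff]

theorem phi_mul_eq {ρ : α} (hρ : ρ ∈ meets τ τ') :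
    phi σ τ * phi σ τ' = phi σ ρ * phi σ (bjoin e hτ hτ') := by
  rw [phi, phi, phi, phi, if_pos hτ, if_pos hτ', if_pos (hρ.1.1.trans hτ),
    if_pos (bjoin_le e hτ hτ'), filter_meet e hτ hτ' hρ, filter_bjoin e hτ hτ',
    mul_comm
      (∏ j ∈ Finset.univ.filter (fun j : {j : α // IsAtom j ∧ j ≤ σ} => j.1 ≤ τ) ∩
        Finset.univ.filter (fun j => j.1 ≤ τ'), X j), Finset.prod_union_inter]

end Filters
section Restrict
open MvPolynomial Finset

variable {α : Type} [Fintype α] [PartialOrder α] [OrderBot α] [DecidableEq α]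
  [DecidablePred (IsAtom (α := α))] [DecidableRel ((· ≤ ·) : α → α → Prop)]

theorem phi_vanish (hS : IsSimplicialPoset α) (σ : α) :
    ∀ a ∈ straightening ℤ α, MvPolynomial.aeval (phi σ) a = 0 := by
  intro a ha
  have hspan : straightening ℤ α ≤ RingHom.ker (MvPolynomial.aeval (phi σ)).toRingHom := by
    rw [straightening, Ideal.span_le]
    rintro p hp
    simp only [Set.mem_union, Set.mem_setOf_eq, Set.mem_singleton_iff] at hp
    rw [SetLike.mem_coe, RingHom.mem_ker]
    rcases hp with (rfl | ⟨a, b, hj, rfl⟩) | ⟨a, b, ρ, hρ, hne, rfl⟩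
    · simp [phi_bot]
    · simp only [map_mul, AlgHom.toRingHom_eq_coe, RingHom.coe_coe, aeval_X]
      by_cases ha : a ≤ σ
      · by_cases hb : b ≤ σ
        · exfalso
          obtain ⟨k, ⟨e⟩⟩ := hS σ
          have hmem := bjoin_mem_joins e ha hb
          rw [hj] at hmem
          exact Set.notMem_empty _ hmem
        · rw [phi_not_le hb, mul_zero]
      · rw [phi_not_le ha, zero_mul]
    · simp only [map_sub, map_mul, map_sum, AlgHom.toRingHom_eq_coe, RingHom.coe_coe, aeval_X]
      by_cases ha : a ≤ σ
      · by_cases hb : b ≤ σ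
        · obtain ⟨k, ⟨e⟩⟩ := hS σ
          have hsum : (∑ η ∈ (Set.toFinite (joins a b)).toFinset, phi σ η) =
              phi σ (bjoin e ha hb) := by
            apply Finset.sum_eq_single_of_mem
            · exact (Set.Finite.mem_toFinset _).mpr (bjoin_mem_joins e ha hb)
            · intro η hη hne'
              by_cases hησ : η ≤ σ
              · exact absurd (eq_bjoin_of_mem_joins e ha hb
                  ((Set.Finite.mem_toFinset _).mp hη) hησ) hne'
              · exact phi_not_le hησ
          rw [hsum, ← phi_mul_eq e ha hb hρ, sub_self]
        · have h1 : phi σ b = 0 := phi_not_le hb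
          have h2 : (∑ η ∈ (Set.toFinite (joins a b)).toFinset, phi σ η) = 0 := by
            apply Finset.sum_eq_zero
            intro η hη
            have hbη : b ≤ η := ((Set.Finite.mem_toFinset _).mp hη).1.2
            exact phi_not_le fun h => hb (hbη.trans h)
          rw [h1, h2, mul_zero, mul_zero, sub_zero]
      · have h1 : phi σ a = 0 := phi_not_le ha
        have h2 : (∑ η ∈ (Set.toFinite (joins a b)).toFinset, phi σ η) = 0 := by
          apply Finset.sum_eq_zero
          intro η hη
          have haη : a ≤ η := ((Set.Finite.mem_toFinset _).mp hη).1.1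
          exact phi_not_le fun h => ha (haη.trans h)
        rw [h1, h2, mul_zero, zero_mul, sub_zero]
  have := hspan ha
  rwa [RingHom.mem_ker] at this

/-- The restriction map `s_σ : ℤ[S] → ℤ[σ]`. -/
noncomputable def resHom (hS : IsSimplicialPoset α) (σ : α) :
    faceRing ℤ α →+* MvPolynomial {j : α // IsAtom j ∧ j ≤ σ} ℤ :=
  Ideal.Quotient.lift (straightening ℤ α) (MvPolynomial.aeval (phi σ)).toRingHom
    (phi_vanish hS σ)

theorem resHom_mk (hS : IsSimplicialPoset α) (σ : α) (x : MvPolynomial α ℤ) :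
    resHom hS σ (Ideal.Quotient.mk _ x) = MvPolynomial.aeval (phi σ) x :=
  Ideal.Quotient.lift_mk _ _ _

theorem resHom_surjective (hS : IsSimplicialPoset α) (σ : α) :
    Function.Surjective (resHom hS σ) := by
  intro q
  refine ⟨Ideal.Quotient.mk _ (MvPolynomial.aeval (fun j : {j : α // IsAtom j ∧ j ≤ σ} =>
    (X j.1 : MvPolynomial α ℤ)) q), ?_⟩
  rw [resHom_mk]
  have : (MvPolynomial.aeval (phi σ)).comp
      (MvPolynomial.aeval (fun j : {j : α // IsAtom j ∧ j ≤ σ} => (X j.1 : MvPolynomial α ℤ)))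
      = AlgHom.id ℤ _ := by
    apply MvPolynomial.algHom_ext
    intro j
    simp [phi_atom σ j]
  calc (MvPolynomial.aeval (phi σ)) ((MvPolynomial.aeval _) q)
      = ((MvPolynomial.aeval (phi σ)).comp (MvPolynomial.aeval fun j : {j : α // IsAtom j ∧ j ≤ σ} => (X j.1 : MvPolynomial α ℤ))) q := rfl
    _ = q := by rw [this]; rfl

theorem resHom_linear_form (hS : IsSimplicialPoset α) (σ : α) (c : α → ℤ) :
    resHom hS σ (Ideal.Quotient.mk _
        (∑ j ∈ Finset.univ.filter (fun j : α => IsAtom j), C (c j) * X j)) =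
      ∑ j : {j : α // IsAtom j ∧ j ≤ σ}, C (c j.1) * X j := by
  rw [resHom_mk]
  have hsmul : ∀ j : α, (C (c j) * X j : MvPolynomial α ℤ) = c j • X j := fun j =>
    (MvPolynomial.smul_eq_C_mul _ _).symm
  simp_rw [hsmul, map_sum, map_zsmul, aeval_X]
  have hsub : ∑ j ∈ Finset.univ.filter (fun j : α => IsAtom j), c j • phi σ j =
      ∑ j ∈ Finset.univ.filter (fun j : α => IsAtom j ∧ j ≤ σ), c j • phi σ j := by
    symm
    apply Finset.sum_subset
    · exact Finset.monotone_filter_right _ (fun j _ hj => hj.1)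
    · intro j hj hnj
      simp only [Finset.mem_filter, Finset.mem_univ, true_and] at hj hnj
      rw [phi_not_le (fun h => hnj ⟨hj, h⟩), smul_zero]
  rw [hsub, Finset.sum_subtype (p := fun j : α => IsAtom j ∧ j ≤ σ)
    (Finset.univ.filter (fun j : α => IsAtom j ∧ j ≤ σ))
    (by intro x; simp) (fun j => c j • phi σ j)]
  apply Finset.sum_congr rfl
  intro j _
  rw [phi_atom σ j, MvPolynomial.smul_eq_C_mul]
end Restrict
section Functional

theorem exists_prime_functional {β : Type} [Fintype β] [DecidableEq β] {n : ℕ}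
    (Λ : Fin n → (β → ℤ))
    (h : Submodule.span ℤ (Set.range Λ) ≠ ⊤) :
    ∃ (p : ℕ), p.Prime ∧ ∃ c : β → ZMod p,
      (∀ i, ∑ j, (Λ i j : ZMod p) * c j = 0) ∧ ∃ j, c j ≠ 0 := by
  classical
  set L := Submodule.span ℤ (Set.range Λ) with hL
  -- find a maximal (coatom) submodule above L
  obtain ⟨M, hMS, hMmax⟩ := (set_has_maximal_iff_noetherian.mpr inferInstance)
    {N : Submodule ℤ (β → ℤ) | L ≤ N ∧ N ≠ ⊤} ⟨L, le_rfl, h⟩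
  obtain ⟨hLM, hMne⟩ := hMS
  have hcoatom : IsCoatom M := by
    refine ⟨hMne, fun N hN => ?_⟩
    by_contra hNne
    exact hMmax N ⟨hLM.trans hN.le, hNne⟩ hN
  haveI hsimple : IsSimpleModule ℤ ((β → ℤ) ⧸ M) :=
    (isSimpleModule_iff_isCoatom).mpr hcoatom
  have hann : (Module.annihilator ℤ ((β → ℤ) ⧸ M)).IsMaximal :=
    IsSimpleModule.annihilator_isMaximal
  obtain ⟨a, ha⟩ := (IsPrincipalIdealRing.principal (Module.annihilator ℤ ((β → ℤ) ⧸ M))).principal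
  have hbot : Module.annihilator ℤ ((β → ℤ) ⧸ M) ≠ ⊥ :=
    Ring.ne_bot_of_isMaximal_of_not_isField hann Int.not_isField
  have ha0 : a ≠ 0 := by
    rintro rfl
    rw [Submodule.span_zero_singleton] at ha
    exact hbot ha
  have hap : Prime a := by
    have hprime : (Ideal.span ({a} : Set ℤ)).IsPrime := by
      have := hann.isPrime
      rwa [ha] at this
    exact (Ideal.span_singleton_prime ha0).mp hprime
  set p := a.natAbs with hpdef
  have hp : p.Prime := Int.prime_iff_natAbs_prime.mp hap
  haveI : Fact p.Prime := ⟨hp⟩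
  have hpann : (p : ℤ) ∈ Module.annihilator ℤ ((β → ℤ) ⧸ M) := by
    have hmem : a ∈ Module.annihilator ℤ ((β → ℤ) ⧸ M) := by
      rw [ha]; exact Ideal.mem_span_singleton_self a
    rcases Int.natAbs_eq a with heq | heq
    · rw [← heq]; exact hmem
    · have : (p : ℤ) = -a := by omega
      rw [this]; exact neg_mem hmem
  have hps : ∀ x : (β → ℤ) ⧸ M, (p : ℤ) • x = 0 := Module.mem_annihilator.mp hpann
  -- reduction mod p
  let rr : (β → ℤ) →ₗ[ℤ] (β → ZMod p) :=
    { toFun := fun x j => ((x j : ℤ) : ZMod p)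
      map_add' := by
        intro x y; funext j
        simp only [Pi.add_apply]
        push_cast; ring
      map_smul' := by
        intro m x; funext j
        simp only [Pi.smul_apply, smul_eq_mul, RingHom.id_apply, zsmul_eq_mul]
        push_cast; ring }
  have hker : LinearMap.ker rr ≤ M := by
    intro x hx
    have hdvd : ∀ j, (p : ℤ) ∣ x j := by
      intro j
      have : ((x j : ℤ) : ZMod p) = 0 := congrFun (LinearMap.mem_ker.mp hx) j
      exact (ZMod.intCast_zmod_eq_zero_iff_dvd _ _).mp this
    have hxy : x = (p : ℤ) • fun j => x j / (p : ℤ) := by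
      funext j
      simp only [Pi.smul_apply, smul_eq_mul]
      exact (Int.mul_ediv_cancel' (hdvd j)).symm
    have : (Submodule.Quotient.mk x : (β → ℤ) ⧸ M) = 0 := by
      rw [hxy, Submodule.Quotient.mk_smul]
      exact hps _
    exact (Submodule.Quotient.mk_eq_zero M).mp this
  -- the image of M is a proper subspace mod p
  let M'' : Submodule (ZMod p) (β → ZMod p) :=
    { carrier := ↑(M.map rr)
      add_mem' := fun hx hy => (M.map rr).add_mem hx hy
      zero_mem' := (M.map rr).zero_mem
      smul_mem' := by
        intro c x hx
        obtain ⟨m, rfl⟩ := ZMod.intCast_surjective c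
        rw [Int.cast_smul_eq_zsmul]
        exact (M.map rr).smul_mem m hx }
  have hM'' : M'' ≠ ⊤ := by
    intro heq
    apply hMne
    rw [Submodule.eq_top_iff']
    intro x
    have hmem : rr x ∈ M'' := heq ▸ Submodule.mem_top
    obtain ⟨m, hm, hmx⟩ := hmem
    have : x - m ∈ M := hker (by
      rw [LinearMap.mem_ker, map_sub, hmx, sub_self])
    simpa using M.add_mem hm this
  -- pick a functional vanishing on M''
  haveI : Nontrivial ((β → ZMod p) ⧸ M'') :=
    Submodule.Quotient.nontrivial_iff.mpr hM''
  have hpos : 0 < Module.finrank (ZMod p) ((β → ZMod p) ⧸ M'') := Module.finrank_pos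
  let b := Module.finBasis (ZMod p) ((β → ZMod p) ⧸ M'')
  let f₀ := b.coord ⟨0, hpos⟩
  refine ⟨p, hp, fun j => f₀ (M''.mkQ (rr (Pi.single j 1))), ?_, ?_⟩
  · intro i
    have hsingle : (Λ i) = ∑ j, Λ i j • Pi.single j (1 : ℤ) := by
      funext j'
      rw [Finset.sum_apply]
      simp [Pi.single_apply, mul_ite]
    have hstep : ∀ j : β, (Λ i j : ZMod p) * f₀ (M''.mkQ (rr (Pi.single j 1))) =
        f₀ (M''.mkQ (rr (Λ i j • Pi.single j 1))) := by
      intro j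
      rw [LinearMap.map_smul rr, ← Int.cast_smul_eq_zsmul (ZMod p), LinearMap.map_smul M''.mkQ,
        LinearMap.map_smul f₀, smul_eq_mul]
    rw [Finset.sum_congr rfl (fun j _ => hstep j), ← map_sum, ← map_sum, ← map_sum,
      ← hsingle]
    have hmem : rr (Λ i) ∈ M'' := by
      exact Submodule.mem_map_of_mem (f := rr) (hLM (Submodule.subset_span (Set.mem_range_self i)))
    have : M''.mkQ (rr (Λ i)) = 0 := (Submodule.Quotient.mk_eq_zero M'').mpr hmem
    rw [this, map_zero]
  · by_contra hall
    push_neg at hall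
    have hrs : ∀ j : β, rr (Pi.single j 1) = Pi.single j (1 : ZMod p) := by
      intro j
      funext j'
      simp [rr, Pi.single_apply, apply_ite (fun m : ℤ => (m : ZMod p))]
    have hzero : ∀ u : β → ZMod p, f₀ (M''.mkQ u) = 0 := by
      intro u
      have hu : u = ∑ j, u j • (Pi.single j (1 : ZMod p) : β → ZMod p) := by
        funext j'
        rw [Finset.sum_apply]
        simp [Pi.single_apply, mul_ite]
      rw [hu, map_sum, map_sum]
      rw [Finset.sum_congr rfl (fun j _ => by
        rw [LinearMap.map_smul M''.mkQ, LinearMap.map_smul f₀, ← hrs j, hall j, smul_zero])]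
      simp
    obtain ⟨u, hu⟩ := M''.mkQ_surjective (b ⟨0, hpos⟩)
    have h1 : f₀ (b ⟨0, hpos⟩) = 1 := by
      simp [f₀, Module.Basis.coord_apply, Module.Basis.repr_self]
    rw [← hu, hzero u] at h1
    exact zero_ne_one h1

end Functional
section Main
open MvPolynomial

/-- if the degree-two elements `t_i = ∑_j λ_{ij} v_j` form an lsop
in `ℤ[S]` (i.e. `ℤ[S]` is a finitely generated module over `ℤ[t₁,…,t_n]`), then
for every `σ ∈ S` the restrictions `s_σ(t_i)` generate the positive-degree ideal
of the polynomial ring `ℤ[σ] = ℤ[v_i : i ∈ V(σ)]`. -/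
theorem restrictions_generate_of_lsop {α : Type}
    [Fintype α] [PartialOrder α] [OrderBot α] [DecidableEq α]
    [DecidablePred (IsAtom (α := α))] [DecidableRel ((· ≤ ·) : α → α → Prop)]
    (hS : IsSimplicialPoset α) (n : ℕ)
    (hn : Finset.univ.sup (srank : α → ℕ) = n)
    (lam : Fin n → α → ℤ)
    (t : Fin n → faceRing ℤ α)
    (ht : ∀ i : Fin n, t i = Ideal.Quotient.mk (straightening ℤ α)
      (∑ j ∈ Finset.univ.filter (fun j : α => IsAtom j), C (lam i j) * X j))
    (hlsop : Module.Finite (Algebra.adjoin ℤ (Set.range t)) (faceRing ℤ α)) :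
    ∀ σ : α,
      Ideal.span (Set.range fun i : Fin n =>
          (∑ j : {j : α // IsAtom j ∧ j ≤ σ}, C (lam i j.1) * X j :
            MvPolynomial {j : α // IsAtom j ∧ j ≤ σ} ℤ)) =
        Ideal.span (Set.range (X : {j : α // IsAtom j ∧ j ≤ σ} →
          MvPolynomial {j : α // IsAtom j ∧ j ≤ σ} ℤ)) := by
  classical
  intro σ
  set ℓ : Fin n → MvPolynomial {j : α // IsAtom j ∧ j ≤ σ} ℤ :=
    fun i => ∑ j : {j : α // IsAtom j ∧ j ≤ σ}, C (lam i j.1) * X j with hℓ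
  -- the coefficient vectors
  set Λ : Fin n → ({j : α // IsAtom j ∧ j ≤ σ} → ℤ) := fun i j => lam i j.1 with hΛ
  -- Step 1: the coefficient vectors span everything
  have htop : Submodule.span ℤ (Set.range Λ) = ⊤ := by
    by_contra hne
    obtain ⟨p, hp, c, hc0, j₀, hj₀⟩ := exists_prime_functional Λ hne
    haveI : Fact p.Prime := ⟨hp⟩
    set χ : MvPolynomial {j : α // IsAtom j ∧ j ≤ σ} ℤ →ₐ[ℤ] Polynomial (ZMod p) :=
      MvPolynomial.aeval (fun j => Polynomial.C (c j) * Polynomial.X) with hχ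
    set Θ : faceRing ℤ α →+* Polynomial (ZMod p) := χ.toRingHom.comp (resHom hS σ) with hΘ
    have hχℓ : ∀ i, χ (ℓ i) = 0 := by
      intro i
      rw [hχ, hℓ]
      simp only [map_sum, map_mul, aeval_C, aeval_X]
      have hcast : ∀ m : ℤ, algebraMap ℤ (Polynomial (ZMod p)) m = Polynomial.C (m : ZMod p) := by
        intro m
        rw [eq_intCast]
        exact (map_intCast (Polynomial.C : ZMod p →+* Polynomial (ZMod p)) m).symm
      calc ∑ j : {j : α // IsAtom j ∧ j ≤ σ},
            algebraMap ℤ (Polynomial (ZMod p)) (lam i j.1) * (Polynomial.C (c j) * Polynomial.X)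
          = ∑ j : {j : α // IsAtom j ∧ j ≤ σ},
            Polynomial.C ((lam i j.1 : ZMod p) * c j) * Polynomial.X := by
            apply Finset.sum_congr rfl
            intro j _
            rw [hcast, ← mul_assoc, ← map_mul]
        _ = Polynomial.C (∑ j : {j : α // IsAtom j ∧ j ≤ σ}, (lam i j.1 : ZMod p) * c j) *
            Polynomial.X := by rw [← Finset.sum_mul, ← map_sum]
        _ = 0 := by rw [hc0 i, map_zero, zero_mul]
    have hΘt : ∀ i, Θ (t i) = 0 := by
      intro i
      rw [hΘ, RingHom.comp_apply, ht i, resHom_linear_form hS σ (lam i)]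
      exact hχℓ i
    -- χ is surjective
    have hXmem : ∃ q, χ q = Polynomial.X := by
      obtain ⟨m', hm'⟩ := ZMod.intCast_surjective ((c j₀)⁻¹ : ZMod p)
      refine ⟨C m' * X j₀, ?_⟩
      rw [hχ, map_mul, aeval_C, aeval_X]
      have : algebraMap ℤ (Polynomial (ZMod p)) m' = Polynomial.C ((c j₀)⁻¹) := by
        rw [eq_intCast, ← hm']
        exact (map_intCast (Polynomial.C : ZMod p →+* Polynomial (ZMod p)) m').symm
      rw [this, ← mul_assoc, ← map_mul, inv_mul_cancel₀ hj₀, map_one, one_mul]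
    have hχsurj : Function.Surjective χ := by
      intro q
      induction q using Polynomial.induction_on with
      | C a =>
        obtain ⟨m, hm⟩ := ZMod.intCast_surjective a
        refine ⟨C m, ?_⟩
        rw [hχ, aeval_C]
        rw [eq_intCast, ← hm]
        exact (map_intCast (Polynomial.C : ZMod p →+* Polynomial (ZMod p)) m).symm
      | add q r hq hr =>
        obtain ⟨x, hx⟩ := hq
        obtain ⟨y, hy⟩ := hr
        exact ⟨x + y, by rw [map_add, hx, hy]⟩
      | monomial m a hqm =>
        obtain ⟨x, hx⟩ := hqm
        obtain ⟨y, hy⟩ := hXmem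
        refine ⟨x * y, ?_⟩
        rw [map_mul, hx, hy]
        ring
    have hΘsurj : Function.Surjective Θ := by
      rw [hΘ]
      exact Function.Surjective.comp (g := ⇑χ) hχsurj (resHom_surjective hS σ)
    -- transfer finiteness
    have hconst : ∀ a ∈ Algebra.adjoin ℤ (Set.range t), ∃ d : ZMod p, Θ a = Polynomial.C d := by
      intro a ha
      induction ha using Algebra.adjoin_induction with
      | mem x hx =>
        obtain ⟨i, rfl⟩ := hx
        exact ⟨0, by rw [hΘt i, map_zero]⟩
      | algebraMap r =>
        refine ⟨(r : ZMod p), ?_⟩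
        have : (algebraMap ℤ (faceRing ℤ α)) r = (r : faceRing ℤ α) := by
          rw [eq_intCast]
        rw [this, map_intCast]
        exact (map_intCast (Polynomial.C : ZMod p →+* Polynomial (ZMod p)) r).symm
      | add x y hx hy ihx ihy =>
        obtain ⟨d1, h1⟩ := ihx
        obtain ⟨d2, h2⟩ := ihy
        exact ⟨d1 + d2, by rw [map_add, h1, h2, map_add]⟩
      | mul x y hx hy ihx ihy =>
        obtain ⟨d1, h1⟩ := ihx
        obtain ⟨d2, h2⟩ := ihy
        exact ⟨d1 * d2, by rw [map_mul, h1, h2, map_mul]⟩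
    obtain ⟨s, hs⟩ := hlsop.fg_top
    have hfin : Module.Finite (ZMod p) (Polynomial (ZMod p)) := by
      refine ⟨⟨s.image Θ, ?_⟩⟩
      rw [eq_top_iff]
      intro q hq
      clear hq
      obtain ⟨y, rfl⟩ := hΘsurj q
      have hy : y ∈ Submodule.span (Algebra.adjoin ℤ (Set.range t)) (s : Set (faceRing ℤ α)) :=
        hs ▸ Submodule.mem_top
      induction hy using Submodule.span_induction with
      | mem x hx =>
        exact Submodule.subset_span (by
          simp only [Finset.coe_image]
          exact Set.mem_image_of_mem _ hx)
      | zero => rw [map_zero]; exact Submodule.zero_mem _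
      | add x y hx hy ihx ihy => rw [map_add]; exact Submodule.add_mem _ ihx ihy
      | smul a x hx ih =>
        have hax : a • x = (a : faceRing ℤ α) * x := Algebra.smul_def a x
        obtain ⟨d, hd⟩ := hconst a a.2
        rw [hax, map_mul, hd, ← Polynomial.smul_eq_C_mul]
        exact Submodule.smul_mem _ _ ih
    exact Polynomial.not_finite hfin
  -- Step 2: conclude the ideal equality
  apply le_antisymm
  · rw [Ideal.span_le]
    rintro q ⟨i, rfl⟩
    apply Ideal.sum_mem
    intro j _
    exact Ideal.mul_mem_left _ _ (Ideal.subset_span ⟨j, rfl⟩)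
  · rw [Ideal.span_le]
    rintro q ⟨j, rfl⟩
    -- the linear map sending a coefficient vector to the corresponding linear form
    set Φ : ({j : α // IsAtom j ∧ j ≤ σ} → ℤ) →ₗ[ℤ]
        MvPolynomial {j : α // IsAtom j ∧ j ≤ σ} ℤ :=
      { toFun := fun w => ∑ j' : {j : α // IsAtom j ∧ j ≤ σ}, C (w j') * X j'
        map_add' := by
          intro w w'
          rw [← Finset.sum_add_distrib]
          apply Finset.sum_congr rfl
          intro j' _
          rw [Pi.add_apply, map_add, add_mul]
        map_smul' := by
          intro m w
          rw [RingHom.id_apply, Finset.smul_sum]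
          apply Finset.sum_congr rfl
          intro j' _
          rw [Pi.smul_apply, smul_eq_mul, map_mul, MvPolynomial.smul_eq_C_mul, mul_assoc] } with hΦ
    have hXj : (X j : MvPolynomial {j : α // IsAtom j ∧ j ≤ σ} ℤ) = Φ (Pi.single j 1) := by
      rw [hΦ]
      simp only [LinearMap.coe_mk, AddHom.coe_mk]
      rw [Finset.sum_eq_single j]
      · simp
      · intro j' _ hj'
        rw [Pi.single_apply, if_neg hj', map_zero, zero_mul]
      · intro hj'
        exact absurd (Finset.mem_univ j) hj'
    have hmem : Pi.single j 1 ∈ Submodule.span ℤ (Set.range Λ) := htop ▸ Submodule.mem_top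
    have himg : Φ (Pi.single j 1) ∈ Submodule.span ℤ (Φ '' Set.range Λ) := by
      rw [← Submodule.map_span]
      exact Submodule.mem_map_of_mem hmem
    have hΦΛ : Φ '' Set.range Λ = Set.range ℓ := by
      rw [← Set.range_comp]
      rfl
    rw [hXj]
    rw [hΦΛ] at himg
    have : Submodule.span ℤ (Set.range ℓ) ≤
        (Ideal.span (Set.range ℓ)).restrictScalars ℤ := by
      rw [Submodule.span_le]
      exact fun x hx => Ideal.subset_span hx
    exact this himg
end Main
end

section
/- For every simplicial poset S of rank n, the rational face ring Q[S] admits a linear system of parameters consisting of n degree-two elements. -/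
open MvPolynomial

set_option maxHeartbeats 1000000
set_option synthInstance.maxHeartbeats 200000

lemma exists_max_mem' {α : Type} [Fintype α] [PartialOrder α] (s : Set α) (hs : s.Nonempty) :
    ∃ a, Maximal (· ∈ s) a := by
  obtain ⟨a, ha, hmax⟩ := Set.Finite.exists_maximalFor id s (Set.toFinite s) hs
  exact ⟨a, ha, fun y hy hay => hmax hy hay⟩

lemma vand {K : Type*} [Field K] {ι : Type*} [DecidableEq ι] (W : Finset ι) (c : ι → K)
    (hc : Set.InjOn c W) (y : ι → K) {n : ℕ} (hW : W.card ≤ n)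
    (h : ∀ i, i < n → ∑ w ∈ W, c w ^ i * y w = 0) : ∀ v ∈ W, y v = 0 := by
  intro v hv
  set q : Polynomial K := ∏ w ∈ W.erase v, (Polynomial.X - Polynomial.C (c w)) with hq
  have hdeg : q.natDegree < n := by
    have hd : q.natDegree = (W.erase v).card := by
      rw [hq, Polynomial.natDegree_prod]
      · simp [Polynomial.natDegree_X_sub_C]
      · intro w _; exact Polynomial.X_sub_C_ne_zero _
    rw [hd]
    exact lt_of_lt_of_le (Finset.card_erase_lt_of_mem hv) hW
  have key : ∑ w ∈ W, y w * q.eval (c w) = 0 := by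
    calc ∑ w ∈ W, y w * q.eval (c w)
        = ∑ w ∈ W, ∑ i ∈ Finset.range n, q.coeff i * (c w ^ i * y w) := by
          refine Finset.sum_congr rfl fun w _ => ?_
          rw [Polynomial.eval_eq_sum_range' hdeg, Finset.mul_sum]
          exact Finset.sum_congr rfl fun i _ => by ring
      _ = ∑ i ∈ Finset.range n, ∑ w ∈ W, q.coeff i * (c w ^ i * y w) := Finset.sum_comm
      _ = ∑ i ∈ Finset.range n, q.coeff i * ∑ w ∈ W, c w ^ i * y w := by
          exact Finset.sum_congr rfl fun i _ => (Finset.mul_sum _ _ _).symm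
      _ = 0 := by
          refine Finset.sum_eq_zero fun i hi => ?_
          rw [h i (Finset.mem_range.mp hi), mul_zero]
  have hsingle : ∑ w ∈ W, y w * q.eval (c w) = y v * q.eval (c v) := by
    refine Finset.sum_eq_single_of_mem v hv fun w hw hwv => ?_
    have hz : q.eval (c w) = 0 := by
      rw [hq, Polynomial.eval_prod]
      exact Finset.prod_eq_zero (Finset.mem_erase.mpr ⟨hwv, hw⟩) (by simp)
    rw [hz, mul_zero]
  have hevalv : q.eval (c v) ≠ 0 := by
    rw [hq, Polynomial.eval_prod]
    refine Finset.prod_ne_zero_iff.mpr fun w hw => ?_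
    have hwv := Finset.mem_erase.mp hw
    simp only [Polynomial.eval_sub, Polynomial.eval_X, Polynomial.eval_C]
    exact sub_ne_zero.mpr fun e => hwv.1 (hc hwv.2 hv e.symm)
  have := hsingle ▸ key
  exact (mul_eq_zero.mp this).resolve_right hevalv

lemma point_vanishes {α : Type} [Fintype α] [PartialOrder α] [OrderBot α] {K : Type*}
    [Field K]
    (hS : IsSimplicialPoset α) (x : α → K)
    (h1 : x ⊥ = 1)
    (h2 : ∀ σ τ : α, joins σ τ = ∅ → x σ * x τ = 0)
    (h3 : ∀ σ τ ρ : α, ρ ∈ meets σ τ → (joins σ τ).Nonempty →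
      x σ * x τ = x ρ * ∑ η ∈ (Set.toFinite (joins σ τ)).toFinset, x η)
    (hv : ∀ G : α, (∀ σ, x σ ≠ 0 → σ ≤ G) → ∀ v, IsAtom v → v ≤ G → x v = 0) :
    ∀ σ : α, σ ≠ ⊥ → x σ = 0 := by
  obtain ⟨G, hGmax⟩ := exists_max_mem' {σ : α | x σ ≠ 0} ⟨⊥, by simp [h1]⟩
  have htop : ∀ σ, x σ ≠ 0 → σ ≤ G := by
    intro σ hσ
    have hGne : x G ≠ 0 := hGmax.1
    have hjoins : (joins σ G).Nonempty := by
      rw [Set.nonempty_iff_ne_empty]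
      intro he
      exact mul_ne_zero hσ hGne (h2 σ G he)
    obtain ⟨ρ, hρ⟩ := exists_max_mem' {u : α | u ≤ σ ∧ u ≤ G} ⟨⊥, bot_le, bot_le⟩
    have hrel := h3 σ G ρ hρ hjoins
    have hsum : ∑ η ∈ (Set.toFinite (joins σ G)).toFinset, x η ≠ 0 :=
      right_ne_zero_of_mul (hrel ▸ mul_ne_zero hσ hGne)
    obtain ⟨η, hηmem, hηne⟩ := Finset.exists_ne_zero_of_sum_ne_zero hsum
    have hηj : η ∈ joins σ G := (Set.Finite.mem_toFinset _).mp hηmem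
    have hηG : η ≤ G := hGmax.2 hηne hηj.1.2
    exact le_trans hηj.1.1 hηG
  intro σ hσbot
  by_contra hσ
  have hσG : σ ≤ G := htop σ hσ
  obtain ⟨k, ⟨e⟩⟩ := hS G
  have hbotIcc : (⊥ : α) ∈ Set.Icc (⊥ : α) G := ⟨le_rfl, bot_le⟩
  have ebot : e ⟨⊥, hbotIcc⟩ = ∅ := by
    have h1' : (⟨⊥, hbotIcc⟩ : Set.Icc (⊥ : α) G) ≤ e.symm ∅ := bot_le
    have h2' := e.monotone h1'
    rw [e.apply_symm_apply] at h2'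
    exact Finset.subset_empty.mp h2'
  have hσIcc : σ ∈ Set.Icc (⊥ : α) G := ⟨bot_le, hσG⟩
  set A : Finset (Fin k) := e ⟨σ, hσIcc⟩ with hA
  have hAne : A.Nonempty := by
    rw [Finset.nonempty_iff_ne_empty]
    intro h
    have h4 : (⟨σ, hσIcc⟩ : Set.Icc (⊥ : α) G) = ⟨⊥, hbotIcc⟩ :=
      e.injective ((hA.symm.trans h).trans ebot.symm)
    exact hσbot (congrArg Subtype.val h4)
  obtain ⟨a, ha⟩ := hAne
  set τ' : Set.Icc (⊥ : α) G := e.symm (A.erase a) with hτ'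
  set v' : Set.Icc (⊥ : α) G := e.symm {a} with hv'
  have hv'G : (v' : α) ≤ G := v'.2.2
  have hvatom : IsAtom (v' : α) := by
    constructor
    · intro h
      have : v' = (⟨⊥, hbotIcc⟩ : Set.Icc (⊥ : α) G) := Subtype.ext h
      have h5 := e.apply_symm_apply ({a} : Finset (Fin k))
      rw [← hv', this, ebot] at h5
      exact Finset.singleton_ne_empty a h5.symm
    · intro b hb
      have hbIcc : b ∈ Set.Icc (⊥ : α) G := ⟨bot_le, le_trans hb.le hv'G⟩
      have hlt : (⟨b, hbIcc⟩ : Set.Icc (⊥ : α) G) < v' := hb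
      have hthis := e.strictMono hlt
      rw [hv', e.apply_symm_apply] at hthis
      have h6 : e ⟨b, hbIcc⟩ = ∅ :=
        Finset.eq_empty_of_ssubset_singleton (Finset.lt_iff_ssubset.mp hthis)
      exact congrArg Subtype.val (e.injective (h6.trans ebot.symm))
  have hτσ : (τ' : α) ≤ σ := by
    have : τ' ≤ ⟨σ, hσIcc⟩ := by
      rw [hτ', ← e.symm_apply_apply ⟨σ, hσIcc⟩]
      exact e.symm.monotone (Finset.erase_subset a A)
    exact this
  have hvσ : (v' : α) ≤ σ := by
    have : v' ≤ ⟨σ, hσIcc⟩ := by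
      rw [hv', ← e.symm_apply_apply ⟨σ, hσIcc⟩]
      exact e.symm.monotone (Finset.singleton_subset_iff.mpr ha)
    exact this
  have hjoin : σ ∈ joins (τ' : α) (v' : α) := by
    constructor
    · exact ⟨hτσ, hvσ⟩
    · rintro u ⟨huτ, huv⟩ huσ
      have huIcc : u ∈ Set.Icc (⊥ : α) G := ⟨bot_le, le_trans huσ hσG⟩
      have h7 : A.erase a ⊆ e ⟨u, huIcc⟩ := by
        have hle : τ' ≤ ⟨u, huIcc⟩ := huτ
        have := e.monotone hle
        rwa [hτ', e.apply_symm_apply] at this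
      have h8 : a ∈ e ⟨u, huIcc⟩ := by
        have hle : v' ≤ ⟨u, huIcc⟩ := huv
        have := e.monotone hle
        rw [hv', e.apply_symm_apply] at this
        exact this (Finset.mem_singleton_self a)
      have h9 : A ⊆ e ⟨u, huIcc⟩ := by
        rw [← Finset.insert_erase ha]
        exact Finset.insert_subset h8 h7
      have h10 : e ⟨u, huIcc⟩ ≤ e ⟨σ, hσIcc⟩ :=
        e.monotone (show (⟨u, huIcc⟩ : Set.Icc (⊥:α) G) ≤ ⟨σ, hσIcc⟩ from huσ)
      have : (⟨u, huIcc⟩ : Set.Icc (⊥ : α) G) = ⟨σ, hσIcc⟩ :=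
        e.injective (le_antisymm h10 (Finset.le_iff_subset.mpr h9))
      exact le_of_eq (congrArg Subtype.val this).symm
  have hlower : ∀ u : α, u ≤ (τ' : α) → u ≤ (v' : α) → u = ⊥ := by
    intro u huτ huv
    rcases lt_or_eq_of_le huv with h | h
    · exact hvatom.2 u h
    · exfalso
      have hcoe : (v' : α) ≤ (τ' : α) := h ▸ huτ
      have hide : v' ≤ τ' := hcoe
      have := e.monotone hide
      rw [hv', hτ', e.apply_symm_apply, e.apply_symm_apply] at this
      exact (Finset.notMem_erase a A) (this (Finset.mem_singleton_self a))
  have hmeet : (⊥ : α) ∈ meets (τ' : α) (v' : α) := by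
    constructor
    · exact ⟨bot_le, bot_le⟩
    · rintro u ⟨huτ, huv⟩ _
      exact le_of_eq (hlower u huτ huv)
  have hrel := h3 (τ' : α) (v' : α) ⊥ hmeet ⟨σ, hjoin⟩
  have hsum : ∑ η ∈ (Set.toFinite (joins (τ' : α) (v' : α))).toFinset, x η = x σ := by
    refine Finset.sum_eq_single_of_mem σ ((Set.Finite.mem_toFinset _).mpr hjoin) ?_
    intro η hηmem hησ
    by_contra hηne
    have hηj : η ∈ joins (τ' : α) (v' : α) := (Set.Finite.mem_toFinset _).mp hηmem
    have hηG : η ≤ G := htop η hηne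
    have hηIcc : η ∈ Set.Icc (⊥ : α) G := ⟨bot_le, hηG⟩
    have h7 : A.erase a ⊆ e ⟨η, hηIcc⟩ := by
      have hle : τ' ≤ ⟨η, hηIcc⟩ := hηj.1.1
      have := e.monotone hle
      rwa [hτ', e.apply_symm_apply] at this
    have h8 : a ∈ e ⟨η, hηIcc⟩ := by
      have hle : v' ≤ ⟨η, hηIcc⟩ := hηj.1.2
      have := e.monotone hle
      rw [hv', e.apply_symm_apply] at this
      exact this (Finset.mem_singleton_self a)
    have h9 : A ⊆ e ⟨η, hηIcc⟩ := by
      rw [← Finset.insert_erase ha]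
      exact Finset.insert_subset h8 h7
    have hle : (⟨σ, hσIcc⟩ : Set.Icc (⊥:α) G) ≤ ⟨η, hηIcc⟩ :=
      e.le_iff_le.mp (Finset.le_iff_subset.mpr h9)
    have hση : σ ≤ η := hle
    exact hησ (le_antisymm (hηj.2 ⟨hτσ, hvσ⟩ hση) hση)
  have hxv : x (v' : α) = 0 := hv G htop (v' : α) hvatom hv'G
  rw [hsum, h1, one_mul] at hrel
  exact hσ (by rw [← hrel, hxv, mul_zero])

/-- for every simplicial poset `S` of rank `n`, the rational face
ring `ℚ[S]` admits a linear system of parameters of `n` degree-two elements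
`t_i = ∑_j λ_{ij} v_j` (so that `ℚ[S]/(t₁,…,t_n)` is finite dimensional). -/
theorem exists_lsop_rational {α : Type}
    [Fintype α] [PartialOrder α] [OrderBot α] [DecidableEq α]
    [DecidablePred (IsAtom (α := α))]
    (hS : IsSimplicialPoset α) (n : ℕ)
    (hn : Finset.univ.sup (srank : α → ℕ) = n) :
    ∃ lam : Fin n → α → ℚ,
      FiniteDimensional ℚ (faceRing ℚ α ⧸ Ideal.span (Set.range fun i : Fin n =>
        Ideal.Quotient.mk (straightening ℚ α)
          (∑ j ∈ Finset.univ.filter (fun j : α => IsAtom j), C (lam i j) * X j))) := by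
  classical
  set cQ : α → ℚ := fun j => ((Fintype.equivFin α j : ℕ) : ℚ) with hcQdef
  have hcQ : Function.Injective cQ := by
    intro a b h
    apply (Fintype.equivFin α).injective
    exact Fin.val_injective (Nat.cast_injective h)
  refine ⟨fun i j => cQ j ^ (i : ℕ), ?_⟩
  set I : Ideal (MvPolynomial α ℚ) := straightening ℚ α with hI
  set t : Fin n → MvPolynomial α ℚ := fun i =>
    ∑ j ∈ Finset.univ.filter (fun j : α => IsAtom j), C (cQ j ^ (i : ℕ)) * X j with ht
  set J : Ideal (MvPolynomial α ℚ) := Ideal.span (Set.range t) with hJ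
  set L : Ideal (MvPolynomial α ℚ) := I ⊔ J with hL
  have hIL : I ≤ L := le_sup_left
  have hJL : J ≤ L := le_sup_right
  -- membership of the generators of the straightening ideal
  have hmem1 : (X ⊥ - 1 : MvPolynomial α ℚ) ∈ I :=
    Ideal.subset_span (Set.mem_union_left _ (Set.mem_union_left _ rfl))
  have hmem2 : ∀ σ τ : α, joins σ τ = ∅ → (X σ * X τ : MvPolynomial α ℚ) ∈ I := fun σ τ hj =>
    Ideal.subset_span (Set.mem_union_left _ (Set.mem_union_right _ ⟨σ, τ, hj, rfl⟩))
  have hmem3 : ∀ σ τ ρ : α, ρ ∈ meets σ τ → (joins σ τ).Nonempty →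
      (X σ * X τ - X ρ * ∑ η ∈ (Set.toFinite (joins σ τ)).toFinset, X η : MvPolynomial α ℚ) ∈ I :=
    fun σ τ ρ hρ hne => Ideal.subset_span (Set.mem_union_right _ ⟨σ, τ, ρ, hρ, hne, rfl⟩)
  -- every face variable is in the radical of L
  have hrad : ∀ σ : α, σ ≠ ⊥ → (X σ : MvPolynomial α ℚ) ∈ L.radical := by
    intro σ hσbot
    rw [Ideal.radical_eq_jacobson, Ideal.jacobson]
    refine Submodule.mem_sInf.mpr ?_
    rintro m ⟨hLm, hmmax⟩
    haveI : Ideal.IsMaximal m := hmmax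
    letI : Field (MvPolynomial α ℚ ⧸ m) := Ideal.Quotient.field m
    have hCq : ∀ q : ℚ, Ideal.Quotient.mk m (C q) = algebraMap ℚ (MvPolynomial α ℚ ⧸ m) q := by
      intro q
      rw [IsScalarTower.algebraMap_apply ℚ (MvPolynomial α ℚ) (MvPolynomial α ℚ ⧸ m) q,
        Ideal.Quotient.algebraMap_eq, MvPolynomial.algebraMap_eq]
    have h1 : Ideal.Quotient.mk m (X (⊥ : α)) = 1 := by
      have h0 : Ideal.Quotient.mk m (X (⊥ : α) - 1) = 0 :=
        Ideal.Quotient.eq_zero_iff_mem.mpr (hLm (hIL hmem1))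
      rw [map_sub, map_one, sub_eq_zero] at h0
      exact h0
    have h2 : ∀ σ' τ' : α, joins σ' τ' = ∅ →
        Ideal.Quotient.mk m (X σ') * Ideal.Quotient.mk m (X τ') = 0 := by
      intro σ' τ' hj
      rw [← map_mul]
      exact Ideal.Quotient.eq_zero_iff_mem.mpr (hLm (hIL (hmem2 σ' τ' hj)))
    have h3 : ∀ σ' τ' ρ : α, ρ ∈ meets σ' τ' → (joins σ' τ').Nonempty →
        Ideal.Quotient.mk m (X σ') * Ideal.Quotient.mk m (X τ') =
          Ideal.Quotient.mk m (X ρ) *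
            ∑ η ∈ (Set.toFinite (joins σ' τ')).toFinset, Ideal.Quotient.mk m (X η) := by
      intro σ' τ' ρ hρ hne
      have h0 := Ideal.Quotient.eq_zero_iff_mem.mpr (hLm (hIL (hmem3 σ' τ' ρ hρ hne)))
      rw [map_sub, sub_eq_zero, map_mul, map_mul, map_sum] at h0
      exact h0
    have hv : ∀ G : α, (∀ τ, Ideal.Quotient.mk m (X τ) ≠ 0 → τ ≤ G) →
        ∀ v, IsAtom v → v ≤ G → Ideal.Quotient.mk m (X v) = 0 := by
      intro G htop v hvatom hvG
      set W : Finset α := Finset.univ.filter (fun u : α => IsAtom u ∧ u ≤ G) with hW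
      have hWsub : W ⊆ Finset.univ.filter (fun j : α => IsAtom j) := by
        intro u hu
        simp only [hW, Finset.mem_filter] at hu ⊢
        exact ⟨hu.1, hu.2.1⟩
      have hcard : W.card ≤ n := by
        have hW1 : vertexSet G = (W : Set α) := by
          ext u
          simp [vertexSet, hW]
        have hsr : srank G = W.card := by
          rw [srank, hW1, Set.ncard_coe_finset]
        rw [← hn, ← hsr]
        exact Finset.le_sup (Finset.mem_univ G)
      have hrel : ∀ i : ℕ, i < n →
          ∑ w ∈ W, (algebraMap ℚ (MvPolynomial α ℚ ⧸ m) (cQ w)) ^ i *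
            Ideal.Quotient.mk m (X w) = 0 := by
        intro i hi
        have hmemt : t ⟨i, hi⟩ ∈ m := hLm (hJL (Ideal.subset_span ⟨⟨i, hi⟩, rfl⟩))
        have h0 := Ideal.Quotient.eq_zero_iff_mem.mpr hmemt
        rw [ht, map_sum] at h0
        have hterm : ∀ j : α, Ideal.Quotient.mk m (C (cQ j ^ i) * X j)
            = (algebraMap ℚ (MvPolynomial α ℚ ⧸ m) (cQ j)) ^ i * Ideal.Quotient.mk m (X j) := by
          intro j
          rw [map_mul, hCq, map_pow]
        simp only [hterm] at h0
        rw [Finset.sum_subset hWsub]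
        · exact h0
        · intro j hj hjW
          simp only [hW, Finset.mem_filter, Finset.mem_univ, true_and] at hj hjW
          have hjG : ¬ j ≤ G := fun hle => hjW ⟨hj, hle⟩
          have hxj : Ideal.Quotient.mk m (X j) = 0 := by
            by_contra hne
            exact hjG (htop j hne)
          rw [hxj, mul_zero]
      have hinj : Set.InjOn (fun u : α => algebraMap ℚ (MvPolynomial α ℚ ⧸ m) (cQ u)) W := by
        intro a _ b _ hab
        exact hcQ ((algebraMap ℚ (MvPolynomial α ℚ ⧸ m)).injective hab)
      exact vand W _ hinj (fun u => Ideal.Quotient.mk m (X u)) hcard hrel v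
        (Finset.mem_filter.mpr ⟨Finset.mem_univ v, hvatom, hvG⟩)
    have hvan := point_vanishes hS (fun τ : α => Ideal.Quotient.mk m (X τ)) h1 h2 h3 hv
    exact Ideal.Quotient.eq_zero_iff_mem.mp (hvan σ hσbot)
  -- the quotient by L is module-finite over ℚ
  have hbotone : Ideal.Quotient.mk L (X (⊥ : α)) = 1 := by
    have h0 : Ideal.Quotient.mk L (X (⊥ : α) - 1) = 0 :=
      Ideal.Quotient.eq_zero_iff_mem.mpr (hIL hmem1)
    rw [map_sub, map_one, sub_eq_zero] at h0
    exact h0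
  haveI hft : Algebra.FiniteType ℚ (MvPolynomial α ℚ ⧸ L) :=
    Algebra.FiniteType.of_surjective
      (Ideal.Quotient.mkₐ ℚ L) (Ideal.Quotient.mkₐ_surjective ℚ L)
  haveI hint : Algebra.IsIntegral ℚ (MvPolynomial α ℚ ⧸ L) := by
    have hadjoin_top : Algebra.adjoin ℚ
        (Set.range fun σ : α => Ideal.Quotient.mk L (X σ)) = ⊤ := by
      have himg : (Set.range fun σ : α => Ideal.Quotient.mk L (X σ))
          = (Ideal.Quotient.mkₐ ℚ L) '' (Set.range (X : α → MvPolynomial α ℚ)) := by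
        rw [← Set.range_comp]; rfl
      rw [himg, ← AlgHom.map_adjoin, MvPolynomial.adjoin_range_X, Algebra.map_top]
      exact (AlgHom.range_eq_top _).mpr (Ideal.Quotient.mkₐ_surjective ℚ L)
    have hle : Algebra.adjoin ℚ (Set.range fun σ : α => Ideal.Quotient.mk L (X σ))
        ≤ integralClosure ℚ (MvPolynomial α ℚ ⧸ L) := by
      apply Algebra.adjoin_le
      rintro _ ⟨σ, rfl⟩
      show Ideal.Quotient.mk L (X σ) ∈ (integralClosure ℚ (MvPolynomial α ℚ ⧸ L) : Set _)
      by_cases hσ : σ = ⊥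
      · subst hσ
        rw [hbotone]
        exact Subalgebra.one_mem _
      · obtain ⟨kk, hkk⟩ : IsNilpotent (Ideal.Quotient.mk L (X σ)) := by
          obtain ⟨kk, hkk⟩ := Ideal.mem_radical_iff.mp (hrad σ hσ)
          exact ⟨kk, by rw [← map_pow]; exact Ideal.Quotient.eq_zero_iff_mem.mpr hkk⟩
        refine (mem_integralClosure_iff ℚ _).mpr ⟨Polynomial.X ^ (kk + 1),
          Polynomial.monic_X_pow _, ?_⟩
        rw [Polynomial.eval₂_X_pow, pow_succ, hkk, zero_mul]
    rw [Algebra.isIntegral_def]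
    intro z
    have hz : z ∈ Algebra.adjoin ℚ (Set.range fun σ : α => Ideal.Quotient.mk L (X σ)) := by
      rw [hadjoin_top]; trivial
    exact (mem_integralClosure_iff ℚ _).mp (hle hz)
  have hmain : Module.Finite ℚ (MvPolynomial α ℚ ⧸ L) := Algebra.IsIntegral.finite
  -- transfer along the double-quotient isomorphism
  have hspan : (Ideal.span (Set.range fun i : Fin n => Ideal.Quotient.mk I (t i)))
      = J.map (Ideal.Quotient.mkₐ ℚ I) := by
    rw [hJ, Ideal.map_span]
    congr 1
    rw [← Set.range_comp]
    rfl
  show FiniteDimensional ℚ ((MvPolynomial α ℚ ⧸ I) ⧸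
    Ideal.span (Set.range fun i : Fin n => Ideal.Quotient.mk I (t i)))
  rw [hspan]
  exact Module.Finite.equiv (DoubleQuot.quotQuotEquivQuotSupₐ ℚ I J).symm.toLinearEquiv
end
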